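/- arXiv:2403.04119 — 6 statements merged into one kernel-verified Lean document; each statement's English description precedes it below -/
import Mathlib

section
/- Let G be a locally compact Hausdorff totally disconnected topological group and V a vector space over ℂ. Let S(G,V) denote the space of functions φ : G → V that are locally constant and vanish outside a compact subset of G. If T : S(G,V) → ℂ is a linear functional that is right-invariant, i.e. T(g ↦ φ(g·h)) = T(φ) for all h ∈ G and all φ ∈ S(G,V), then there exist a right-invariant Haar measure μ on G and a linear functional v* : V → ℂ such that T(φ) = ∫_G v*(φ(g)) dμ(g) for all φ ∈ S(G,V). -/
open MeasureTheory

/-- In a locally compact Hausdorff totally disconnected group, every neighborhood of `1`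
contains a compact open subgroup. -/
theorem aux_exists_subgroup {G : Type*} [Group G] [TopologicalSpace G] [IsTopologicalGroup G]
    [LocallyCompactSpace G] [T2Space G] [TotallyDisconnectedSpace G]
    {U : Set G} (hU : U ∈ nhds (1 : G)) :
    ∃ K : Subgroup G, IsCompact (K : Set G) ∧ IsOpen (K : Set G) ∧ (K : Set G) ⊆ U := by
  obtain ⟨s, hs, h1s, hsU⟩ := exists_compact_subset isOpen_interior (mem_interior_iff_mem_nhds.2 hU)
  obtain ⟨Vset, hVclopen, h1V, hVs⟩ :=
    (loc_compact_Haus_tot_disc_of_zero_dim.mem_nhds_iff).1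
      (isOpen_interior.mem_nhds h1s)
  have hVcomp : IsCompact Vset := hs.of_isClosed_subset hVclopen.1 (hVs.trans interior_subset)
  obtain ⟨W, hW, hVW⟩ := compact_open_separated_mul_right hVcomp hVclopen.2 subset_rfl
  set W' : Set G := W ∩ W⁻¹ with hW'def
  have hW'nhds : W' ∈ nhds (1 : G) := Filter.inter_mem hW (inv_mem_nhds_one G hW)
  set K : Subgroup G := Subgroup.closure W' with hKdef
  have hWK : W' ⊆ (K : Set G) := Subgroup.subset_closure
  have hKopen : IsOpen (K : Set G) :=
    Subgroup.isOpen_of_mem_nhds K (Filter.mem_of_superset hW'nhds hWK)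
  -- every element of K multiplies V into V, in both directions
  have hKV : ∀ k ∈ K, (∀ x ∈ Vset, x * k ∈ Vset) ∧ (∀ x ∈ Vset, x * k⁻¹ ∈ Vset) := by
    intro k hk
    induction hk using Subgroup.closure_induction with
    | mem w hw =>
      constructor
      · intro x hx; exact hVW (Set.mul_mem_mul hx hw.1)
      · intro x hx; exact hVW (Set.mul_mem_mul hx hw.2)
    | one => simp
    | mul a b _ _ ha hb =>
      refine ⟨fun x hx => ?_, fun x hx => ?_⟩
      · rw [← mul_assoc]; exact hb.1 _ (ha.1 x hx)
      · rw [mul_inv_rev, ← mul_assoc]; exact ha.2 _ (hb.2 x hx)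
    | inv a _ ha => exact ⟨fun x hx => by simpa using ha.2 x hx, fun x hx => by simpa using ha.1 x hx⟩
  have hKV' : (K : Set G) ⊆ Vset := fun k hk => by
    simpa using (hKV k hk).1 1 h1V
  refine ⟨K, ?_, hKopen, fun x hx => interior_subset (hsU (interior_subset (hVs (hKV' hx))))⟩
  exact hVcomp.of_isClosed_subset (K.isClosed_of_isOpen hKopen) hKV'

/-- The right coset `K·g` as a preimage. -/
def rcoset {G : Type*} [Group G] (K : Subgroup G) (g : G) : Set G :=
  (fun y => y * g⁻¹) ⁻¹' (K : Set G)

theorem mem_rcoset {G : Type*} [Group G] {K : Subgroup G} {g x : G} :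
    x ∈ rcoset K g ↔ x * g⁻¹ ∈ K := Iff.rfl

theorem rcoset_self {G : Type*} [Group G] (K : Subgroup G) (g : G) : g ∈ rcoset K g := by
  simp [mem_rcoset, K.one_mem]

theorem rcoset_trans {G : Type*} [Group G] {K : Subgroup G} {g a x : G}
    (hx : x ∈ rcoset K g) (hx' : x ∈ rcoset K a) : g ∈ rcoset K a := by
  rw [mem_rcoset] at *
  have : (x * g⁻¹)⁻¹ * (x * a⁻¹) ∈ K := K.mul_mem (K.inv_mem hx) hx'
  simpa [mul_assoc] using this

/-- Decomposition of a left-`K`-invariant finitely-supported-on-cosets function as a finite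
sum of indicator functions of right cosets. -/
theorem aux_decomp {G : Type*} [Group G] {V : Type*} [AddCommGroup V]
    (K : Subgroup G) (t : Finset G) :
    ∀ ψ : G → V, (∀ k ∈ K, ∀ x, ψ (k * x) = ψ x) →
    (∀ x, ψ x ≠ 0 → ∃ g ∈ t, x ∈ rcoset K g) →
    ∃ s : Finset G,
      (∀ g ∈ s, ψ g ≠ 0) ∧
      ((s : Set G).PairwiseDisjoint fun g => rcoset K g) ∧
      ∀ x, ψ x = ∑ g ∈ s, (rcoset K g).indicator (fun _ => ψ g) x := by
  have const : ∀ (ψ : G → V), (∀ k ∈ K, ∀ x, ψ (k * x) = ψ x) →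
      ∀ {g x : G}, x ∈ rcoset K g → ψ x = ψ g := by
    intro ψ hψ g x hx
    have := hψ _ hx g
    simpa [mul_assoc] using this
  classical
  induction t using Finset.induction_on with
  | empty =>
    intro ψ hψinv hψsupp
    refine ⟨∅, by simp, by simp, fun x => ?_⟩
    simpa using by_contra fun h => by simpa using hψsupp x h
  | @insert a t ha ih =>
    intro ψ hψinv hψsupp
    set ψ' : G → V := fun x => ψ x - (rcoset K a).indicator (fun _ => ψ a) x with hψ'def
    have hψ'inv : ∀ k ∈ K, ∀ x, ψ' (k * x) = ψ' x := by
      intro k hk x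
      have hmem : k * x ∈ rcoset K a ↔ x ∈ rcoset K a := by
        rw [mem_rcoset, mem_rcoset, mul_assoc]
        exact K.mul_mem_cancel_left hk
      by_cases hx : x ∈ rcoset K a <;>
        simp [hψ'def, hψinv k hk x, hmem, hx, Set.indicator_of_mem, Set.indicator_of_notMem]
    have hψ'a : ∀ x ∈ rcoset K a, ψ' x = 0 := by
      intro x hx
      simp [hψ'def, Set.indicator_of_mem hx, const ψ hψinv hx]
    have hψ'supp : ∀ x, ψ' x ≠ 0 → ∃ g ∈ t, x ∈ rcoset K g := by
      intro x hx
      by_cases hxa : x ∈ rcoset K a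
      · exact absurd (hψ'a x hxa) hx
      · have : ψ' x = ψ x := by simp [hψ'def, Set.indicator_of_notMem hxa]
        rcases hψsupp x (this ▸ hx) with ⟨g, hg, hxg⟩
        rcases Finset.mem_insert.1 hg with rfl | hgt
        · exact absurd hxg hxa
        · exact ⟨g, hgt, hxg⟩
    obtain ⟨s', hs'ne, hs'dis, hs'dec⟩ := ih ψ' hψ'inv hψ'supp
    have hs'a : ∀ g ∈ s', g ∉ rcoset K a := fun g hg hga => hs'ne g hg (hψ'a g hga)
    have hs'val : ∀ g ∈ s', ψ' g = ψ g := by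
      intro g hg
      simp [hψ'def, Set.indicator_of_notMem (hs'a g hg)]
    have hdisa : ∀ g ∈ s', Disjoint (rcoset K a) (rcoset K g) := by
      intro g hg
      rw [Set.disjoint_left]
      intro x hxa hxg
      exact hs'a g hg (rcoset_trans hxg hxa)
    have hdec : ∀ x, ψ x = (rcoset K a).indicator (fun _ => ψ a) x
        + ∑ g ∈ s', (rcoset K g).indicator (fun _ => ψ g) x := by
      intro x
      have := hs'dec x
      rw [Finset.sum_congr rfl fun g hg => by rw [← hs'val g hg]]
      rw [← this]; simp [hψ'def]
    by_cases hψa : ψ a = 0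
    · refine ⟨s', fun g hg => hs'val g hg ▸ hs'ne g hg, hs'dis, fun x => ?_⟩
      rw [hdec x, Set.indicator_apply]
      simp [hψa]
    · have has' : a ∉ s' := fun h => hs'a a h (rcoset_self K a)
      refine ⟨insert a s', ?_, ?_, fun x => ?_⟩
      · intro g hg
        rcases Finset.mem_insert.1 hg with rfl | hg
        · exact hψa
        · exact hs'val g hg ▸ hs'ne g hg
      · rw [Finset.coe_insert]
        refine Set.pairwiseDisjoint_insert.2 ⟨hs'dis, fun g hg _ => hdisa g hg⟩
      · rw [Finset.sum_insert has', hdec x]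

/-- The `V`-valued indicator function of a right coset. -/
noncomputable def cosetFn {G : Type*} [Group G] {V : Type*} [Zero V] (K : Subgroup G) (g : G) (v : V) :
    G → V :=
  (rcoset K g).indicator fun _ => v

/-- Every right-invariant `V`-valued distribution on an `l`-group `G` (a locally compact,
Hausdorff, totally disconnected topological group) is the product of a right Haar measure
on `G` and a linear functional on `V`.  Here `S φ` says that `φ : G → V` is a Schwartz
function: locally constant and vanishing outside a compact set. -/
theorem stmt1 {G : Type*} [Group G] [TopologicalSpace G] [IsTopologicalGroup G]
    [LocallyCompactSpace G] [T2Space G] [TotallyDisconnectedSpace G]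
    [MeasurableSpace G] [BorelSpace G]
    {V : Type*} [AddCommGroup V] [Module ℂ V]
    (S : (G → V) → Prop)
    (hS : ∀ φ : G → V,
      S φ ↔ IsLocallyConstant φ ∧ ∃ C : Set G, IsCompact C ∧ ∀ g ∉ C, φ g = 0)
    (T : (G → V) → ℂ)
    (hadd : ∀ φ ψ : G → V, S φ → S ψ → T (φ + ψ) = T φ + T ψ)
    (hsmul : ∀ (c : ℂ) (φ : G → V), S φ → T (c • φ) = c * T φ)
    (hinv : ∀ φ : G → V, S φ → ∀ h : G, T (fun g => φ (g * h)) = T φ) :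
    ∃ μ : Measure G, μ ≠ 0 ∧ μ.Regular ∧ μ.IsMulRightInvariant ∧
      ∃ vstar : V →ₗ[ℂ] ℂ, ∀ φ : G → V, S φ → T φ = ∫ g, vstar (φ g) ∂μ := by
  classical
  obtain ⟨K₀, hK₀c, hK₀o, -⟩ :=
    aux_exists_subgroup (Filter.univ_mem : (Set.univ : Set G) ∈ nhds 1)
  -- general facts about `S` and `T`
  have hS0 : S 0 := (hS 0).2 ⟨IsLocallyConstant.const 0, ∅, isCompact_empty, fun _ _ => rfl⟩
  have hT0 : T 0 = 0 := by
    have := hsmul 0 0 hS0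
    simpa using this
  have hSind : ∀ (K : Subgroup G), IsCompact (K : Set G) → IsOpen (K : Set G) →
      ∀ (g : G) (v : V), S (cosetFn K g v) := by
    intro K hc ho g v
    have hopen : IsOpen (rcoset K g) := ho.preimage (continuous_mul_right g⁻¹)
    have hclosed : IsClosed (rcoset K g) := hc.isClosed.preimage (continuous_mul_right g⁻¹)
    refine (hS _).2 ⟨(IsLocallyConstant.iff_exists_open _).2 fun x => ?_, (fun y => y * g) '' K,
      hc.image (continuous_mul_right g), fun y hy => ?_⟩
    · by_cases hx : x ∈ rcoset K g
      · exact ⟨rcoset K g, hopen, hx, fun x' hx' => by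
          simp [cosetFn, Set.indicator_of_mem, hx, hx']⟩
      · exact ⟨(rcoset K g)ᶜ, hclosed.isOpen_compl, hx, fun x' hx' => by
          simp only [cosetFn]
          rw [Set.indicator_of_notMem (by simpa using hx'), Set.indicator_of_notMem hx]⟩
    · have : y ∉ rcoset K g := by
        intro hy'
        exact hy ⟨y * g⁻¹, hy', by simp⟩
      simp [cosetFn, Set.indicator_of_notMem this]
  have hsum : ∀ (s : Finset G) (f : G → G → V), (∀ g ∈ s, S (f g)) →
      S (fun x => ∑ g ∈ s, f g x) ∧ T (fun x => ∑ g ∈ s, f g x) = ∑ g ∈ s, T (f g) := by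
    intro s
    induction s using Finset.induction_on with
    | empty => intro f _; simpa using ⟨hS0, hT0⟩
    | @insert a s ha ih =>
      intro f hf
      have h1 : S (f a) := hf a (Finset.mem_insert_self a s)
      obtain ⟨h2, h3⟩ := ih f fun g hg => hf g (Finset.mem_insert_of_mem hg)
      have he : (fun x => ∑ g ∈ insert a s, f g x) = f a + fun x => ∑ g ∈ s, f g x := by
        funext x
        simp [Finset.sum_insert ha]
      constructor
      · rw [he]
        rcases (hS _).1 h1 with ⟨hlc1, C1, hC1, hs1⟩
        rcases (hS _).1 h2 with ⟨hlc2, C2, hC2, hs2⟩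
        refine (hS _).2 ⟨?_, C1 ∪ C2, hC1.union hC2, fun y hy => ?_⟩
        · exact (hlc1.prodMk hlc2).comp (fun p : V × V => p.1 + p.2)
        · have := hs1 y (fun h => hy (Set.mem_union_left _ h))
          have := hs2 y (fun h => hy (Set.mem_union_right _ h))
          simp_all [Pi.add_apply]
      · rw [he, hadd _ _ h1 h2, h3, Finset.sum_insert ha]
  have hTtrans : ∀ (K : Subgroup G), IsCompact (K : Set G) → IsOpen (K : Set G) →
      ∀ (g : G) (v : V), T (cosetFn K g v) = T (cosetFn K 1 v) := by
    intro K hc ho g v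
    have := hinv (cosetFn K g v) (hSind K hc ho g v) g
    rw [← this]
    congr 1
    funext x
    have hmem : x * g ∈ rcoset K g ↔ x ∈ rcoset K 1 := by
      simp [mem_rcoset, mul_assoc]
    by_cases hx : x ∈ rcoset K 1 <;>
      simp [cosetFn, Set.indicator_apply, hmem, hx]
  -- the uniformization lemma
  have huni : ∀ φ : G → V, S φ → ∃ K : Subgroup G, IsCompact (K : Set G) ∧ IsOpen (K : Set G) ∧
      ∀ k ∈ K, ∀ x, φ (k * x) = φ x := by
    intro φ hφ
    obtain ⟨hlc, C, hC, hsupp⟩ := (hS φ).1 hφ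
    choose U hUo hxU hUc using hlc.exists_open
    have hW : ∀ x : G, (fun y => y * x) ⁻¹' U x ∈ nhds (1 : G) := fun x =>
      ((hUo x).preimage (continuous_mul_right x)).mem_nhds (by simp [hxU x])
    choose Ks hKsc hKso hKsW using fun x : G => aux_exists_subgroup (hW x)
    obtain ⟨t, ht⟩ := hC.elim_finite_subcover (fun x : G => rcoset (Ks x) x)
      (fun x => (hKso x).preimage (continuous_mul_right x⁻¹))
      (fun x _ => Set.mem_iUnion.2 ⟨x, rcoset_self _ x⟩)
    set K : Subgroup G := K₀ ⊓ t.inf Ks with hK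
    have hKo : IsOpen (K : Set G) := by
      have hopen : ∀ u : Finset G, IsOpen ((u.inf Ks : Subgroup G) : Set G) := by
        intro u
        induction u using Finset.induction_on with
        | empty => simp [Finset.inf_empty]
        | @insert a u _ ih =>
          rw [Finset.inf_insert, Subgroup.coe_inf]
          exact (hKso a).inter ih
      rw [hK, Subgroup.coe_inf]
      exact hK₀o.inter (hopen t)
    have hKc : IsCompact (K : Set G) := by
      refine hK₀c.of_isClosed_subset (K.isClosed_of_isOpen hKo) ?_
      rw [hK, Subgroup.coe_inf]
      exact Set.inter_subset_left
    refine ⟨K, hKc, hKo, ?_⟩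
    intro k hk y
    have hkKs : ∀ x ∈ t, k ∈ Ks x := by
      intro x hx
      have hle : K ≤ Ks x := le_trans inf_le_right (Finset.inf_le hx)
      exact hle hk
    have hval : ∀ x : G, ∀ z, z ∈ rcoset (Ks x) x → φ z = φ x := by
      intro x z hz
      have h1 : z * x⁻¹ * x ∈ U x := hKsW x hz
      have h2 := hUc x _ h1
      simpa using h2
    by_cases hy : ∃ x ∈ t, y ∈ rcoset (Ks x) x
    · obtain ⟨x, hxt, hyx⟩ := hy
      have h2 : k * y ∈ rcoset (Ks x) x := by
        rw [mem_rcoset] at hyx ⊢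
        rw [mul_assoc]
        exact (Ks x).mul_mem (hkKs x hxt) hyx
      rw [hval x _ h2, hval x y hyx]
    · have hyC : y ∉ C := fun hyC => hy (by simpa using Set.mem_iUnion₂.1 (ht hyC))
      have hkyC : k * y ∉ C := by
        intro hmem
        obtain ⟨x, hxt, hx⟩ := Set.mem_iUnion₂.1 (ht hmem)
        refine hy ⟨x, hxt, ?_⟩
        rw [mem_rcoset] at hx ⊢
        have h3 : k⁻¹ * (k * y * x⁻¹) ∈ Ks x := (Ks x).mul_mem ((Ks x).inv_mem (hkKs x hxt)) hx
        simpa [mul_assoc] using h3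
      rw [hsupp y hyC, hsupp _ hkyC]
  suffices h : ∀ (μ : Measure G), μ.Regular → μ.IsMulRightInvariant → μ.IsOpenPosMeasure →
      ∃ vstar : V →ₗ[ℂ] ℂ, ∀ φ : G → V, S φ → T φ = ∫ g, vstar (φ g) ∂μ by
    set P : TopologicalSpace.PositiveCompacts G :=
      ⟨⟨(K₀ : Set G), hK₀c⟩, ⟨1, by rw [hK₀o.interior_eq]; exact K₀.one_mem⟩⟩ with hP
    refine ⟨(Measure.haarMeasure P).inv, ?_, inferInstance, inferInstance,
      h _ inferInstance inferInstance inferInstance⟩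
    exact Measure.measure_univ_ne_zero.1 (isOpen_univ.measure_pos _ ⟨1, trivial⟩).ne'
  intro μ hμreg hμrinv hμopos
  haveI := hμreg; haveI := hμrinv; haveI := hμopos
  have hmeas : ∀ (K : Subgroup G), IsCompact (K : Set G) → ∀ g : G,
      MeasurableSet (rcoset K g) := by
    intro K hc g
    exact ((hc.isClosed.preimage (continuous_mul_right g⁻¹))).measurableSet
  have hμcoset : ∀ (K : Subgroup G) (g : G), μ (rcoset K g) = μ (K : Set G) :=
    fun K g => measure_preimage_mul_right μ g⁻¹ (K : Set G)
  -- counting lemma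
  have hcount : ∀ (K K' : Subgroup G), IsCompact (K : Set G) → IsOpen (K : Set G) →
      IsCompact (K' : Set G) → IsOpen (K' : Set G) → K' ≤ K → ∀ v : V, v ≠ 0 →
      ∃ n : ℕ, T (cosetFn K 1 v) = (n : ℂ) * T (cosetFn K' 1 v) ∧
        μ (K : Set G) = (n : ENNReal) * μ (K' : Set G) := by
    intro K K' hKc hKo hK'c hK'o hle v hv
    set ψ : G → V := cosetFn K 1 v with hψdef
    have hmemK : ∀ x : G, x ∈ rcoset K 1 ↔ x ∈ (K : Set G) := by
      intro x; simp [mem_rcoset]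
    have hψinv : ∀ k ∈ K', ∀ x, ψ (k * x) = ψ x := by
      intro k hk x
      have hiff : k * x ∈ rcoset K 1 ↔ x ∈ rcoset K 1 := by
        simp only [mem_rcoset, inv_one, mul_one]
        exact K.mul_mem_cancel_left (hle hk)
      by_cases hx : x ∈ rcoset K 1 <;>
        simp [hψdef, cosetFn, Set.indicator_apply, hiff, hx]
    obtain ⟨t, ht⟩ := hKc.elim_finite_subcover (fun g : G => rcoset K' g)
      (fun g => hK'o.preimage (continuous_mul_right g⁻¹))
      (fun x hx => Set.mem_iUnion.2 ⟨x, rcoset_self K' x⟩)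
    have hψsupp : ∀ x, ψ x ≠ 0 → ∃ g ∈ t, x ∈ rcoset K' g := by
      intro x hx
      have hxK : x ∈ rcoset K 1 := by
        by_contra h
        exact hx (Set.indicator_of_notMem h _)
      simpa using ht ((hmemK x).1 hxK)
    obtain ⟨s, hsne, hsdis, hsdec⟩ := aux_decomp K' t ψ hψinv hψsupp
    have hψval : ∀ g ∈ s, ψ g = v := by
      intro g hg
      have := hsne g hg
      by_cases h : g ∈ rcoset K 1
      · simp [hψdef, cosetFn, Set.indicator_of_mem h]
      · exact absurd (Set.indicator_of_notMem h _) this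
    refine ⟨s.card, ?_, ?_⟩
    · have hdec : ψ = fun x => ∑ g ∈ s, cosetFn K' g (ψ g) x := funext hsdec
      have hTψ := (hsum s (fun g => cosetFn K' g (ψ g)) fun g _ => hSind K' hK'c hK'o g _).2
      calc T ψ = ∑ g ∈ s, T (cosetFn K' g (ψ g)) := (congrArg T hdec).trans hTψ
        _ = ∑ _g ∈ s, T (cosetFn K' 1 v) := by
            refine Finset.sum_congr rfl fun g hg => ?_
            rw [hψval g hg, hTtrans K' hK'c hK'o g v]
        _ = (s.card : ℂ) * T (cosetFn K' 1 v) := by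
            rw [Finset.sum_const, nsmul_eq_mul]
    · have hKU : (K : Set G) = ⋃ g ∈ s, rcoset K' g := by
        apply Set.Subset.antisymm
        · intro x hx
          have hψx : ψ x ≠ 0 := by
            rw [hψdef]
            simp only [cosetFn]
            rw [Set.indicator_of_mem ((hmemK x).2 hx)]
            exact hv
          rw [hsdec x] at hψx
          obtain ⟨g, hg, hne⟩ := Finset.exists_ne_zero_of_sum_ne_zero hψx
          have : x ∈ rcoset K' g := by
            by_contra h
            exact hne (Set.indicator_of_notMem h _)
          exact Set.mem_biUnion hg this
        · intro x hx
          obtain ⟨g, hg, hxg⟩ := Set.mem_iUnion₂.1 hx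
          have hψx : ψ x = ψ g := by
            rw [hsdec x]
            rw [Finset.sum_eq_single_of_mem g hg]
            · exact Set.indicator_of_mem hxg _
            · intro g' hg' hne
              refine Set.indicator_of_notMem ?_ _
              intro hxg'
              exact (Set.disjoint_left.1 (hsdis hg' hg hne)) hxg' hxg
          have : ψ x ≠ 0 := hψx ▸ hsne g hg
          rw [← hmemK x]
          by_contra h
          exact this (Set.indicator_of_notMem h _)
      rw [hKU, measure_biUnion_finset hsdis fun b _ => hmeas K' hK'c b]
      have : ∀ g ∈ s, μ (rcoset K' g) = μ (K' : Set G) := fun g _ => hμcoset K' g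
      rw [Finset.sum_congr rfl this, Finset.sum_const, nsmul_eq_mul]
  -- the linear functional
  set vstar₀ : V → ℂ := fun v => (((μ (K₀ : Set G)).toReal : ℂ))⁻¹ * T (cosetFn K₀ 1 v)
    with hvstar₀
  have hkey : ∀ (K : Subgroup G), IsCompact (K : Set G) → IsOpen (K : Set G) → ∀ v : V,
      T (cosetFn K 1 v) = ((μ (K : Set G)).toReal : ℂ) * vstar₀ v := by
    have h0 : ∀ (K' : Subgroup G) (g : G), cosetFn K' g (0 : V) = 0 := by
      intro K' g; funext x; simp [cosetFn, Set.indicator_apply]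
    intro K hKc hKo v
    by_cases hv : v = 0
    · subst hv
      rw [h0, hT0]
      simp [hvstar₀, h0, hT0]
    · have hK''o : IsOpen ((K ⊓ K₀ : Subgroup G) : Set G) := by
        rw [Subgroup.coe_inf]; exact hKo.inter hK₀o
      have hK''c : IsCompact ((K ⊓ K₀ : Subgroup G) : Set G) := by
        refine hKc.of_isClosed_subset ?_ ?_
        · rw [Subgroup.coe_inf]; exact hKc.isClosed.inter hK₀c.isClosed
        · rw [Subgroup.coe_inf]; exact Set.inter_subset_left
      obtain ⟨n₁, hT1, hμ1⟩ := hcount K (K ⊓ K₀) hKc hKo hK''c hK''o inf_le_left v hv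
      obtain ⟨n₂, hT2, hμ2⟩ := hcount K₀ (K ⊓ K₀) hK₀c hK₀o hK''c hK''o inf_le_right v hv
      have hpos : μ ((K ⊓ K₀ : Subgroup G) : Set G) ≠ 0 :=
        (hK''o.measure_pos μ ⟨1, (K ⊓ K₀).one_mem⟩).ne'
      have hfin : μ ((K ⊓ K₀ : Subgroup G) : Set G) ≠ ⊤ := hK''c.measure_lt_top.ne
      have hr : (((μ ((K ⊓ K₀ : Subgroup G) : Set G)).toReal : ℂ)) ≠ 0 := by
        simpa using ENNReal.toReal_ne_zero.2 ⟨hpos, hfin⟩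
      have hn₂ : (n₂ : ℂ) ≠ 0 := by
        have h2 : n₂ ≠ 0 := by
          rintro rfl
          simp only [Nat.cast_zero, zero_mul] at hμ2
          exact (hK₀o.measure_pos μ ⟨1, K₀.one_mem⟩).ne' hμ2
        exact_mod_cast h2
      have hμK : ((μ (K : Set G)).toReal : ℂ)
          = (n₁ : ℂ) * ((μ ((K ⊓ K₀ : Subgroup G) : Set G)).toReal : ℂ) := by
        rw [hμ1, ENNReal.toReal_mul]
        push_cast [ENNReal.toReal_natCast]
        ring
      have hμK₀ : ((μ (K₀ : Set G)).toReal : ℂ)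
          = (n₂ : ℂ) * ((μ ((K ⊓ K₀ : Subgroup G) : Set G)).toReal : ℂ) := by
        rw [hμ2, ENNReal.toReal_mul]
        push_cast [ENNReal.toReal_natCast]
        ring
      have halg : ∀ a b r t : ℂ, r ≠ 0 → b ≠ 0 →
          a * r * ((b * r)⁻¹ * (b * t)) = a * t := by
        intro a b r t hr hb
        field_simp
      simp only [hvstar₀]
      rw [hT1, hT2, hμK, hμK₀]
      exact (halg _ _ _ _ hr hn₂).symm
  have hcoset_add : ∀ v w : V, cosetFn K₀ 1 (v + w) = cosetFn K₀ 1 v + cosetFn K₀ 1 w := by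
    intro v w
    funext x
    by_cases hx : x ∈ rcoset K₀ 1 <;>
      simp [cosetFn, Set.indicator_apply, hx]
  have hv_add : ∀ v w : V, vstar₀ (v + w) = vstar₀ v + vstar₀ w := by
    intro v w
    simp only [hvstar₀]
    rw [hcoset_add, hadd _ _ (hSind K₀ hK₀c hK₀o 1 v) (hSind K₀ hK₀c hK₀o 1 w)]
    ring
  have hv_smul : ∀ (c : ℂ) (v : V), vstar₀ (c • v) = c * vstar₀ v := by
    intro c v
    have hc : cosetFn K₀ 1 (c • v) = c • cosetFn K₀ 1 v := by
      funext x
      by_cases hx : x ∈ rcoset K₀ 1 <;>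
        simp [cosetFn, Set.indicator_apply, hx]
    simp only [hvstar₀]
    rw [hc, hsmul _ _ (hSind K₀ hK₀c hK₀o 1 v)]
    ring
  have hv0 : vstar₀ 0 = 0 := by
    have h0 : cosetFn K₀ 1 (0 : V) = 0 := by
      funext x; simp [cosetFn, Set.indicator_apply]
    simp [hvstar₀, h0, hT0]
  have hv_sum : ∀ (s : Finset G) (f : G → V),
      vstar₀ (∑ g ∈ s, f g) = ∑ g ∈ s, vstar₀ (f g) := by
    intro s f
    induction s using Finset.induction_on with
    | empty => simpa using hv0
    | @insert a s ha ih => rw [Finset.sum_insert ha, Finset.sum_insert ha, hv_add, ih]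
  refine ⟨⟨⟨vstar₀, hv_add⟩, hv_smul⟩, ?_⟩
  intro φ hφ
  show T φ = ∫ g, vstar₀ (φ g) ∂μ
  obtain ⟨K, hKc, hKo, hKinv⟩ := huni φ hφ
  obtain ⟨hlc, C, hC, hsupp⟩ := (hS φ).1 hφ
  obtain ⟨t, ht⟩ := hC.elim_finite_subcover (fun g : G => rcoset K g)
    (fun g => hKo.preimage (continuous_mul_right g⁻¹))
    (fun x _ => Set.mem_iUnion.2 ⟨x, rcoset_self K x⟩)
  have hφsupp : ∀ x, φ x ≠ 0 → ∃ g ∈ t, x ∈ rcoset K g := by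
    intro x hx
    have hxC : x ∈ C := by_contra fun h => hx (hsupp x h)
    simpa using Set.mem_iUnion₂.1 (ht hxC)
  obtain ⟨s, hsne, hsdis, hsdec⟩ := aux_decomp K t φ hKinv hφsupp
  have hdec : φ = fun x => ∑ g ∈ s, cosetFn K g (φ g) x := funext hsdec
  have hTφ : T φ = ∑ g ∈ s, ((μ (K : Set G)).toReal : ℂ) * vstar₀ (φ g) := by
    have h1 := (hsum s (fun g => cosetFn K g (φ g)) fun g _ => hSind K hKc hKo g _).2
    refine ((congrArg T hdec).trans h1).trans ?_
    refine Finset.sum_congr rfl fun g hg => ?_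
    rw [hTtrans K hKc hKo g (φ g), hkey K hKc hKo (φ g)]
  have hptwise : ∀ x, vstar₀ (φ x)
      = ∑ g ∈ s, (rcoset K g).indicator (fun _ => vstar₀ (φ g)) x := by
    intro x
    rw [hsdec x, hv_sum]
    refine Finset.sum_congr rfl fun g hg => ?_
    by_cases hx : x ∈ rcoset K g <;> simp [Set.indicator_apply, hx, hv0]
  have hfinμ : ∀ g : G, μ (rcoset K g) < ⊤ := by
    intro g
    rw [hμcoset K g]
    exact hKc.measure_lt_top
  calc T φ = ∑ g ∈ s, ((μ (K : Set G)).toReal : ℂ) * vstar₀ (φ g) := hTφ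
    _ = ∑ g ∈ s, ∫ x, (rcoset K g).indicator (fun _ => vstar₀ (φ g)) x ∂μ := by
        refine Finset.sum_congr rfl fun g hg => ?_
        rw [integral_indicator_const _ (hmeas K hKc g), measureReal_def, hμcoset K g, Complex.real_smul]
    _ = ∫ x, ∑ g ∈ s, (rcoset K g).indicator (fun _ => vstar₀ (φ g)) x ∂μ := by
        refine (integral_finset_sum s fun g hg => ?_).symm
        exact (integrable_indicator_iff (hmeas K hKc g)).2
          (integrableOn_const (hfinμ g).ne)
    _ = ∫ x, vstar₀ (φ x) ∂μ := by
        refine integral_congr_ae (Filter.Eventually.of_forall fun x => ?_)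
        exact (hptwise x).symm
end

section
/- For every x ∈ F^r and every f ∈ ℤ^r, the matrix ū(x) ∈ GL_{r+1}(F) lies in the double coset Ȟ_f · u(x(τ_x^f)*) · d(x(τ_x^f)) · SL_{r+1}(O), where Ȟ_f = {diag(h,1) : h ∈ H_f}. -/
open Matrix
open scoped Classical

namespace ShalikaStmt2

variable {O F : Type*} [CommRing O] [IsDomain O] [IsDiscreteValuationRing O]
  [Field F] [Algebra O F] [IsFractionRing O F]

/-- `x ∈ F` lies in (the image of) `O`. -/
def IsInt (O : Type*) {F : Type*} [CommRing O] [Field F] [Algebra O F] (x : F) : Prop :=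
  ∃ a : O, algebraMap O F a = x

/-- `SL_r(O)`, viewed as a set of matrices with entries in `F`. -/
def SLO (O : Type*) {F : Type*} [CommRing O] [Field F] [Algebra O F] (r : ℕ) :
    Set (Matrix (Fin r) (Fin r) F) :=
  {g | (∀ i j, IsInt O (g i j)) ∧ g.det = 1}

/-- The upper unipotent matrix `u(y) = [[1_r, yᵀ],[0,1]] ∈ GL_{r+1}(F)`. -/
def uMat {F : Type*} [Field F] {r : ℕ} (y : Fin r → F) :
    Matrix (Fin (r + 1)) (Fin (r + 1)) F :=
  Matrix.of fun i j =>
    if i = j then 1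
    else if (j : ℕ) = r then (if h : (i : ℕ) < r then y ⟨i, h⟩ else 0) else 0

/-- The lower unipotent matrix `ū(y) = [[1_r, 0],[y,1]] ∈ GL_{r+1}(F)`. -/
def lMat {F : Type*} [Field F] {r : ℕ} (y : Fin r → F) :
    Matrix (Fin (r + 1)) (Fin (r + 1)) F :=
  Matrix.of fun i j =>
    if i = j then 1
    else if (i : ℕ) = r then (if h : (j : ℕ) < r then y ⟨j, h⟩ else 0) else 0

/-- The embedding `g ↦ diag(g, 1)` of `r × r` matrices into `(r+1) × (r+1)` matrices. -/
def embed {F : Type*} [Field F] {r : ℕ} (g : Matrix (Fin r) (Fin r) F) :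
    Matrix (Fin (r + 1)) (Fin (r + 1)) F :=
  Matrix.of fun i j =>
    if h : (i : ℕ) < r then (if h' : (j : ℕ) < r then g ⟨i, h⟩ ⟨j, h'⟩ else 0)
    else (if (j : ℕ) < r then 0 else 1)

/-- The diagonal matrix `ϖ^f = diag(ϖF^{f 0}, …, ϖF^{f (r-1)})`. -/
noncomputable def Dpow {F : Type*} [Field F] {r : ℕ} (ϖF : F) (f : Fin r → ℤ) :
    Matrix (Fin r) (Fin r) F :=
  diagonal fun i => ϖF ^ f i

/-- `x̂ : x̂ᵢ = xᵢ` if `xᵢ ≠ 0`, and `x̂ᵢ = 1` otherwise. -/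
noncomputable def hatF {F : Type*} [Field F] {r : ℕ} (x : Fin r → F) : Fin r → F :=
  fun i => if x i = 0 then 1 else x i

/-- `σ` sorts `x` by decreasing valuation (with `o(0) = ⊤` largest), stably:
ties are broken by increasing index. This characterizes `σ_x` uniquely. -/
def IsSortPerm {F : Type*} [Field F] {r : ℕ} (o : F → WithTop ℤ) (x : Fin r → F)
    (σ : Equiv.Perm (Fin r)) : Prop :=
  (∀ i j : Fin r, i ≤ j → o (x (σ j)) ≤ o (x (σ i))) ∧
  (∀ i j : Fin r, i < j → o (x (σ i)) = o (x (σ j)) → σ i < σ j)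

/-- The subset `τ_x^f ⊆ {1,…,r}` (0-indexed): indices `i` such that `x_{σ(i)} ∉ O` and
`o(x_{σ(i)}) + f_{σ(i)} < o(x_{σ(j)}) + f_{σ(j)}` for all `j > i`. -/
def tauSet (O : Type*) {F : Type*} [CommRing O] [Field F] [Algebra O F] {r : ℕ}
    (o : F → WithTop ℤ) (x : Fin r → F) (f : Fin r → ℤ) (σ : Equiv.Perm (Fin r)) :
    Set (Fin r) :=
  {i | ¬ IsInt O (x (σ i)) ∧
    ∀ j : Fin r, i < j →
      o (x (σ i)) + (f (σ i) : WithTop ℤ) < o (x (σ j)) + (f (σ j) : WithTop ℤ)}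

/-- `x(τ)`: keep the entries of `x` with index in `σ(τ)`, zero out the others. -/
noncomputable def select {F : Type*} [Field F] {r : ℕ} (x : Fin r → F)
    (σ : Equiv.Perm (Fin r)) (τ : Set (Fin r)) : Fin r → F :=
  fun i => if σ.symm i ∈ τ then x i else 0

/-- The diagonal vector of the matrix `d(y)` (for a vector `y` with sorting permutation `σ`):
`d_{y,i} = 1/ŷ_i` if `i = σ(1)`, `d_{y,r+1} = ŷ_{σ(r)}`, and
`d_{y,i} = ŷ_{σ(σ⁻¹(i)−1)}/ŷ_i` otherwise. -/
noncomputable def dVec {F : Type*} [Field F] {r : ℕ} (hr : 0 < r) (y : Fin r → F)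
    (σ : Equiv.Perm (Fin r)) : Fin (r + 1) → F :=
  fun i =>
    if h : (i : ℕ) < r then
      if hz : (σ.symm ⟨i, h⟩ : ℕ) = 0 then (hatF y ⟨i, h⟩)⁻¹
      else hatF y (σ ⟨(σ.symm ⟨i, h⟩ : ℕ) - 1, by
          have := (σ.symm ⟨i, h⟩).isLt; omega⟩) / hatF y ⟨i, h⟩
    else hatF y (σ ⟨r - 1, by omega⟩)

section Generic
variable {F : Type*} [Field F] {r : ℕ}

lemma uMat_cc (v : Fin r → F) (i j : Fin r) :
    uMat v i.castSucc j.castSucc = if i = j then (1:F) else 0 := by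
  rcases eq_or_ne i j with h | h
  · simp [uMat, h]
  · have h2 : i.castSucc ≠ j.castSucc := by simpa [Fin.castSucc_inj] using h
    have h3 : ((j.castSucc : Fin (r+1)) : ℕ) ≠ r := by simp [Fin.coe_castSucc]; omega
    simp only [uMat, of_apply, if_neg h2]
    rw [if_neg h3, if_neg h]

lemma uMat_cl (v : Fin r → F) (i : Fin r) :
    uMat v i.castSucc (Fin.last r) = v i := by
  have h2 : i.castSucc ≠ Fin.last r := by
    simp [Fin.ext_iff]; omega
  have hlt : ((i.castSucc : Fin (r+1)) : ℕ) < r := by simp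
  simp [uMat, h2, hlt]

lemma uMat_lc (v : Fin r → F) (j : Fin r) :
    uMat v (Fin.last r) j.castSucc = 0 := by
  have h2 : Fin.last r ≠ j.castSucc := by simp [Fin.ext_iff]; omega
  have h3 : ((j.castSucc : Fin (r+1)) : ℕ) ≠ r := by simp; omega
  simp [uMat, h2, h3]

lemma uMat_ll (v : Fin r → F) : uMat v (Fin.last r) (Fin.last r) = 1 := by
  simp [uMat]

lemma lMat_cc (v : Fin r → F) (i j : Fin r) :
    lMat v i.castSucc j.castSucc = if i = j then (1:F) else 0 := by
  rcases eq_or_ne i j with h | h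
  · simp [lMat, h]
  · have h2 : i.castSucc ≠ j.castSucc := by simpa [Fin.castSucc_inj] using h
    have h3 : ((i.castSucc : Fin (r+1)) : ℕ) ≠ r := by simp; omega
    simp only [lMat, of_apply, if_neg h2]
    rw [if_neg h3, if_neg h]

lemma lMat_lc (v : Fin r → F) (j : Fin r) :
    lMat v (Fin.last r) j.castSucc = v j := by
  have h2 : Fin.last r ≠ j.castSucc := by simp [Fin.ext_iff]; omega
  have hlt : ((j.castSucc : Fin (r+1)) : ℕ) < r := by simp
  simp [lMat, h2, hlt]

lemma lMat_cl (v : Fin r → F) (i : Fin r) :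
    lMat v i.castSucc (Fin.last r) = 0 := by
  have h2 : i.castSucc ≠ Fin.last r := by simp [Fin.ext_iff]; omega
  have h3 : ((i.castSucc : Fin (r+1)) : ℕ) ≠ r := by simp; omega
  simp [lMat, h2, h3]

lemma lMat_ll (v : Fin r → F) : lMat v (Fin.last r) (Fin.last r) = 1 := by
  simp [lMat]

lemma embed_cc (g : Matrix (Fin r) (Fin r) F) (i j : Fin r) :
    embed g i.castSucc j.castSucc = g i j := by
  have hi : ((i.castSucc : Fin (r+1)) : ℕ) < r := by simp
  have hj : ((j.castSucc : Fin (r+1)) : ℕ) < r := by simp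
  simp [embed, hi, hj]

lemma embed_cl (g : Matrix (Fin r) (Fin r) F) (i : Fin r) :
    embed g i.castSucc (Fin.last r) = 0 := by
  have hi : ((i.castSucc : Fin (r+1)) : ℕ) < r := by simp
  simp [embed, hi]

lemma embed_lc (g : Matrix (Fin r) (Fin r) F) (j : Fin r) :
    embed g (Fin.last r) j.castSucc = 0 := by
  have hj : ((j.castSucc : Fin (r+1)) : ℕ) < r := by simp
  simp [embed, hj]

lemma embed_ll (g : Matrix (Fin r) (Fin r) F) :
    embed g (Fin.last r) (Fin.last r) = 1 := by
  simp [embed]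

end Generic

section Generic2
variable {F : Type*} [Field F] {r : ℕ}

lemma uMat_mul_c (v : Fin r → F) (Z : Matrix (Fin (r+1)) (Fin (r+1)) F)
    (i : Fin r) (j : Fin (r+1)) :
    (uMat v * Z) i.castSucc j = Z i.castSucc j + v i * Z (Fin.last r) j := by
  rw [Matrix.mul_apply, Fin.sum_univ_castSucc]
  simp only [uMat_cc, uMat_cl, ite_mul, one_mul, zero_mul]
  rw [Finset.sum_ite_eq Finset.univ i (fun a => Z a.castSucc j)]
  simp

lemma uMat_mul_l (v : Fin r → F) (Z : Matrix (Fin (r+1)) (Fin (r+1)) F)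
    (j : Fin (r+1)) :
    (uMat v * Z) (Fin.last r) j = Z (Fin.last r) j := by
  rw [Matrix.mul_apply, Fin.sum_univ_castSucc]
  simp [uMat_lc, uMat_ll]

lemma mul_lMat_c (v : Fin r → F) (Z : Matrix (Fin (r+1)) (Fin (r+1)) F)
    (i : Fin (r+1)) (j : Fin r) :
    (Z * lMat v) i j.castSucc = Z i j.castSucc + Z i (Fin.last r) * v j := by
  rw [Matrix.mul_apply, Fin.sum_univ_castSucc]
  simp only [lMat_cc, lMat_lc, mul_ite, mul_one, mul_zero]
  rw [Finset.sum_ite_eq' Finset.univ j (fun a => Z i a.castSucc)]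
  simp

lemma mul_lMat_l (v : Fin r → F) (Z : Matrix (Fin (r+1)) (Fin (r+1)) F)
    (i : Fin (r+1)) :
    (Z * lMat v) i (Fin.last r) = Z i (Fin.last r) := by
  rw [Matrix.mul_apply, Fin.sum_univ_castSucc]
  simp [lMat_cl, lMat_ll]

lemma uMat_add (v w : Fin r → F) : uMat v * uMat w = uMat (v + w) := by
  ext i j
  refine Fin.lastCases ?_ (fun i => ?_) i
  · rw [uMat_mul_l]
    refine Fin.lastCases ?_ (fun j => ?_) j
    · rw [uMat_ll, uMat_ll]
    · rw [uMat_lc, uMat_lc]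
  · refine Fin.lastCases ?_ (fun j => ?_) j
    · rw [uMat_mul_c, uMat_ll, uMat_cl, uMat_cl]
      simp [add_comm]
    · rw [uMat_mul_c, uMat_cc, uMat_cc, uMat_lc, mul_zero, add_zero]

lemma uMat_zero : uMat (0 : Fin r → F) = 1 := by
  ext i j
  refine Fin.lastCases ?_ (fun i => ?_) i <;> refine Fin.lastCases ?_ (fun j => ?_) j
  · rw [uMat_ll]; simp
  · rw [uMat_lc]
    have : Fin.last r ≠ j.castSucc := by simp [Fin.ext_iff]; omega
    simp [Matrix.one_apply, this]
  · rw [uMat_cl]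
    have : i.castSucc ≠ Fin.last r := by simp [Fin.ext_iff]; omega
    simp [Matrix.one_apply, this]
  · rw [uMat_cc]
    simp [Matrix.one_apply, Fin.castSucc_inj]

lemma embed_mul (A B : Matrix (Fin r) (Fin r) F) :
    embed A * embed B = embed (A * B) := by
  ext i j
  refine Fin.lastCases ?_ (fun i => ?_) i <;> refine Fin.lastCases ?_ (fun j => ?_) j
  · rw [Matrix.mul_apply, Fin.sum_univ_castSucc, embed_ll]
    simp [embed_lc, embed_ll]
  · rw [Matrix.mul_apply, Fin.sum_univ_castSucc, embed_lc]
    simp [embed_lc, embed_ll]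
  · rw [Matrix.mul_apply, Fin.sum_univ_castSucc, embed_cl]
    simp [embed_cc, embed_cl, embed_ll]
  · rw [Matrix.mul_apply, Fin.sum_univ_castSucc, embed_cc, Matrix.mul_apply]
    simp [embed_cc, embed_cl, embed_lc]

lemma embed_one : embed (1 : Matrix (Fin r) (Fin r) F) = 1 := by
  ext i j
  refine Fin.lastCases ?_ (fun i => ?_) i <;> refine Fin.lastCases ?_ (fun j => ?_) j
  · rw [embed_ll]; simp
  · rw [embed_lc]
    have : Fin.last r ≠ j.castSucc := by simp [Fin.ext_iff]; omega
    simp [Matrix.one_apply, this]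
  · rw [embed_cl]
    have : i.castSucc ≠ Fin.last r := by simp [Fin.ext_iff]; omega
    simp [Matrix.one_apply, this]
  · rw [embed_cc]
    simp [Matrix.one_apply, Fin.castSucc_inj]

lemma det_uMat (v : Fin r → F) : (uMat v).det = 1 := by
  have h : (uMat v).BlockTriangular id := by
    intro i j hij
    have hij' : j < i := hij
    have h3 : (j:ℕ) < (i:ℕ) := hij'
    have h4 := i.isLt
    have h2 : (j:ℕ) ≠ r := by omega
    simp only [uMat, of_apply, if_neg (ne_of_gt hij'), if_neg h2]
  rw [Matrix.det_of_upperTriangular h]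
  refine Finset.prod_eq_one (fun i _ => ?_)
  refine Fin.lastCases ?_ (fun i' => ?_) i
  · exact uMat_ll v
  · rw [uMat_cc, if_pos rfl]

lemma det_lMat (v : Fin r → F) : (lMat v).det = 1 := by
  have h : (lMat v).BlockTriangular OrderDual.toDual := by
    intro i j hij
    have hij' : i < j := hij
    have h3 : (i:ℕ) < (j:ℕ) := hij'
    have h4 := j.isLt
    have h2 : (i:ℕ) ≠ r := by omega
    simp only [lMat, of_apply, if_neg (ne_of_lt hij'), if_neg h2]
  rw [Matrix.det_of_lowerTriangular _ h]
  refine Finset.prod_eq_one (fun i _ => ?_)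
  refine Fin.lastCases ?_ (fun i' => ?_) i
  · exact lMat_ll v
  · rw [lMat_cc, if_pos rfl]

lemma det_aux (M : Matrix (Fin (r+1)) (Fin (r+1)) F)
    (h0 : ∀ i : Fin r, M i.castSucc (Fin.last r) = 0)
    (h1 : M (Fin.last r) (Fin.last r) = 1) :
    M.det = (M.submatrix Fin.castSucc Fin.castSucc).det := by
  rw [Matrix.det_succ_column M (Fin.last r), Fin.sum_univ_castSucc]
  simp only [h0, h1, mul_zero, zero_mul, mul_one, Finset.sum_const_zero, zero_add]
  rw [Fin.succAbove_last]
  have : ((-1 : F) ^ ((Fin.last r : ℕ) + (Fin.last r : ℕ))) = 1 := by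
    rw [Fin.val_last]; exact Even.neg_one_pow ⟨r, by ring⟩
  rw [this, one_mul]

lemma det_embed (A : Matrix (Fin r) (Fin r) F) : (embed A).det = A.det := by
  rw [det_aux _ (embed_cl A) (embed_ll A)]
  congr 1
  ext i j
  exact embed_cc A i j

end Generic2

section IntFacts
variable {O F : Type*} [CommRing O] [Field F] [Algebra O F]

lemma isInt_mem (z : F) : IsInt O z ↔ z ∈ (algebraMap O F).range := Iff.rfl

lemma isInt_zero : IsInt O (0 : F) := ⟨0, map_zero _⟩
lemma isInt_one : IsInt O (1 : F) := ⟨1, map_one _⟩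
lemma isInt_add {a b : F} (ha : IsInt O a) (hb : IsInt O b) : IsInt O (a + b) := by
  obtain ⟨a', rfl⟩ := ha; obtain ⟨b', rfl⟩ := hb; exact ⟨a' + b', map_add _ _ _⟩
lemma isInt_mul {a b : F} (ha : IsInt O a) (hb : IsInt O b) : IsInt O (a * b) := by
  obtain ⟨a', rfl⟩ := ha; obtain ⟨b', rfl⟩ := hb; exact ⟨a' * b', map_mul _ _ _⟩
lemma isInt_neg {a : F} (ha : IsInt O a) : IsInt O (-a) := by
  obtain ⟨a', rfl⟩ := ha; exact ⟨-a', map_neg _ _⟩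

lemma isInt_det {n : ℕ} (M : Matrix (Fin n) (Fin n) F)
    (h : ∀ i j, IsInt O (M i j)) : IsInt O M.det := by
  rw [Matrix.det_apply]
  have : ∀ p : Equiv.Perm (Fin n),
      (Equiv.Perm.sign p • ∏ i, M (p i) i) ∈ (algebraMap O F).range := by
    intro p
    have hp : (∏ i, M (p i) i) ∈ (algebraMap O F).range :=
      Subring.prod_mem _ (fun i _ => h (p i) i)
    rw [Units.smul_def]
    exact Subring.zsmul_mem _ hp _
  exact Subring.sum_mem _ (fun p _ => this p)

lemma isInt_adjugate {n : ℕ} (M : Matrix (Fin n) (Fin n) F)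
    (h : ∀ i j, IsInt O (M i j)) (i j : Fin n) : IsInt O (M.adjugate i j) := by
  rw [Matrix.adjugate_apply]
  refine isInt_det _ (fun a b => ?_)
  rcases eq_or_ne a j with rfl | ha
  · rw [Matrix.updateRow_self]
    rcases eq_or_ne b i with rfl | hb
    · simp [Pi.single_eq_same]; exact isInt_one
    · rw [Pi.single_eq_of_ne hb]; exact isInt_zero
  · rw [Matrix.updateRow_ne ha]; exact h a b

end IntFacts

section Telescope
variable {F : Type*} [Field F]

lemma tel_prod (G : ℕ → F) (hG : ∀ k, G k ≠ 0) :
    ∀ n, (∏ m ∈ Finset.range n, (G m / G (m+1))) = G 0 / G n := by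
  intro n
  induction n with
  | zero => rw [Finset.range_zero, Finset.prod_empty, div_self (hG 0)]
  | succ n ih =>
    rw [Finset.prod_range_succ, ih, div_mul_div_comm]
    rw [div_eq_div_iff (by exact mul_ne_zero (hG n) (hG (n+1))) (hG (n+1))]
    ring

end Telescope

/-- Proposition: for every `x ∈ F^r` and `f ∈ ℤ^r`, the matrix `ū(x)` lies in the double coset
`Ȟ_f · u(x(τ_x^f)*) · d(x(τ_x^f)) · SL_{r+1}(O)`, where `H_f = ϖ^f SL_r(O) ϖ^{−f}`,
`Ȟ_f = {diag(h,1) : h ∈ H_f}`, and `σ'` is the sorting permutation of `x(τ_x^f)`. -/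
theorem stmt2 {r : ℕ} (hr : 0 < r) (ϖ : O) (hϖ : Irreducible ϖ)
    (o : F → WithTop ℤ)
    (ho0 : o 0 = ⊤)
    (homul : ∀ x y : F, o (x * y) = o x + o y)
    (hoϖ : o (algebraMap O F ϖ) = 1)
    (hoint : ∀ x : F, IsInt O x ↔ 0 ≤ o x)
    (x : Fin r → F) (f : Fin r → ℤ)
    (σ : Equiv.Perm (Fin r)) (hσ : IsSortPerm o x σ)
    (σ' : Equiv.Perm (Fin r))
    (hσ' : IsSortPerm o (select x σ (tauSet O o x f σ)) σ') :
    ∃ s ∈ SLO O r, ∃ k ∈ SLO O (r + 1),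
      lMat x =
        embed (Dpow (algebraMap O F ϖ) f * s * Dpow (algebraMap O F ϖ) (fun i => -(f i))) *
          uMat (fun i => (select x σ (tauSet O o x f σ) i)⁻¹) *
          diagonal (dVec hr (select x σ (tauSet O o x f σ)) σ') * k := by
  classical
  set ϖF : F := algebraMap O F ϖ with hϖFdef
  set τs : Set (Fin r) := tauSet O o x f σ with hτs
  set y : Fin r → F := select x σ τs with hydef
  set ys : Fin r → F := fun i => (y i)⁻¹ with hysdef
  set d : Fin (r+1) → F := dVec hr y σ' with hddef
  -- basic valuation facts
  have ho1 : o 1 = 0 := by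
    have h := homul ϖF 1
    rw [mul_one, hoϖ] at h
    have h2 : (1:WithTop ℤ) + 0 = 1 + o 1 := by rw [add_zero]; exact h
    exact (WithTop.add_left_cancel (by simp) h2).symm
  have hotop : ∀ a : F, a ≠ 0 → o a ≠ ⊤ := by
    intro a ha hT
    have h := homul a a⁻¹
    rw [mul_inv_cancel₀ ha, ho1, hT, WithTop.top_add] at h
    exact (by simp : (0:WithTop ℤ) ≠ ⊤) h
  have hϖF0 : ϖF ≠ 0 := by
    intro h
    rw [h, ho0] at hoϖ
    exact (by simp : (⊤:WithTop ℤ) ≠ 1) hoϖ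
  have hozpow : ∀ z : ℤ, o (ϖF ^ z) = (z : WithTop ℤ) := by
    have hnat : ∀ n : ℕ, o (ϖF ^ (n:ℕ)) = ((n : ℤ) : WithTop ℤ) := by
      intro n
      induction n with
      | zero => simpa using ho1
      | succ n ih =>
        rw [pow_succ, homul, ih, hoϖ]
        push_cast
        rfl
    intro z
    rcases Int.eq_nat_or_neg z with ⟨n, rfl | rfl⟩
    · rw [zpow_natCast]; exact hnat n
    · have h1 : ϖF ^ ((n:ℤ)) * ϖF ^ (-(n:ℤ)) = 1 := by
        rw [← zpow_add₀ hϖF0]; simp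
      have h2 := homul (ϖF ^ ((n:ℤ))) (ϖF ^ (-(n:ℤ)))
      rw [h1, ho1, zpow_natCast, hnat n] at h2
      have h3 : o (ϖF ^ (-(n:ℤ))) ≠ ⊤ :=
        hotop _ (zpow_ne_zero _ hϖF0)
      obtain ⟨c, hc⟩ := WithTop.ne_top_iff_exists.mp h3
      rw [← hc] at h2 ⊢
      have h4 : (0:ℤ) = (n:ℤ) + c := by exact_mod_cast h2
      have : c = -(n:ℤ) := by omega
      rw [this]
  have holt0 : ∀ a : F, o a < 0 → a ≠ 0 := by
    intro a h ha
    rw [ha, ho0] at h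
    exact not_top_lt h
  have hnotint : ∀ a : F, ¬ IsInt O a → o a < 0 :=
    fun a h => not_le.mp (fun hle => h ((hoint a).mpr hle))
  have hoinv : ∀ a : F, a ≠ 0 → o a + o a⁻¹ = 0 := by
    intro a ha
    rw [← homul, mul_inv_cancel₀ ha, ho1]
  have hinvint : ∀ a : F, a ≠ 0 → o a ≤ 0 → IsInt O a⁻¹ := by
    intro a ha hle
    refine (hoint _).mpr ?_
    obtain ⟨m, hm⟩ := WithTop.ne_top_iff_exists.mp (hotop a ha)
    obtain ⟨m', hm'⟩ := WithTop.ne_top_iff_exists.mp (hotop a⁻¹ (inv_ne_zero ha))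
    have h1 := hoinv a ha
    rw [← hm, ← hm'] at h1
    rw [← hm] at hle
    rw [← hm']
    have h2 : m + m' = 0 := by exact_mod_cast h1
    have h3 : m ≤ 0 := by exact_mod_cast hle
    exact_mod_cast (by omega : (0:ℤ) ≤ m')
  have hdivint : ∀ a b : F, b ≠ 0 → o b ≤ o a → IsInt O (b⁻¹ * a) := by
    intro a b hb hle
    refine (hoint _).mpr ?_
    rw [homul]
    calc (0:WithTop ℤ) = o b⁻¹ + o b := by rw [add_comm]; exact (hoinv b hb).symm
      _ ≤ o b⁻¹ + o a := add_le_add_right hle _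
  -- facts about y and hatF
  have hymem : ∀ i, y i ≠ 0 → σ.symm i ∈ τs ∧ y i = x i ∧ x i ≠ 0 ∧ o (x i) < 0 := by
    intro i hyi
    have hyi' : y i = if σ.symm i ∈ τs then x i else 0 := rfl
    by_cases hmem : σ.symm i ∈ τs
    · rw [if_pos hmem] at hyi'
      have hx0 : x i ≠ 0 := hyi' ▸ hyi
      have hno : ¬ IsInt O (x (σ (σ.symm i))) := hmem.1
      rw [Equiv.apply_symm_apply] at hno
      exact ⟨hmem, hyi', hx0, hnotint _ hno⟩
    · rw [if_neg hmem] at hyi'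
      exact absurd hyi' hyi
  have hytau : ∀ p : Fin r, p ∈ τs → y (σ p) = x (σ p) ∧ y (σ p) ≠ 0 := by
    intro p hp
    have hyp : y (σ p) = if σ.symm (σ p) ∈ τs then x (σ p) else 0 := rfl
    rw [Equiv.symm_apply_apply, if_pos hp] at hyp
    have hx0 : x (σ p) ≠ 0 := holt0 _ (hnotint _ hp.1)
    exact ⟨hyp, hyp ▸ hx0⟩
  have hhat : ∀ a, hatF y a ≠ 0 ∧ o (hatF y a) ≤ 0 := by
    intro a
    by_cases hya : y a = 0
    · rw [hatF, if_pos hya]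
      exact ⟨one_ne_zero, le_of_eq ho1⟩
    · rw [hatF, if_neg hya]
      obtain ⟨-, hyx, hx0, hlt⟩ := hymem a hya
      rw [hyx]
      exact ⟨hx0, le_of_lt hlt⟩
  -- dVec entries
  have hdc : ∀ i : Fin r, d i.castSucc = if (σ'.symm i : ℕ) = 0 then (hatF y i)⁻¹
      else hatF y (σ' ⟨(σ'.symm i : ℕ) - 1,
        lt_of_le_of_lt (Nat.sub_le _ _) (σ'.symm i).isLt⟩) / hatF y i := by
    intro i
    show dVec hr y σ' i.castSucc = _
    have h : ((i.castSucc : Fin (r+1)) : ℕ) < r := by simp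
    rw [dVec, dif_pos h]
    simp only [Fin.coe_castSucc, Fin.eta]
    by_cases h0 : ((σ'.symm i : Fin r) : ℕ) = 0
    · rw [dif_pos h0, if_pos h0]
    · rw [dif_neg h0, if_neg h0]
  have hdl : d (Fin.last r) = hatF y (σ' ⟨r-1, by omega⟩) := by
    show dVec hr y σ' (Fin.last r) = _
    rw [dVec, dif_neg (by simp)]
  have hdne : ∀ i, d i ≠ 0 := by
    intro i
    refine Fin.lastCases ?_ (fun i' => ?_) i
    · rw [hdl]; exact (hhat _).1
    · rw [hdc i']
      by_cases h0 : ((σ'.symm i' : Fin r) : ℕ) = 0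
      · rw [if_pos h0]; exact inv_ne_zero (hhat _).1
      · rw [if_neg h0]; exact div_ne_zero (hhat _).1 (hhat _).1
  have hP : ∀ i : Fin r, y i ≠ 0 → d i.castSucc * x i ≠ 0 ∧ o (d i.castSucc * x i) ≤ 0 := by
    intro i hyi
    obtain ⟨-, hyx, hx0, -⟩ := hymem i hyi
    have hhi : hatF y i = x i := by rw [hatF, if_neg hyi, hyx]
    rw [hdc i]
    by_cases h0 : ((σ'.symm i : Fin r) : ℕ) = 0
    · rw [if_pos h0, hhi, inv_mul_cancel₀ hx0]
      exact ⟨one_ne_zero, le_of_eq ho1⟩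
    · rw [if_neg h0, hhi, div_mul_cancel₀ _ hx0]
      exact ⟨(hhat _).1, (hhat _).2⟩
  -- the sub-lemma: below any non-integral position there is a tau position with smaller m
  have hsub : ∀ b : Fin r, ¬ IsInt O (x (σ b)) → ∃ t : Fin r, b ≤ t ∧ t ∈ τs ∧
      o (x (σ t)) + (f (σ t) : WithTop ℤ) ≤ o (x (σ b)) + (f (σ b) : WithTop ℤ) := by
    intro b hb
    set mm : Fin r → WithTop ℤ := fun t => o (x (σ t)) + (f (σ t) : WithTop ℤ) with hmm
    set S : Finset (Fin r) :=
      Finset.univ.filter (fun t => b ≤ t ∧ mm t ≤ mm b) with hS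
    have hbS : b ∈ S := by
      rw [hS, Finset.mem_filter]
      exact ⟨Finset.mem_univ b, le_refl b, le_refl (mm b)⟩
    have hSne : S.Nonempty := ⟨b, hbS⟩
    set t : Fin r := S.max' hSne with ht
    have htS : t ∈ S := S.max'_mem hSne
    rw [hS, Finset.mem_filter] at htS
    obtain ⟨-, hbt, hmt⟩ := htS
    refine ⟨t, hbt, ⟨?_, ?_⟩, hmt⟩
    · intro hint
      have h1 : o (x (σ t)) ≤ o (x (σ b)) := hσ.1 b t hbt
      have h2 : o (x (σ b)) < 0 := hnotint _ hb
      exact absurd ((hoint _).mp hint) (not_le.mpr (lt_of_le_of_lt h1 h2))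
    · intro q hq
      have hqS : q ∉ S := by
        intro hqS
        exact absurd (S.le_max' q hqS) (not_le.mpr hq)
      rw [hS, Finset.mem_filter] at hqS
      push_neg at hqS
      have h3 : mm b < mm q := hqS (Finset.mem_univ q) (le_trans hbt (le_of_lt hq))
      exact lt_of_le_of_lt hmt h3
  -- key lemma 2 (sorting position comparison)
  have hK2 : ∀ i j : Fin r, y i ≠ 0 → i ≠ j → o (x j) < o (d i.castSucc * x i) →
      y j ≠ 0 → σ'.symm i < σ'.symm j := by
    intro i j hyi hij hlt hyj
    obtain ⟨-, hyx, hx0, -⟩ := hymem i hyi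
    have hhi : hatF y i = x i := by rw [hatF, if_neg hyi, hyx]
    have hmn : σ'.symm i ≠ σ'.symm j := fun h => hij (σ'.symm.injective h)
    by_contra hcon
    have hnm : σ'.symm j < σ'.symm i := lt_of_le_of_ne (not_lt.mp hcon) (Ne.symm hmn)
    have hnmv : ((σ'.symm j : Fin r) : ℕ) < ((σ'.symm i : Fin r) : ℕ) := hnm
    have h0 : ((σ'.symm i : Fin r) : ℕ) ≠ 0 := by omega
    rw [hdc i, if_neg h0, hhi, div_mul_cancel₀ _ hx0] at hlt
    set pm : Fin r := ⟨((σ'.symm i : Fin r) : ℕ) - 1,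
      lt_of_le_of_lt (Nat.sub_le _ _) (σ'.symm i).isLt⟩ with hpm
    have hnpm : σ'.symm j ≤ pm := by
      rw [Fin.le_def]
      simp only [hpm]
      omega
    have h1 : o (y (σ' pm)) ≤ o (y (σ' (σ'.symm j))) := hσ'.1 _ _ hnpm
    rw [Equiv.apply_symm_apply] at h1
    obtain ⟨-, hyxj, -, -⟩ := hymem j hyj
    rw [hyxj] at h1
    by_cases hz : y (σ' pm) = 0
    · rw [hz, ho0] at h1
      rw [top_le_iff.mp h1] at hlt
      exact not_top_lt hlt
    · rw [hatF, if_neg hz] at hlt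
      exact absurd (lt_of_le_of_lt h1 hlt) (lt_irrefl _)
  -- key lemma 1 (valuation inequality)
  have hK1 : ∀ i j : Fin r, y i ≠ 0 → i ≠ j → o (x j) < o (d i.castSucc * x i) → x j ≠ 0 →
      o (x i) + (f i : WithTop ℤ) ≤ o (x j) + (f j : WithTop ℤ) := by
    intro i j hyi hij hlt hxj
    obtain ⟨hmem, hyx, hxi, hoxi⟩ := hymem i hyi
    have hσa : σ (σ.symm i) = i := Equiv.apply_symm_apply σ i
    have hσb : σ (σ.symm j) = j := Equiv.apply_symm_apply σ j
    have hτa : ∀ q : Fin r, σ.symm i < q →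
        o (x i) + (f i : WithTop ℤ) < o (x (σ q)) + (f (σ q) : WithTop ℤ) := by
      intro q hq
      have := hmem.2 q hq
      rwa [hσa] at this
    by_contra hcon
    rw [not_le] at hcon
    have hba : ¬ (σ.symm i < σ.symm j) := by
      intro h
      have := hτa _ h
      rw [hσb] at this
      exact absurd hcon (lt_asymm this)
    have hbne : σ.symm j ≠ σ.symm i := by
      intro h
      have h2 := congrArg σ h
      rw [hσa, hσb] at h2
      exact hij h2.symm
    have hblt : σ.symm j < σ.symm i := lt_of_le_of_ne (not_lt.mp hba) hbne
    have hxjint : ¬ IsInt O (x (σ (σ.symm j))) := by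
      rw [hσb]
      intro hint
      have h2 := (hP i hyi).2
      exact absurd ((hoint _).mp hint) (not_le.mpr (lt_of_lt_of_le hlt h2))
    obtain ⟨t, hbt, htτ, hmt⟩ := hsub (σ.symm j) hxjint
    rw [hσb] at hmt
    have hmta : o (x (σ t)) + (f (σ t) : WithTop ℤ) < o (x i) + (f i : WithTop ℤ) :=
      lt_of_le_of_lt hmt hcon
    have hta : t < σ.symm i := by
      rcases lt_trichotomy t (σ.symm i) with h | h | h
      · exact h
      · rw [h, hσa] at hmta
        exact absurd hmta (lt_irrefl _)
      · exact absurd hmta (lt_asymm (hτa t h))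
    obtain ⟨hyc, hyc0⟩ := hytau t htτ
    have hxcxj : o (x (σ t)) ≤ o (x j) := by
      have := hσ.1 (σ.symm j) t hbt
      rwa [hσb] at this
    have hxixc : o (x i) ≤ o (x (σ t)) := by
      have := hσ.1 t (σ.symm i) (le_of_lt hta)
      rwa [hσa] at this
    have hltc : o (x (σ t)) < o (d i.castSucc * x i) := lt_of_le_of_lt hxcxj hlt
    have hcnei : σ t ≠ i := by
      intro h
      have : t = σ.symm i := by
        have := congrArg σ.symm h
        rwa [Equiv.symm_apply_apply] at this
      rw [this] at hta
      exact absurd hta (lt_irrefl _)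
    have hk2 := hK2 i (σ t) hyi (Ne.symm hcnei) hltc hyc0
    have h5 : o (y (σ' (σ'.symm (σ t)))) ≤ o (y (σ' (σ'.symm i))) := hσ'.1 _ _ (le_of_lt hk2)
    rw [Equiv.apply_symm_apply, Equiv.apply_symm_apply, hyc, hyx] at h5
    have heq : o (x (σ t)) = o (x i) := le_antisymm h5 hxixc
    have heq' : o (y (σ' (σ'.symm i))) = o (y (σ' (σ'.symm (σ t)))) := by
      rw [Equiv.apply_symm_apply, Equiv.apply_symm_apply, hyc, hyx, heq]
    have h6 : σ' (σ'.symm i) < σ' (σ'.symm (σ t)) := hσ'.2 _ _ hk2 heq'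
    rw [Equiv.apply_symm_apply, Equiv.apply_symm_apply] at h6
    have heq'' : o (x (σ t)) = o (x (σ (σ.symm i))) := by rw [hσa, heq]
    have h7 : σ t < σ (σ.symm i) := hσ.2 t (σ.symm i) hta heq''
    rw [hσa] at h7
    exact absurd h6 (lt_asymm h7)
  -- the matrix B
  set Bm : Matrix (Fin r) (Fin r) F := Matrix.of (fun i j =>
    if i = j then (1:F)
    else if y i ≠ 0 ∧ o (x j) < o (d i.castSucc * x i) ∧ x j ≠ 0
      then x j * (x i)⁻¹ else 0) with hBmdef
  have hBmdiag : ∀ i, Bm i i = 1 := by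
    intro i
    rw [hBmdef]
    simp
  have hdetB : Bm.det = 1 := by
    set κ : Fin r → ℕ := fun i => if y i ≠ 0 then ((σ'.symm i : Fin r) : ℕ) else r + (i : ℕ)
      with hκ
    have hκinj : Function.Injective κ := by
      intro i1 i2 h
      rw [hκ] at h
      simp only at h
      by_cases h1 : y i1 ≠ 0 <;> by_cases h2 : y i2 ≠ 0
      · rw [if_pos h1, if_pos h2] at h
        have : σ'.symm i1 = σ'.symm i2 := Fin.ext h
        exact σ'.symm.injective this
      · rw [if_pos h1, if_neg h2] at h
        exact absurd h (by have := (σ'.symm i1).isLt; omega)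
      · rw [if_neg h1, if_pos h2] at h
        exact absurd h (by have := (σ'.symm i2).isLt; omega)
      · rw [if_neg h1, if_neg h2] at h
        exact Fin.ext (by omega)
    have hTRI : ∀ i j : Fin r, i ≠ j → Bm i j ≠ 0 → κ i < κ j := by
      intro i j hij h0
      rw [hBmdef] at h0
      simp only [Matrix.of_apply, if_neg hij] at h0
      by_cases hC : y i ≠ 0 ∧ o (x j) < o (d i.castSucc * x i) ∧ x j ≠ 0
      · obtain ⟨hyi, hlt, hxj⟩ := hC
        rw [hκ]
        simp only
        rw [if_pos hyi]
        by_cases hyj : y j ≠ 0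
        · rw [if_pos hyj]
          exact hK2 i j hyi hij hlt hyj
        · rw [if_neg hyj]
          have := (σ'.symm i).isLt
          omega
      · rw [if_neg hC] at h0
        exact absurd rfl h0
    set π : Equiv.Perm (Fin r) := Tuple.sort κ with hπ
    have hsm : StrictMono (κ ∘ π) :=
      (Tuple.monotone_sort κ).strictMono_of_injective (hκinj.comp π.injective)
    have htri : (Bm.submatrix π π).BlockTriangular id := by
      intro i j hij
      have hij' : (j : Fin r) < i := hij
      by_contra h0
      have hne : π i ≠ π j := fun h => (ne_of_gt hij') (π.injective h)
      have := hTRI (π i) (π j) hne h0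
      have h2 : i < j := hsm.lt_iff_lt.mp this
      exact absurd h2 (lt_asymm hij')
    calc Bm.det = (Bm.submatrix π π).det := (Matrix.det_submatrix_equiv_self π Bm).symm
      _ = ∏ i, (Bm.submatrix π π) i i := Matrix.det_of_upperTriangular htri
      _ = 1 := by
          refine Finset.prod_eq_one (fun i _ => ?_)
          rw [Matrix.submatrix_apply]
          exact hBmdiag (π i)
  -- conjugated matrix and its adjugate
  set DpP : Matrix (Fin r) (Fin r) F := Dpow ϖF f with hDpP
  set DpN : Matrix (Fin r) (Fin r) F := Dpow ϖF (fun i => -(f i)) with hDpN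
  have hDpow : ∀ g : Fin r → ℤ, Dpow ϖF g = Matrix.diagonal (fun i => ϖF ^ g i) :=
    fun g => rfl
  have hDPN : DpN * DpP = 1 := by
    rw [hDpN, hDpP, hDpow, hDpow, Matrix.diagonal_mul_diagonal]
    have hfun : (fun i : Fin r => ϖF ^ (-(f i)) * ϖF ^ (f i)) = fun _ : Fin r => (1:F) := by
      funext i
      rw [← zpow_add₀ hϖF0]
      simp
    show Matrix.diagonal (fun i : Fin r => ϖF ^ (-(f i)) * ϖF ^ (f i)) = 1
    rw [hfun, Matrix.diagonal_one]
  have hDPN' : DpP * DpN = 1 := by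
    rw [hDpP, hDpN, hDpow, hDpow, Matrix.diagonal_mul_diagonal]
    have hfun : (fun i : Fin r => ϖF ^ (f i) * ϖF ^ (-(f i))) = fun _ : Fin r => (1:F) := by
      funext i
      rw [← zpow_add₀ hϖF0]
      simp
    show Matrix.diagonal (fun i : Fin r => ϖF ^ (f i) * ϖF ^ (-(f i))) = 1
    rw [hfun, Matrix.diagonal_one]
  set Bt : Matrix (Fin r) (Fin r) F := DpN * Bm * DpP with hBt
  have hBtent : ∀ p q, Bt p q = ϖF ^ (-(f p)) * Bm p q * ϖF ^ (f q) := by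
    intro p q
    rw [hBt, hDpN, hDpP, hDpow, hDpow, Matrix.mul_diagonal, Matrix.diagonal_mul]
  have hW : ∀ p q, IsInt O (Bt p q) := by
    intro p q
    rw [hBtent]
    rcases eq_or_ne p q with rfl | hpq
    · rw [hBmdiag, mul_one, ← zpow_add₀ hϖF0]
      have h0 : -f p + f p = 0 := by ring
      rw [h0, zpow_zero]
      exact isInt_one
    · rw [hBmdef]
      simp only [Matrix.of_apply, if_neg hpq]
      by_cases hC : y p ≠ 0 ∧ o (x q) < o (d p.castSucc * x p) ∧ x q ≠ 0
      · rw [if_pos hC]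
        obtain ⟨hyp, hlt, hxq⟩ := hC
        obtain ⟨-, -, hxp, -⟩ := hymem p hyp
        obtain ⟨b, hb⟩ := WithTop.ne_top_iff_exists.mp (hotop _ hxq)
        obtain ⟨a, ha⟩ := WithTop.ne_top_iff_exists.mp (hotop _ hxp)
        obtain ⟨c, hc⟩ := WithTop.ne_top_iff_exists.mp (hotop _ (inv_ne_zero hxp))
        have hac : a + c = 0 := by
          have h1 := hoinv _ hxp
          rw [← ha, ← hc] at h1
          exact_mod_cast h1
        have hK := hK1 p q hyp hpq hlt hxq
        rw [← ha, ← hb] at hK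
        have hK' : a + f p ≤ b + f q := by exact_mod_cast hK
        refine (hoint _).mpr ?_
        rw [homul, homul, homul, hozpow, hozpow, ← hb, ← hc]
        have hgoal : (0:ℤ) ≤ -f p + (b + c) + f q := by omega
        exact_mod_cast hgoal
      · rw [if_neg hC, mul_zero, zero_mul]
        exact isInt_zero
  have hdetBt : Bt.det = 1 := by
    rw [hBt, Matrix.det_mul, Matrix.det_mul, hdetB, mul_one, ← Matrix.det_mul, hDPN,
      Matrix.det_one]
  set s : Matrix (Fin r) (Fin r) F := Bt.adjugate with hsdef
  have hsSL : s ∈ SLO O r := by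
    refine ⟨fun i j => isInt_adjugate Bt hW i j, ?_⟩
    rw [hsdef, Matrix.det_adjugate, hdetBt, one_pow]
  have hsB : DpP * s * DpN * Bm = 1 := by
    have h1 : s * Bt = 1 := by
      rw [hsdef, Matrix.adjugate_mul, hdetBt, one_smul]
    have h2 : Bt * DpN = DpN * Bm := by
      rw [hBt, mul_assoc, hDPN', mul_one]
    calc DpP * s * DpN * Bm = DpP * s * (DpN * Bm) := by rw [mul_assoc]
      _ = DpP * s * (Bt * DpN) := by rw [h2]
      _ = DpP * (s * Bt) * DpN := by noncomm_ring
      _ = DpP * DpN := by rw [h1, mul_one]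
      _ = 1 := hDPN'
  -- the matrix K
  set K : Matrix (Fin (r+1)) (Fin (r+1)) F :=
    Matrix.diagonal (fun i => (d i)⁻¹) * (uMat (fun i => -(ys i)) * (embed Bm * lMat x))
    with hKdef
  have hA1cc : ∀ i j : Fin r, (embed Bm * lMat x) i.castSucc j.castSucc = Bm i j := by
    intro i j
    rw [mul_lMat_c, embed_cc, embed_cl, zero_mul, add_zero]
  have hA1cl : ∀ i : Fin r, (embed Bm * lMat x) i.castSucc (Fin.last r) = 0 := by
    intro i
    rw [mul_lMat_l, embed_cl]
  have hA1lc : ∀ j : Fin r, (embed Bm * lMat x) (Fin.last r) j.castSucc = x j := by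
    intro j
    rw [mul_lMat_c, embed_lc, embed_ll, zero_add, one_mul]
  have hA1ll : (embed Bm * lMat x) (Fin.last r) (Fin.last r) = 1 := by
    rw [mul_lMat_l, embed_ll]
  have hKcc : ∀ i j : Fin r, K i.castSucc j.castSucc
      = (d i.castSucc)⁻¹ * (Bm i j - ys i * x j) := by
    intro i j
    rw [hKdef, Matrix.diagonal_mul, uMat_mul_c, hA1cc, hA1lc]
    ring
  have hKcl : ∀ i : Fin r, K i.castSucc (Fin.last r) = (d i.castSucc)⁻¹ * (- ys i) := by
    intro i
    rw [hKdef, Matrix.diagonal_mul, uMat_mul_c, hA1cl, hA1ll, mul_one, zero_add]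
  have hKlc : ∀ j : Fin r, K (Fin.last r) j.castSucc = (d (Fin.last r))⁻¹ * x j := by
    intro j
    rw [hKdef, Matrix.diagonal_mul, uMat_mul_l, hA1lc]
  have hKll : K (Fin.last r) (Fin.last r) = (d (Fin.last r))⁻¹ := by
    rw [hKdef, Matrix.diagonal_mul, uMat_mul_l, hA1ll, mul_one]
  have hdprod : (∏ i, d i) = 1 := by
    set G : ℕ → F := fun n => if n = 0 then 1
      else hatF y (σ' ⟨min (n-1) (r-1), by omega⟩) with hG
    have hGne : ∀ k, G k ≠ 0 := by
      intro k
      simp only [hG]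
      by_cases hk : k = 0
      · rw [if_pos hk]; exact one_ne_zero
      · rw [if_neg hk]; exact (hhat _).1
    have hstep : ∀ m : Fin r, d (σ' m).castSucc = G (m : ℕ) / G ((m : ℕ) + 1) := by
      intro m
      have hisLt := m.isLt
      rw [hdc (σ' m)]
      simp only [Equiv.symm_apply_apply]
      by_cases h0 : ((m : Fin r) : ℕ) = 0
      · rw [if_pos h0]
        have hA : G (m:ℕ) = 1 := by simp only [hG]; rw [if_pos h0]
        have hB : G ((m:ℕ)+1) = hatF y (σ' m) := by
          simp only [hG]
          rw [if_neg (by omega : ¬((m:ℕ)+1 = 0))]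
          congr 1
          exact congrArg σ' (Fin.ext (by simp; omega))
        rw [hA, hB, one_div]
      · rw [if_neg h0]
        have hA : G (m:ℕ)
            = hatF y (σ' ⟨(m:ℕ)-1, lt_of_le_of_lt (Nat.sub_le _ _) m.isLt⟩) := by
          simp only [hG]
          rw [if_neg h0]
          congr 1
          exact congrArg σ' (Fin.ext (by simp; omega))
        have hB : G ((m:ℕ)+1) = hatF y (σ' m) := by
          simp only [hG]
          rw [if_neg (by omega : ¬((m:ℕ)+1 = 0))]
          congr 1
          exact congrArg σ' (Fin.ext (by simp; omega))
        rw [hA, hB]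
    have h2 : (∏ i : Fin r, d i.castSucc) = ∏ m : Fin r, d (σ' m).castSucc :=
      (Equiv.prod_comp σ' (fun i => d i.castSucc)).symm
    have h3 : (∏ m : Fin r, d (σ' m).castSucc)
        = ∏ n ∈ Finset.range r, (G n / G (n+1)) := by
      rw [← Fin.prod_univ_eq_prod_range (fun n => G n / G (n+1)) r]
      exact Finset.prod_congr rfl (fun m _ => hstep m)
    rw [Fin.prod_univ_castSucc, h2, h3, tel_prod G hGne r, hdl]
    have hA : G 0 = 1 := by simp [hG]
    have hB : G r = hatF y (σ' ⟨r-1, by omega⟩) := by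
      simp only [hG]
      rw [if_neg (by omega : ¬(r = 0))]
      congr 1
      exact congrArg σ' (Fin.ext (by simp))
    rw [hA, hB, one_div, inv_mul_cancel₀ (hhat _).1]
  have hV12 : ∀ j : Fin r, o (hatF y (σ' ⟨r-1, by omega⟩)) ≤ o (x j) := by
    set lastp : Fin r := ⟨r-1, by omega⟩ with hlastp
    intro j
    have hjle : ∀ p : Fin r, p ≤ lastp := by
      intro p
      rw [Fin.le_def]
      have := p.isLt
      simp only [hlastp]
      omega
    by_cases hint : IsInt O (x (σ lastp))
    · have hall : ∀ p : Fin r, (0:WithTop ℤ) ≤ o (x (σ p)) := by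
        intro p
        exact le_trans ((hoint _).mp hint) (hσ.1 p lastp (hjle p))
      have hally : ∀ a : Fin r, y a = 0 := by
        intro a
        by_contra hya
        obtain ⟨-, -, -, hlt⟩ := hymem a hya
        have := hall (σ.symm a)
        rw [Equiv.apply_symm_apply] at this
        exact absurd (lt_of_le_of_lt this hlt) (lt_irrefl _)
      rw [hatF, if_pos (hally _), ho1]
      have := hall (σ.symm j)
      rwa [Equiv.apply_symm_apply] at this
    · have hτ : lastp ∈ τs := by
        refine ⟨hint, ?_⟩
        intro q hq
        exact absurd (hjle q) (not_le.mpr hq)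
      obtain ⟨hyl, hyl0⟩ := hytau lastp hτ
      have hn0 : σ'.symm (σ lastp) ≤ lastp := hjle _
      have h1 : o (y (σ' lastp)) ≤ o (y (σ' (σ'.symm (σ lastp)))) := hσ'.1 _ _ hn0
      rw [Equiv.apply_symm_apply, hyl] at h1
      have h2 : o (x (σ lastp)) < 0 := hnotint _ hint
      have hyw : y (σ' lastp) ≠ 0 := holt0 _ (lt_of_le_of_lt h1 h2)
      rw [hatF, if_neg hyw]
      have h3 : o (x (σ lastp)) ≤ o (x j) := by
        have := hσ.1 (σ.symm j) lastp (hjle _)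
        rwa [Equiv.apply_symm_apply] at this
      exact le_trans h1 h3
  have hKSL : K ∈ SLO O (r+1) := by
    constructor
    · intro i j
      refine Fin.lastCases ?_ (fun i' => ?_) i
      · refine Fin.lastCases ?_ (fun j' => ?_) j
        · rw [hKll, hdl]
          exact hinvint _ (hhat _).1 (hhat _).2
        · rw [hKlc, hdl]
          exact hdivint _ _ (hhat _).1 (hV12 j')
      · refine Fin.lastCases ?_ (fun j' => ?_) j
        · rw [hKcl]
          by_cases hyi : y i' = 0
          · have : ys i' = 0 := by rw [hysdef]; simp only; rw [hyi, _root_.inv_zero]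
            rw [this, neg_zero, mul_zero]
            exact isInt_zero
          · obtain ⟨-, hyx, hx0, -⟩ := hymem i' hyi
            have hysx : ys i' = (x i')⁻¹ := by
              rw [hysdef]; simp only; rw [hyx]
            rw [hysx, mul_neg, ← mul_inv]
            exact isInt_neg (hinvint _ (hP i' hyi).1 (hP i' hyi).2)
        · rw [hKcc]
          by_cases hyi : y i' = 0
          · have hys0 : ys i' = 0 := by rw [hysdef]; simp only; rw [hyi, _root_.inv_zero]
            have hdint : IsInt O (d i'.castSucc)⁻¹ := by
              rw [hdc i']
              have hh1 : hatF y i' = 1 := by rw [hatF, if_pos hyi]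
              by_cases h0 : ((σ'.symm i' : Fin r) : ℕ) = 0
              · rw [if_pos h0, hh1, inv_one, inv_one]
                exact isInt_one
              · rw [if_neg h0, hh1, div_one]
                exact hinvint _ (hhat _).1 (hhat _).2
            have hBm01 : Bm i' j' = if i' = j' then 1 else 0 := by
              rw [hBmdef]
              simp only [Matrix.of_apply]
              rcases eq_or_ne i' j' with rfl | hne
              · rw [if_pos rfl, if_pos rfl]
              · rw [if_neg hne, if_neg hne, if_neg]
                intro hC
                exact hC.1 hyi
            rw [hys0, zero_mul, sub_zero, hBm01]
            rcases eq_or_ne i' j' with rfl | hne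
            · rw [if_pos rfl, mul_one]; exact hdint
            · rw [if_neg hne, mul_zero]; exact isInt_zero
          · obtain ⟨-, hyx, hx0, -⟩ := hymem i' hyi
            have hysx : ys i' = (x i')⁻¹ := by
              rw [hysdef]; simp only; rw [hyx]
            rcases eq_or_ne i' j' with rfl | hne
            · rw [hBmdiag, hysx, inv_mul_cancel₀ hx0, sub_self, mul_zero]
              exact isInt_zero
            · have hBm : Bm i' j' = if y i' ≠ 0 ∧ o (x j') < o (d i'.castSucc * x i')
                  ∧ x j' ≠ 0 then x j' * (x i')⁻¹ else 0 := by
                rw [hBmdef]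
                simp only [Matrix.of_apply]
                rw [if_neg hne]
              by_cases hC : y i' ≠ 0 ∧ o (x j') < o (d i'.castSucc * x i') ∧ x j' ≠ 0
              · rw [hBm, if_pos hC, hysx, mul_comm (x j') _, sub_self, mul_zero]
                exact isInt_zero
              · rw [hBm, if_neg hC, hysx, zero_sub, mul_neg]
                by_cases hxj : x j' = 0
                · rw [hxj, mul_zero, mul_zero, neg_zero]
                  exact isInt_zero
                · have hge : ¬ (o (x j') < o (d i'.castSucc * x i')) := by
                    intro hlt
                    exact hC ⟨hyi, hlt, hxj⟩
                  have hle : o (d i'.castSucc * x i') ≤ o (x j') := not_lt.mp hge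
                  have heq : (d i'.castSucc)⁻¹ * ((x i')⁻¹ * x j')
                      = (d i'.castSucc * x i')⁻¹ * x j' := by
                    rw [mul_inv, mul_assoc]
                  rw [heq]
                  exact isInt_neg (hdivint _ _ (hP i' hyi).1 hle)
    · rw [hKdef, Matrix.det_mul, Matrix.det_mul, Matrix.det_mul, det_uMat, det_lMat,
        det_embed, hdetB, Matrix.det_diagonal]
      have hp : (∏ i : Fin (r+1), (d i)⁻¹) = 1 := by
        rw [Finset.prod_inv_distrib]
        · rw [hdprod, inv_one]
      rw [hp]
      ring
  refine ⟨s, hsSL, K, hKSL, ?_⟩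
  have hys0 : ys + (fun i => -(ys i)) = 0 := by
    funext i; simp
  have hdd : (Matrix.diagonal d) * (Matrix.diagonal fun i => (d i)⁻¹) = 1 := by
    rw [Matrix.diagonal_mul_diagonal]
    have : (fun i => d i * (d i)⁻¹) = fun _ => (1:F) := by
      funext i; exact mul_inv_cancel₀ (hdne i)
    rw [this, Matrix.diagonal_one]
  calc lMat x
      = embed ((DpP * s * DpN) * Bm) * lMat x := by rw [hsB, embed_one, one_mul]
    _ = embed (DpP * s * DpN) * (embed Bm * lMat x) := by rw [← embed_mul, mul_assoc]
    _ = embed (DpP * s * DpN) *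
        (uMat ys * (uMat (fun i => -(ys i)) * (embed Bm * lMat x))) := by
        rw [← mul_assoc (uMat ys), uMat_add, hys0, uMat_zero, one_mul]
    _ = embed (DpP * s * DpN) * (uMat ys * (Matrix.diagonal d * K)) := by
        rw [hKdef, ← mul_assoc (Matrix.diagonal d), hdd, one_mul]
    _ = embed (DpP * s * DpN) * uMat ys * Matrix.diagonal d * K := by
        simp only [mul_assoc]

end ShalikaStmt2
end

section
/- Let f ∈ ℤ^r with f_1 < f_2 < … < f_r, and let w be a permutation of {1,…,r}, identified with the permutation matrix in GL_r satisfying w·[g_{i,j}]·w^{-1} = [g_{w(i),w(j)}]. If k ∈ GL_r(O) ∩ ϖ^f · GL_r(O) · (w·ϖ^f·w^{-1})^{-1}, then k_{i,w^{-1}(i)} ∈ O^× for every i, and for all i, j one has k_{i,j} ∈ 𝔭^{f_i − f_{w(j)}} whenever f_{w(j)} < f_i, and k_{i,j} ∈ O otherwise. -/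
open Matrix

namespace ShalikaStmt5

variable {O F : Type*} [CommRing O] [IsDomain O] [IsDiscreteValuationRing O]
  [Field F] [Algebra O F] [IsFractionRing O F]

/-- `x ∈ F` lies in (the image of) `O`. -/
def IsInt (O : Type*) {F : Type*} [CommRing O] [Field F] [Algebra O F] (x : F) : Prop :=
  ∃ a : O, algebraMap O F a = x

/-- `GL_r(O)`: matrices with entries in `O` and determinant in `O^×`. -/
def GLO (O : Type*) {F : Type*} [CommRing O] [Field F] [Algebra O F] (r : ℕ) :
    Set (Matrix (Fin r) (Fin r) F) :=
  {g | (∀ i j, IsInt O (g i j)) ∧ ∃ u : Oˣ, algebraMap O F (u : O) = g.det}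

/-- The diagonal matrix `ϖ^f`. -/
noncomputable def Dpow {F : Type*} [Field F] {r : ℕ} (ϖF : F) (f : Fin r → ℤ) :
    Matrix (Fin r) (Fin r) F :=
  diagonal fun i => ϖF ^ f i

/-- Let `f ∈ ℤ^r` be strictly increasing and `w` a permutation.  The permutation matrix
convention `w · [g_{i,j}] · w⁻¹ = [g_{w(i),w(j)}]` gives `w · ϖ^f · w⁻¹ = diag(ϖ^{f(w i)})`.
If `k ∈ GL_r(O) ∩ ϖ^f · GL_r(O) · (w·ϖ^f·w⁻¹)⁻¹`, then `k_{i,w⁻¹(i)} ∈ O^×` for every `i`,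
and `k_{i,j} ∈ 𝔭^{f_i − f_{w(j)}}` if `f_{w(j)} < f_i`, while `k_{i,j} ∈ O` otherwise. -/
theorem stmt5 {r : ℕ} (ϖ : O) (hϖ : Irreducible ϖ)
    (f : Fin r → ℤ) (hf : ∀ i j : Fin r, i < j → f i < f j)
    (w : Equiv.Perm (Fin r))
    (k : Matrix (Fin r) (Fin r) F)
    (hk : k ∈ GLO O r ∧ ∃ g ∈ GLO (O := O) (F := F) r,
      k = Dpow (algebraMap O F ϖ) f * g * Dpow (algebraMap O F ϖ) (fun i => -(f (w i)))) :
    (∀ i : Fin r, ∃ u : Oˣ, algebraMap O F (u : O) = k i (w.symm i)) ∧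
    (∀ i j : Fin r,
      (f (w j) < f i →
        ∃ a : O, k i j = (algebraMap O F ϖ) ^ (f i - f (w j)) * algebraMap O F a) ∧
      (¬ f (w j) < f i → IsInt O (k i j))) := by
  obtain ⟨⟨hkint, u, hu⟩, g, ⟨hgint, v, hv⟩, hkeq⟩ := hk
  have hinj : Function.Injective (algebraMap O F) := IsFractionRing.injective O F
  have hϖ0 : (algebraMap O F ϖ) ≠ 0 := fun h => hϖ.ne_zero (hinj (by simpa using h))
  have hk_entry : ∀ i j, k i j = (algebraMap O F ϖ) ^ (f i - f (w j)) * g i j := by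
    intro i j
    have h1 : k i j = (algebraMap O F ϖ) ^ (f i) * g i j * (algebraMap O F ϖ) ^ (-(f (w j))) := by
      rw [hkeq]
      simp [Dpow, Matrix.mul_diagonal, Matrix.diagonal_mul]
    rw [h1, sub_eq_add_neg, zpow_add₀ hϖ0]; ring
  have hmono : StrictMono f := fun i j h => hf i j h
  choose K hK using hkint
  choose G hG using hgint
  -- divisibility of entries below the pattern
  have hdvd : ∀ i j : Fin r, f (w j) < f i → ϖ ∣ K i j := by
    intro i j hij
    set e := f i - f (w j) with he
    have he0 : 0 < e := by omega
    have hmap : algebraMap O F (K i j) = algebraMap O F (ϖ ^ e.toNat * G i j) := by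
      rw [hK, hk_entry, _root_.map_mul, map_pow, ← hG, ← zpow_natCast, Int.toNat_of_nonneg he0.le]
    have hKij : K i j = ϖ ^ e.toNat * G i j := hinj hmap
    exact hKij ▸ dvd_mul_of_dvd_left (dvd_pow_self ϖ (by omega)) _
  -- the combinatorial rigidity lemma
  have hperm : ∀ σ : Equiv.Perm (Fin r), (∀ i, f (σ i) ≤ f (w i)) → σ = w := by
    intro σ hle
    have h1 : ∀ i, (σ i : ℕ) ≤ (w i : ℕ) := fun i => hmono.le_iff_le.mp (hle i)
    have hsum : ∑ i : Fin r, ((σ i : ℕ)) = ∑ i : Fin r, ((w i : ℕ)) := by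
      rw [Equiv.sum_comp σ (fun i : Fin r => (i : ℕ)),
        Equiv.sum_comp w (fun i : Fin r => (i : ℕ))]
    have heq := (Finset.sum_eq_sum_iff_of_le (fun i _ => h1 i)).mp hsum
    ext i
    exact (heq i (Finset.mem_univ i)).symm ▸ rfl
  -- determinant of K is a unit
  have hdetmap : algebraMap O F (Matrix.det (Matrix.of K)) = k.det := by
    rw [RingHom.map_det]
    congr 1
    ext i j
    exact hK i j
  have hdetK : Matrix.det (Matrix.of K) = (u : O) := hinj (by rw [hdetmap, ← hu])
  have hdetunit : IsUnit (Matrix.det (Matrix.of K)) := hdetK ▸ u.isUnit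
  -- ϖ does not divide the product over the anti-diagonal
  have hnd : ¬ ϖ ∣ ∏ i : Fin r, K (w i) i := by
    intro hP
    have hrest : ϖ ∣ Matrix.det (Matrix.of K)
        - Equiv.Perm.sign w • ∏ i : Fin r, (Matrix.of K) (w i) i := by
      rw [Matrix.det_apply, ← Finset.add_sum_erase Finset.univ _ (Finset.mem_univ w),
        add_sub_cancel_left]
      refine Finset.dvd_sum ?_
      intro σ hσ
      have hσw : σ ≠ w := (Finset.mem_erase.mp hσ).1
      have : ∃ i, f (w i) < f (σ i) := by
        by_contra hc
        push_neg at hc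
        exact hσw (hperm σ hc)
      obtain ⟨i0, hi0⟩ := this
      have : ϖ ∣ ∏ i : Fin r, (Matrix.of K) (σ i) i :=
        dvd_trans (hdvd (σ i0) i0 hi0) (Finset.dvd_prod_of_mem _ (Finset.mem_univ i0))
      rw [Units.smul_def, zsmul_eq_mul]
      exact this.mul_left _
    have : ϖ ∣ Matrix.det (Matrix.of K) := by
      have h2 : ϖ ∣ Equiv.Perm.sign w • ∏ i : Fin r, (Matrix.of K) (w i) i := by
        rw [Units.smul_def, zsmul_eq_mul]
        exact Dvd.dvd.mul_left hP _
      simpa using dvd_add hrest h2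
    exact hϖ.not_isUnit (isUnit_of_dvd_unit this hdetunit)
  -- each anti-diagonal entry is a unit
  have hunit : ∀ i : Fin r, IsUnit (K (w i) i) := by
    intro i
    have hnd' : ¬ ϖ ∣ K (w i) i := fun h =>
      hnd (dvd_trans h (Finset.dvd_prod_of_mem _ (Finset.mem_univ i)))
    have hne : K (w i) i ≠ 0 := fun h => hnd' (h ▸ dvd_zero ϖ)
    obtain ⟨n, u', hxu⟩ := IsDiscreteValuationRing.eq_unit_mul_pow_irreducible hne hϖ
    rcases Nat.eq_zero_or_pos n with hn | hn
    · rw [hxu, hn, pow_zero, mul_one]; exact u'.isUnit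
    · exact absurd (hxu ▸ (dvd_pow_self ϖ hn.ne').mul_left _) hnd'
  constructor
  · intro i
    have := hunit (w.symm i)
    rw [Equiv.apply_symm_apply] at this
    obtain ⟨u', hu'⟩ := this
    exact ⟨u', by rw [hu', hK]⟩
  · intro i j
    refine ⟨fun hij => ⟨G i j, by rw [hk_entry, hG]⟩, fun _ => ⟨K i j, hK i j⟩⟩

end ShalikaStmt5
end

section
/- Let n = 2m be an even positive integer. Every (S°_{n+2}, P_{n+2}(O))-double coset in P_{n+2} contains a matrix of the form diag(g, 1_{m+1}) where g = [[1_m, βᵀ],[0,1]]·diag(ϖ^{f_1},…,ϖ^{f_m}, ϖ^l) ∈ GL_{m+1}(F) for some β ∈ F^m, f ∈ ℤ^m and l ∈ ℤ. That is, for every p ∈ P_{n+2} there exist s ∈ S°_{n+2}, k ∈ P_{n+2}(O), β ∈ F^m, f ∈ ℤ^m and l ∈ ℤ such that p = s · diag([[1_m, βᵀ],[0,1]]·diag(ϖ^{f_1},…,ϖ^{f_m}, ϖ^l), 1_{m+1}) · k. -/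
set_option linter.unusedSectionVars false
set_option linter.unnecessarySimpa false
set_option maxHeartbeats 1600000

open Matrix

namespace ShalikaStmt6

variable {O F : Type*} [CommRing O] [IsDomain O] [IsDiscreteValuationRing O]
  [Field F] [Algebra O F] [IsFractionRing O F]

/-- `x ∈ F` lies in (the image of) `O`. -/
def IsInt (O : Type*) {F : Type*} [CommRing O] [Field F] [Algebra O F] (x : F) : Prop :=
  ∃ a : O, algebraMap O F a = x

/-- The mirabolic subgroup `P_N ⊂ GL_N(F)`: invertible matrices with last row `(0,…,0,1)`. -/
def Pset (F : Type*) [Field F] (N : ℕ) : Set (Matrix (Fin N) (Fin N) F) :=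
  {p | IsUnit p.det ∧ ∀ i j : Fin N, (i : ℕ) = N - 1 →
    p i j = if (j : ℕ) = N - 1 then 1 else 0}

/-- `P_N(O) = P_N ∩ GL_N(O)`. -/
def POset (O : Type*) (F : Type*) [CommRing O] [Field F] [Algebra O F] (N : ℕ) :
    Set (Matrix (Fin N) (Fin N) F) :=
  {p | p ∈ Pset F N ∧ (∀ i j, IsInt O (p i j)) ∧ ∃ u : Oˣ, algebraMap O F (u : O) = p.det}

/-- The block matrix `[[a,b],[0,a]]` of size `(M+M) × (M+M)`. -/
def shalikaMat {F : Type*} [Field F] {M : ℕ} (a b : Matrix (Fin M) (Fin M) F) :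
    Matrix (Fin (M + M)) (Fin (M + M)) F :=
  Matrix.reindex finSumFinEquiv finSumFinEquiv (Matrix.fromBlocks a b 0 a)

/-- The Shalika subgroup `S_{M+M} ⊂ GL_{M+M}(F)`. -/
def Sset (O : Type*) (F : Type*) [CommRing O] [Field F] [Algebra O F] (M : ℕ) :
    Set (Matrix (Fin (M + M)) (Fin (M + M)) F) :=
  {s | ∃ a b : Matrix (Fin M) (Fin M) F, IsUnit a.det ∧ s = shalikaMat a b}

/-- The embedding `g ↦ diag(g, 1_M)` of `M × M` matrices into `(M+M) × (M+M)` matrices. -/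
def diagEmbed {F : Type*} [Field F] {M : ℕ} (g : Matrix (Fin M) (Fin M) F) :
    Matrix (Fin (M + M)) (Fin (M + M)) F :=
  Matrix.reindex finSumFinEquiv finSumFinEquiv (Matrix.fromBlocks g 0 0 1)

/-- The upper unipotent matrix `[[1_r, βᵀ],[0,1]]`. -/
def uMat {F : Type*} [Field F] {r : ℕ} (β : Fin r → F) :
    Matrix (Fin (r + 1)) (Fin (r + 1)) F :=
  Matrix.of fun i j =>
    if i = j then 1
    else if (j : ℕ) = r then (if h : (i : ℕ) < r then β ⟨i, h⟩ else 0) else 0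

/-! ### Integrality helpers -/

section Basic
variable (O)

lemma isInt_zero : IsInt O (0:F) := ⟨0, map_zero _⟩
lemma isInt_one : IsInt O (1:F) := ⟨1, map_one _⟩
lemma isInt_algebraMap (a : O) : IsInt O (algebraMap O F a) := ⟨a, rfl⟩

variable {O}

lemma IsInt.add {x y : F} (hx : IsInt O x) (hy : IsInt O y) : IsInt O (x + y) := by
  obtain ⟨a, rfl⟩ := hx; obtain ⟨b, rfl⟩ := hy; exact ⟨a + b, map_add _ _ _⟩

lemma IsInt.mul {x y : F} (hx : IsInt O x) (hy : IsInt O y) : IsInt O (x * y) := by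
  obtain ⟨a, rfl⟩ := hx; obtain ⟨b, rfl⟩ := hy; exact ⟨a * b, _root_.map_mul _ _ _⟩

lemma IsInt.neg {x : F} (hx : IsInt O x) : IsInt O (-x) := by
  obtain ⟨a, rfl⟩ := hx; exact ⟨-a, map_neg _ _⟩

lemma IsInt.sub {x y : F} (hx : IsInt O x) (hy : IsInt O y) : IsInt O (x - y) := by
  obtain ⟨a, rfl⟩ := hx; obtain ⟨b, rfl⟩ := hy; exact ⟨a - b, map_sub _ _ _⟩

lemma isInt_sum {ι : Type*} (s : Finset ι) (f : ι → F) (h : ∀ i ∈ s, IsInt O (f i)) :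
    IsInt O (∑ i ∈ s, f i) := by
  classical
  induction s using Finset.induction_on with
  | empty => simpa using isInt_zero O
  | insert a s hx ih =>
      rw [Finset.sum_insert hx]
      exact (h a (Finset.mem_insert_self a s)).add
        (ih fun i hi => h i (Finset.mem_insert_of_mem hi))

end Basic

section Mat
variable (O) {n : Type*} [Fintype n] [DecidableEq n]

/-- all entries integral -/
def AllInt (A : Matrix n n F) : Prop := ∀ i j, IsInt O (A i j)

/-- integral with integral inverse -/
def IntUnit (A : Matrix n n F) : Prop :=
  AllInt O A ∧ ∃ B, AllInt O B ∧ A * B = 1 ∧ B * A = 1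

variable {O}

lemma AllInt.mul {A B : Matrix n n F} (hA : AllInt O A) (hB : AllInt O B) :
    AllInt O (A * B) := by
  intro i j
  rw [Matrix.mul_apply]
  exact isInt_sum _ _ fun k _ => (hA i k).mul (hB k j)

lemma allInt_one : AllInt O (1 : Matrix n n F) := by
  intro i j
  by_cases h : i = j <;> simp [Matrix.one_apply, h, isInt_one, isInt_zero]

lemma IntUnit.one : IntUnit O (1 : Matrix n n F) := ⟨allInt_one, 1, allInt_one, by simp, by simp⟩

lemma IntUnit.mul {A B : Matrix n n F} (hA : IntUnit O A) (hB : IntUnit O B) :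
    IntUnit O (A * B) := by
  obtain ⟨hA1, A', hA2, hA3, hA4⟩ := hA
  obtain ⟨hB1, B', hB2, hB3, hB4⟩ := hB
  refine ⟨hA1.mul hB1, B' * A', hB2.mul hA2, ?_, ?_⟩
  · rw [mul_assoc, ← mul_assoc B, hB3, one_mul, hA3]
  · rw [mul_assoc, ← mul_assoc A', hA4, one_mul, hB4]

lemma AllInt.exists_map {A : Matrix n n F} (hA : AllInt O A) :
    ∃ A0 : Matrix n n O, A = A0.map (algebraMap O F) := by
  refine ⟨Matrix.of fun i j => (hA i j).choose, ?_⟩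
  ext i j
  exact ((hA i j).choose_spec).symm

lemma IntUnit.det_unit {A : Matrix n n F} (hA : IntUnit O A) :
    ∃ u : Oˣ, algebraMap O F (u : O) = A.det := by
  obtain ⟨hA1, B, hB1, hAB, _⟩ := hA
  obtain ⟨A0, rfl⟩ := hA1.exists_map
  obtain ⟨B0, rfl⟩ := hB1.exists_map
  have h1 : A0.det * B0.det = 1 := by
    have := congrArg Matrix.det hAB
    rw [Matrix.det_mul, Matrix.det_one] at this
    apply IsFractionRing.injective O F
    rw [_root_.map_mul, _root_.map_one]
    rw [RingHom.map_det, RingHom.map_det, RingHom.mapMatrix_apply, RingHom.mapMatrix_apply]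
    exact this
  refine ⟨⟨A0.det, B0.det, h1, by rwa [mul_comm] at h1⟩, ?_⟩
  rw [RingHom.map_det, RingHom.mapMatrix_apply]

lemma IntUnit.det_ne_zero {A : Matrix n n F} (hA : IntUnit O A) : A.det ≠ 0 := by
  obtain ⟨_, B, _, hAB, _⟩ := hA
  have := congrArg Matrix.det hAB
  rw [Matrix.det_mul, Matrix.det_one] at this
  intro h; rw [h, zero_mul] at this; exact one_ne_zero this.symm

end Mat

/-! ### Valuation-theoretic helpers -/

lemma exists_dvd_all' {ι : Type*} (s : Finset ι) (hs : s.Nonempty) (a : ι → O) :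
    ∃ j0 ∈ s, ∀ j ∈ s, a j0 ∣ a j := by
  classical
  induction hs using Finset.Nonempty.cons_induction with
  | singleton j => exact ⟨j, Finset.mem_singleton_self j, by simp⟩
  | cons x s hx hs ih =>
      obtain ⟨j0, hj0, hd⟩ := ih
      rcases ValuationRing.dvd_total (a x) (a j0) with h | h
      · exact ⟨x, Finset.mem_cons_self x s, fun j hj => by
          rcases Finset.mem_cons.mp hj with rfl | hj
          · exact dvd_rfl
          · exact h.trans (hd j hj)⟩
      · exact ⟨j0, Finset.mem_cons_of_mem hj0, fun j hj => by
          rcases Finset.mem_cons.mp hj with rfl | hj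
          · exact h
          · exact hd j hj⟩

lemma exists_pivot {ι : Type*} [Fintype ι] (v : ι → F) {j1 : ι} (h1 : v j1 ≠ 0) :
    ∃ j0, v j0 ≠ 0 ∧ ∀ j, ∃ o : O, v j = algebraMap O F o * v j0 := by
  classical
  obtain ⟨b, hb⟩ := IsLocalization.exist_integer_multiples_of_finite (nonZeroDivisors O) v
  choose a ha using hb
  have hbF : algebraMap O F (b : O) ≠ 0 := by
    simpa using nonZeroDivisors.coe_ne_zero b
  have hkey : ∀ i, algebraMap O F (a i) = algebraMap O F (b : O) * v i := by
    intro i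
    have := ha i
    rwa [Algebra.smul_def] at this
  obtain ⟨j0, _, hd⟩ := exists_dvd_all' Finset.univ ⟨j1, Finset.mem_univ j1⟩ a
  have hvals : ∀ j, ∃ o : O, v j = algebraMap O F o * v j0 := by
    intro j
    obtain ⟨o, ho⟩ := hd j (Finset.mem_univ j)
    refine ⟨o, mul_left_cancel₀ hbF ?_⟩
    rw [← hkey j, ho, _root_.map_mul, hkey j0]
    ring
  refine ⟨j0, fun h0 => h1 ?_, hvals⟩
  obtain ⟨o, ho⟩ := hvals j1
  rw [ho, h0, mul_zero]

lemma exists_unit_zpow (ϖ : O) (hϖ : Irreducible ϖ) (x : F) (hx : x ≠ 0) :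
    ∃ (u : Oˣ) (l : ℤ), x = algebraMap O F (u : O) * algebraMap O F ϖ ^ l := by
  obtain ⟨a, b, hb, rfl⟩ := IsFractionRing.div_surjective (A := O) x
  have ha : a ≠ 0 := by
    intro h; apply hx; simp [h]
  have hb0 : b ≠ 0 := nonZeroDivisors.ne_zero hb
  obtain ⟨na, ua, hua⟩ := IsDiscreteValuationRing.eq_unit_mul_pow_irreducible ha hϖ
  obtain ⟨nb, ub, hub⟩ := IsDiscreteValuationRing.eq_unit_mul_pow_irreducible hb0 hϖ
  have hπ : algebraMap O F ϖ ≠ 0 := by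
    rw [Ne, IsFractionRing.to_map_eq_zero_iff]
    exact hϖ.ne_zero
  have hubF : algebraMap O F (ub : O) ≠ 0 := by
    rw [Ne, IsFractionRing.to_map_eq_zero_iff]; exact ub.ne_zero
  refine ⟨ua * ub⁻¹, (na : ℤ) - nb, ?_⟩
  have h1 : algebraMap O F a = algebraMap O F (ua : O) * algebraMap O F ϖ ^ na := by
    rw [hua, _root_.map_mul, map_pow]
  have h2 : algebraMap O F b = algebraMap O F (ub : O) * algebraMap O F ϖ ^ nb := by
    rw [hub, _root_.map_mul, map_pow]
  have h4 : algebraMap O F ((ub⁻¹ : Oˣ) : O) * algebraMap O F (ub : O) = 1 := by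
    rw [← _root_.map_mul, ← Units.val_mul, inv_mul_cancel, Units.val_one, _root_.map_one]
  have h3 : algebraMap O F ((ua * ub⁻¹ : Oˣ) : O)
      = algebraMap O F (ua : O) * algebraMap O F ((ub⁻¹ : Oˣ) : O) := by
    rw [Units.val_mul, _root_.map_mul]
  have h5 : algebraMap O F ϖ ^ nb ≠ 0 := pow_ne_zero _ hπ
  rw [h1, h2, h3, zpow_sub₀ hπ, zpow_natCast, zpow_natCast, mul_div_assoc',
    div_eq_div_iff (mul_ne_zero hubF h5) h5]
  linear_combination (-1 * algebraMap O F (ua : O) * algebraMap O F ϖ ^ na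
    * algebraMap O F ϖ ^ nb) * h4

/-! ### General matrix helpers -/

section MatHelp
variable {n : Type*} [Fintype n] [DecidableEq n]

lemma reindex_mul {p : Type*} [Fintype p] [DecidableEq p]
    (e : n ≃ p) (X Y : Matrix n n F) :
    reindex e e X * reindex e e Y = reindex e e (X * Y) := by
  simp only [reindex_apply]
  rw [Matrix.submatrix_mul_equiv]

def swapMat (F : Type*) [Field F] {n : Type*} [Fintype n] [DecidableEq n] (a b : n) :
    Matrix n n F := (1 : Matrix n n F).submatrix (Equiv.swap a b) id

lemma swapMat_mul (a b : n) (X : Matrix n n F) :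
    swapMat F a b * X = X.submatrix (Equiv.swap a b) id := by
  have h : X = X.submatrix (id : n → n) (id : n → n) := by simp
  rw [swapMat, h]
  have := Matrix.submatrix_mul_equiv (1 : Matrix n n F) X (Equiv.swap a b) (Equiv.refl n) (id)
  simpa using this

lemma swapMat_eq (a b : n) :
    (swapMat F a b) = (1 : Matrix n n F).submatrix id (Equiv.swap a b) := by
  ext i j
  simp only [swapMat, submatrix_apply, id_eq, Matrix.one_apply]
  by_cases h : Equiv.swap a b i = j
  · rw [if_pos h, if_pos]
    rw [← h, Equiv.swap_apply_self]
  · rw [if_neg h, if_neg]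
    intro hc
    exact h (by rw [hc, Equiv.swap_apply_self])

lemma mul_swapMat (a b : n) (X : Matrix n n F) :
    X * swapMat F a b = X.submatrix id (Equiv.swap a b) := by
  rw [swapMat_eq]
  conv_lhs => rw [show X = X.submatrix (id : n → n) (id : n → n) by simp]
  have := Matrix.submatrix_mul_equiv X (1 : Matrix n n F) (Equiv.refl n) (Equiv.refl n)
    (Equiv.swap a b)
  simpa using this

lemma swapMat_swapMat (a b : n) : (swapMat F a b) * swapMat F a b = 1 := by
  rw [swapMat_mul, swapMat, Matrix.submatrix_submatrix]
  have h : (Equiv.swap a b : n → n) ∘ (Equiv.swap a b : n → n) = id := by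
    funext x; simp
  rw [h]
  simp

lemma allInt_swapMat (a b : n) : AllInt O (swapMat F a b) := by
  intro i j
  simp only [swapMat, submatrix_apply, Matrix.one_apply]
  by_cases h : Equiv.swap a b i = j <;> simp [h, isInt_one, isInt_zero]

lemma intUnit_swapMat (a b : n) : IntUnit O (swapMat F a b) :=
  ⟨allInt_swapMat a b, swapMat F a b, allInt_swapMat a b, swapMat_swapMat a b,
    swapMat_swapMat a b⟩

lemma elim_mul_cancel {A : Matrix n n F} (h : A * A = 0) :
    (1 - A) * (1 + A) = 1 ∧ (1 + A) * (1 - A) = 1 := by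
  constructor
  · have h2 : (1 - A) * (1 + A) = 1 - A * A := by noncomm_ring
    rw [h2, h, sub_zero]
  · have h2 : (1 + A) * (1 - A) = 1 - A * A := by noncomm_ring
    rw [h2, h, sub_zero]

lemma intUnit_one_sub {A : Matrix n n F} (hA : AllInt O A) (h : A * A = 0) :
    IntUnit O (1 - A) := by
  obtain ⟨h1, h2⟩ := elim_mul_cancel h
  exact ⟨fun i j => (allInt_one i j).sub (hA i j),
    1 + A, fun i j => (allInt_one i j).add (hA i j), h1, h2⟩

lemma intUnit_one_add {A : Matrix n n F} (hA : AllInt O A) (h : A * A = 0) :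
    IntUnit O (1 + A) := by
  obtain ⟨h1, h2⟩ := elim_mul_cancel h
  exact ⟨fun i j => (allInt_one i j).add (hA i j),
    1 - A, fun i j => (allInt_one i j).sub (hA i j), h2, h1⟩

end MatHelp

section FinHelp

lemma finSum_symm_last {r : ℕ} :
    finSumFinEquiv.symm (Fin.last r) = Sum.inr (0 : Fin 1) := by
  rw [Equiv.symm_apply_eq]
  apply Fin.ext
  simp [Fin.last]

lemma finSum_symm_castSucc {r : ℕ} (a : Fin r) :
    finSumFinEquiv.symm (Fin.castSucc a) = Sum.inl a := by
  rw [Equiv.symm_apply_eq]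
  apply Fin.ext
  simp

lemma corner_decomp {r : ℕ} (Z : Matrix (Fin (r+1)) (Fin (r+1)) F) :
    Z = reindex finSumFinEquiv finSumFinEquiv
      (fromBlocks (Z.submatrix Fin.castSucc Fin.castSucc)
        (Matrix.of fun i (_ : Fin 1) => Z (Fin.castSucc i) (Fin.last r))
        (Matrix.of fun (_ : Fin 1) j => Z (Fin.last r) (Fin.castSucc j))
        (Matrix.of fun _ _ => Z (Fin.last r) (Fin.last r))) := by
  ext i j
  rw [reindex_apply, submatrix_apply]
  induction i using Fin.lastCases with
  | last =>
      induction j using Fin.lastCases with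
      | last => rw [finSum_symm_last]; rfl
      | cast j => rw [finSum_symm_last, finSum_symm_castSucc]; rfl
  | cast i =>
      induction j using Fin.lastCases with
      | last => rw [finSum_symm_last, finSum_symm_castSucc]; rfl
      | cast j => rw [finSum_symm_castSucc, finSum_symm_castSucc]; rfl

lemma corner_det {r : ℕ} (Z : Matrix (Fin (r+1)) (Fin (r+1)) F)
    (hrow : ∀ j : Fin r, Z (Fin.last r) (Fin.castSucc j) = 0) :
    Z.det = (Z.submatrix Fin.castSucc Fin.castSucc).det * Z (Fin.last r) (Fin.last r) := by
  conv_lhs => rw [corner_decomp Z]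
  rw [reindex_apply, Matrix.det_submatrix_equiv_self]
  have hz : (Matrix.of fun (_ : Fin 1) j => Z (Fin.last r) (Fin.castSucc j)) =
      (0 : Matrix (Fin 1) (Fin r) F) := by
    ext i j; simp [hrow j]
  rw [hz, Matrix.det_fromBlocks_zero₂₁, Matrix.det_fin_one]
  rfl

lemma intUnit_diagBlock {r s : ℕ} {A : Matrix (Fin r) (Fin r) F} {D : Matrix (Fin s) (Fin s) F}
    (hA : IntUnit O A) (hD : IntUnit O D) :
    IntUnit O (reindex finSumFinEquiv finSumFinEquiv (fromBlocks A 0 0 D)) := by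
  obtain ⟨hA1, A', hA2, hA3, hA4⟩ := hA
  obtain ⟨hD1, D', hD2, hD3, hD4⟩ := hD
  refine ⟨?_, reindex finSumFinEquiv finSumFinEquiv (fromBlocks A' 0 0 D'), ?_, ?_, ?_⟩
  · intro i j
    rw [reindex_apply, submatrix_apply]
    rcases finSumFinEquiv.symm i with a | a <;> rcases finSumFinEquiv.symm j with b | b
    · exact hA1 a b
    · exact isInt_zero O
    · exact isInt_zero O
    · exact hD1 a b
  · intro i j
    rw [reindex_apply, submatrix_apply]
    rcases finSumFinEquiv.symm i with a | a <;> rcases finSumFinEquiv.symm j with b | b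
    · exact hA2 a b
    · exact isInt_zero O
    · exact isInt_zero O
    · exact hD2 a b
  · rw [reindex_mul, fromBlocks_multiply]
    simp only [Matrix.mul_zero, Matrix.zero_mul, add_zero, zero_add, hA3, hD3,
      Matrix.fromBlocks_one, reindex_apply, Matrix.submatrix_one_equiv]
  · rw [reindex_mul, fromBlocks_multiply]
    simp only [Matrix.mul_zero, Matrix.zero_mul, add_zero, zero_add, hA4, hD4,
      Matrix.fromBlocks_one, reindex_apply, Matrix.submatrix_one_equiv]

end FinHelp

/-! ### Iwasawa decomposition: X = (upper triangular) * GL(O) -/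

lemma iwasawa : ∀ (r : ℕ) (Y : Matrix (Fin r) (Fin r) F), Y.det ≠ 0 →
    ∃ T k : Matrix (Fin r) (Fin r) F,
      (∀ i j, j < i → T i j = 0) ∧ IntUnit O k ∧ Y = T * k := by
  intro r
  induction r with
  | zero =>
      intro Y _
      exact ⟨1, 1, fun i => i.elim0, IntUnit.one (O := O), Subsingleton.elim _ _⟩
  | succ r ih =>
      intro Y hY
      have hv : ∃ j1, Y (Fin.last r) j1 ≠ 0 := by
        by_contra h
        push_neg at h
        exact hY (Matrix.det_eq_zero_of_row_eq_zero (Fin.last r) h)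
      obtain ⟨j1, hj1⟩ := hv
      obtain ⟨j0, hj0, hdiv⟩ := exists_pivot (O := O) (Y (Fin.last r)) hj1
      choose w hw using hdiv
      set A : Matrix (Fin (r+1)) (Fin (r+1)) F :=
        Matrix.of (fun i t => if i = j0 ∧ t ≠ j0 then algebraMap O F (w t) else 0) with hA
      have hAInt : AllInt O A := by
        intro i t
        by_cases h : i = j0 ∧ t ≠ j0
        · rw [hA]
          simp only [Matrix.of_apply, if_pos h]
          exact isInt_algebraMap O (w t)
        · rw [hA]
          simp only [Matrix.of_apply, if_neg h]
          exact isInt_zero O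
      have hAA : A * A = 0 := by
        ext i j
        rw [Matrix.mul_apply, Matrix.zero_apply]
        apply Finset.sum_eq_zero
        intro t _
        rcases eq_or_ne t j0 with rfl | ht
        · have h1 : A i t = 0 := by rw [hA]; simp
          rw [h1, zero_mul]
        · have h1 : A t j = 0 := by rw [hA]; simp [ht]
          rw [h1, mul_zero]
      obtain ⟨hM1, hM2⟩ := elim_mul_cancel hAA
      set k1 : Matrix (Fin (r+1)) (Fin (r+1)) F :=
        (1 - A) * swapMat F j0 (Fin.last r) with hk1def
      set k1inv : Matrix (Fin (r+1)) (Fin (r+1)) F :=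
        swapMat F j0 (Fin.last r) * (1 + A) with hk1invdef
      have hk1a : k1 * k1inv = 1 := by
        rw [hk1def, hk1invdef, mul_assoc, ← mul_assoc (swapMat F j0 (Fin.last r)),
          swapMat_swapMat, one_mul, hM1]
      have hk1IU : IntUnit O k1 :=
        (intUnit_one_sub hAInt hAA).mul (intUnit_swapMat j0 (Fin.last r))
      have hk1invIU : IntUnit O k1inv :=
        (intUnit_swapMat j0 (Fin.last r)).mul (intUnit_one_add hAInt hAA)
      set Z := Y * k1 with hZdef
      have hYZ : Y = Z * k1inv := by rw [hZdef, mul_assoc, hk1a, mul_one]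
      have h1 : ∀ u, (Y * (1 - A)) (Fin.last r) u
          = if u = j0 then Y (Fin.last r) j0 else 0 := by
        intro u
        by_cases hu : u = j0
        · subst hu
          have hcol : ∀ s, (1 - A) s u = if s = u then (1:F) else 0 := by
            intro s
            rw [Matrix.sub_apply, Matrix.one_apply, hA]
            simp
          rw [Matrix.mul_apply, Finset.sum_congr rfl (fun s _ => by rw [hcol s])]
          simp
        · have hcol : ∀ s, (1 - A) s u
              = (if s = u then (1:F) else 0) - (if s = j0 then algebraMap O F (w u) else 0) := by
            intro s
            rw [Matrix.sub_apply, Matrix.one_apply, hA]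
            simp [hu]
          rw [Matrix.mul_apply, Finset.sum_congr rfl (fun s _ => by rw [hcol s])]
          simp only [mul_sub, Finset.sum_sub_distrib, mul_ite, mul_one, mul_zero]
          rw [Finset.sum_ite_eq' Finset.univ u (Y (Fin.last r)),
            Finset.sum_ite_eq' Finset.univ j0
              (fun x => Y (Fin.last r) x * algebraMap O F (w u))]
          simp only [Finset.mem_univ, if_true, if_neg hu]
          rw [hw u]
          ring
      have hZlast : ∀ t, Z (Fin.last r) t
          = if t = Fin.last r then Y (Fin.last r) j0 else 0 := by
        intro t
        have h2 : Z (Fin.last r) t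
            = (Y * (1 - A)) (Fin.last r) (Equiv.swap j0 (Fin.last r) t) := by
          rw [hZdef, hk1def, ← mul_assoc, mul_swapMat]
          rfl
        rw [h2, h1]
        by_cases ht : t = Fin.last r
        · subst ht
          simp [Equiv.swap_apply_right]
        · rw [if_neg ?_, if_neg ht]
          intro hc
          exact ht ((Equiv.swap j0 (Fin.last r)).injective
            (by rw [hc, Equiv.swap_apply_right]))
      have hrow0 : ∀ j : Fin r, Z (Fin.last r) (Fin.castSucc j) = 0 := by
        intro j
        rw [hZlast, if_neg (Fin.castSucc_lt_last j).ne]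
      have hZll : Z (Fin.last r) (Fin.last r) = Y (Fin.last r) j0 := by
        rw [hZlast, if_pos rfl]
      have hZdet : Z.det ≠ 0 := by
        rw [hZdef, Matrix.det_mul]
        exact mul_ne_zero hY hk1IU.det_ne_zero
      have hdetZ' : (Z.submatrix Fin.castSucc Fin.castSucc).det ≠ 0 := by
        have hc := corner_det Z hrow0
        rw [hc, hZll] at hZdet
        exact fun h => hZdet (by rw [h, zero_mul])
      obtain ⟨T', k', hT', hk', hZ'⟩ := ih (Z.submatrix Fin.castSucc Fin.castSucc) hdetZ'
      set zc : Matrix (Fin r) (Fin 1) F :=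
        Matrix.of fun i _ => Z (Fin.castSucc i) (Fin.last r) with hzc
      set dd : Matrix (Fin 1) (Fin 1) F := Matrix.of fun _ _ => Z (Fin.last r) (Fin.last r)
        with hdd
      set T : Matrix (Fin (r+1)) (Fin (r+1)) F :=
        reindex finSumFinEquiv finSumFinEquiv (fromBlocks T' zc 0 dd) with hT
      set K2 : Matrix (Fin (r+1)) (Fin (r+1)) F :=
        reindex finSumFinEquiv finSumFinEquiv
          (fromBlocks k' 0 0 (1 : Matrix (Fin 1) (Fin 1) F)) with hK2
      have hZT : Z = T * K2 := by
        rw [hT, hK2, reindex_mul, fromBlocks_multiply]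
        simp only [Matrix.mul_zero, Matrix.zero_mul, Matrix.mul_one, add_zero, zero_add]
        have hz0 : (Matrix.of fun (_ : Fin 1) j => Z (Fin.last r) (Fin.castSucc j))
            = (0 : Matrix (Fin 1) (Fin r) F) := by
          ext i j
          simp [hrow0 j]
        conv_lhs => rw [corner_decomp Z, hz0]
        rw [← hZ']
      refine ⟨T, K2 * k1inv, ?_, ?_, ?_⟩
      · intro i j hij
        have he : T i j = (fromBlocks T' zc 0 dd) (finSumFinEquiv.symm i) (finSumFinEquiv.symm j) := by
          rw [hT, reindex_apply, submatrix_apply]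
        rw [he]
        induction j using Fin.lastCases with
        | last => exact absurd hij (Fin.le_last i).not_gt
        | cast j =>
            induction i using Fin.lastCases with
            | last =>
                rw [finSum_symm_last, finSum_symm_castSucc]
                simp [Matrix.fromBlocks]
            | cast i =>
                rw [finSum_symm_castSucc, finSum_symm_castSucc]
                exact hT' i j (by exact_mod_cast Fin.castSucc_lt_castSucc_iff.mp hij)
      · exact (intUnit_diagBlock hk' (IntUnit.one (O := O))).mul hk1invIU
      · rw [hYZ, hZT, mul_assoc]

/-! ### Smith normal form over the DVR -/

lemma intUnit_scalar1 (u : Oˣ) :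
    IntUnit O (Matrix.of fun (_ _ : Fin 1) => algebraMap O F (u : O)) := by
  have key : ∀ (a b : O), a * b = 1 →
      (Matrix.of fun (_ _ : Fin 1) => algebraMap O F a)
        * (Matrix.of fun (_ _ : Fin 1) => algebraMap O F b) = 1 := by
    intro a b hab
    ext i j
    rw [Matrix.mul_apply]
    have hij : i = j := Subsingleton.elim i j
    subst hij
    rw [Finset.sum_eq_single i (fun t _ ht => absurd (Subsingleton.elim t i) ht)
      (fun h => absurd (Finset.mem_univ i) h)]
    simp only [Matrix.of_apply, Matrix.one_apply_eq, ← _root_.map_mul, hab, _root_.map_one]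
  refine ⟨fun i j => isInt_algebraMap O _,
    Matrix.of fun _ _ => algebraMap O F ((u⁻¹ : Oˣ) : O),
    fun i j => isInt_algebraMap O _, key _ _ ?_, key _ _ ?_⟩
  · rw [← Units.val_mul, mul_inv_cancel, Units.val_one]
  · rw [← Units.val_mul, inv_mul_cancel, Units.val_one]

lemma reindex_diag_snoc {r : ℕ} (v : Fin r → F) (c : F) :
    reindex finSumFinEquiv finSumFinEquiv
      (fromBlocks (Matrix.diagonal v) 0 0 (Matrix.of fun (_ _ : Fin 1) => c))
    = Matrix.diagonal (Fin.snoc v c) := by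
  ext i j
  rw [reindex_apply, submatrix_apply]
  induction i using Fin.lastCases with
  | last =>
      induction j using Fin.lastCases with
      | last =>
          rw [finSum_symm_last]
          simp [Matrix.fromBlocks, Matrix.diagonal_apply, Fin.snoc_last]
      | cast j =>
          rw [finSum_symm_last, finSum_symm_castSucc]
          simp [Matrix.fromBlocks, Matrix.diagonal_apply, (Fin.castSucc_lt_last j).ne']
  | cast i =>
      induction j using Fin.lastCases with
      | last =>
          rw [finSum_symm_last, finSum_symm_castSucc]
          simp [Matrix.fromBlocks, Matrix.diagonal_apply, (Fin.castSucc_lt_last i).ne]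
      | cast j =>
          rw [finSum_symm_castSucc, finSum_symm_castSucc]
          by_cases hij : i = j
          · subst hij
            simp [Matrix.fromBlocks, Matrix.diagonal_apply, Fin.snoc_castSucc]
          · have : Fin.castSucc i ≠ Fin.castSucc j := fun h => hij (Fin.castSucc_inj.mp h)
            simp [Matrix.fromBlocks, Matrix.diagonal_apply, hij, this]

lemma snoc_pow {r : ℕ} (f' : Fin r → ℤ) (ld : ℤ) (x : F) :
    (Fin.snoc (fun i => x ^ f' i) (x ^ ld) : Fin (r+1) → F)
      = fun i => x ^ ((Fin.snoc f' ld : Fin (r+1) → ℤ) i) := by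
  funext i
  induction i using Fin.lastCases with
  | last => simp
  | cast i => simp

lemma smith (ϖ : O) (hϖ : Irreducible ϖ) :
    ∀ (r : ℕ) (H : Matrix (Fin r) (Fin r) F), H.det ≠ 0 →
    ∃ (c1 c2 : Matrix (Fin r) (Fin r) F) (f : Fin r → ℤ),
      IntUnit O c1 ∧ IntUnit O c2 ∧
      H = c1 * Matrix.diagonal (fun i => algebraMap O F ϖ ^ f i) * c2 := by
  intro r
  induction r with
  | zero =>
      intro H _
      exact ⟨1, 1, fun _ => 0, IntUnit.one (O := O), IntUnit.one (O := O),
        Subsingleton.elim _ _⟩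
  | succ r ih =>
      intro H hH
      have hne : ∃ q : Fin (r+1) × Fin (r+1), H q.1 q.2 ≠ 0 := by
        by_contra h
        push_neg at h
        apply hH
        have hz : H = 0 := by ext i j; exact h (i, j)
        rw [hz]
        exact Matrix.det_zero
      obtain ⟨q1, hq1⟩ := hne
      obtain ⟨⟨i0, j0⟩, hq0, hdiv⟩ :=
        exists_pivot (O := O) (fun q : Fin (r+1) × Fin (r+1) => H q.1 q.2) hq1
      set σ := Equiv.swap i0 (Fin.last r) with hσ
      set ρ := Equiv.swap j0 (Fin.last r) with hρ
      set d := H i0 j0 with hd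
      have hd0 : d ≠ 0 := hq0
      set H1 := H.submatrix σ ρ with hH1
      have hdiv1 : ∀ i j, ∃ o : O, H1 i j = algebraMap O F o * d := fun i j => hdiv (σ i, ρ j)
      choose w hw using hdiv1
      have hH1c : H1 (Fin.last r) (Fin.last r) = d := by
        rw [hH1, submatrix_apply, hσ, hρ, Equiv.swap_apply_right, Equiv.swap_apply_right]
      have hswapL : swapMat F i0 (Fin.last r) * H * swapMat F j0 (Fin.last r) = H1 := by
        rw [mul_swapMat, swapMat_mul, Matrix.submatrix_submatrix]
        rw [hH1, hσ, hρ]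
        congr 1
      have hHrec : H = swapMat F i0 (Fin.last r) * H1 * swapMat F j0 (Fin.last r) := by
        rw [← hswapL]
        rw [show swapMat F i0 (Fin.last r) * (swapMat F i0 (Fin.last r) * H
            * swapMat F j0 (Fin.last r)) * swapMat F j0 (Fin.last r)
          = (swapMat F i0 (Fin.last r) * swapMat F i0 (Fin.last r)) * H
            * (swapMat F j0 (Fin.last r) * swapMat F j0 (Fin.last r)) by noncomm_ring]
        rw [swapMat_swapMat, swapMat_swapMat, one_mul, mul_one]
      -- row elimination matrix
      set AL : Matrix (Fin (r+1)) (Fin (r+1)) F :=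
        Matrix.of (fun i t => if t = Fin.last r ∧ i ≠ Fin.last r
          then algebraMap O F (w i (Fin.last r)) else 0) with hALdef
      have hALInt : AllInt O AL := by
        intro i t
        by_cases h : t = Fin.last r ∧ i ≠ Fin.last r
        · rw [hALdef]; simp only [Matrix.of_apply, if_pos h]; exact isInt_algebraMap O _
        · rw [hALdef]; simp only [Matrix.of_apply, if_neg h]; exact isInt_zero O
      have hALAL : AL * AL = 0 := by
        ext i j
        rw [Matrix.mul_apply, Matrix.zero_apply]
        apply Finset.sum_eq_zero
        intro t _
        rcases eq_or_ne t (Fin.last r) with ht | ht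
        · have h1 : AL t j = 0 := by rw [hALdef]; simp [ht]
          rw [h1, mul_zero]
        · have h1 : AL i t = 0 := by rw [hALdef]; simp [ht]
          rw [h1, zero_mul]
      -- column elimination matrix
      set BR : Matrix (Fin (r+1)) (Fin (r+1)) F :=
        Matrix.of (fun t j => if t = Fin.last r ∧ j ≠ Fin.last r
          then algebraMap O F (w (Fin.last r) j) else 0) with hBRdef
      have hBRInt : AllInt O BR := by
        intro t j
        by_cases h : t = Fin.last r ∧ j ≠ Fin.last r
        · rw [hBRdef]; simp only [Matrix.of_apply, if_pos h]; exact isInt_algebraMap O _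
        · rw [hBRdef]; simp only [Matrix.of_apply, if_neg h]; exact isInt_zero O
      have hBRBR : BR * BR = 0 := by
        ext i j
        rw [Matrix.mul_apply, Matrix.zero_apply]
        apply Finset.sum_eq_zero
        intro t _
        rcases eq_or_ne t (Fin.last r) with ht | ht
        · have h1 : BR i t = 0 := by rw [hBRdef]; simp [ht]
          rw [h1, zero_mul]
        · have h1 : BR t j = 0 := by rw [hBRdef]; simp [ht]
          rw [h1, mul_zero]
      obtain ⟨hAL1, hAL2⟩ := elim_mul_cancel hALAL
      obtain ⟨hBR1, hBR2⟩ := elim_mul_cancel hBRBR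
      set LH := (1 - AL) * H1 with hLHdef
      have hLH : ∀ i j, LH i j = H1 i j
          - (if i ≠ Fin.last r then algebraMap O F (w i (Fin.last r)) * H1 (Fin.last r) j
            else 0) := by
        intro i j
        by_cases hi : i = Fin.last r
        · subst hi
          have hcol : ∀ t, (1 - AL) (Fin.last r) t = if Fin.last r = t then (1:F) else 0 := by
            intro t
            rw [Matrix.sub_apply, Matrix.one_apply, hALdef]
            simp
          rw [hLHdef, Matrix.mul_apply, Finset.sum_congr rfl (fun t _ => by rw [hcol t])]
          simp
        · have hcol : ∀ t, (1 - AL) i t = (if i = t then (1:F) else 0)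
              - (if t = Fin.last r then algebraMap O F (w i (Fin.last r)) else 0) := by
            intro t
            rw [Matrix.sub_apply, Matrix.one_apply, hALdef]
            simp [hi]
          rw [hLHdef, Matrix.mul_apply, Finset.sum_congr rfl (fun t _ => by rw [hcol t])]
          simp only [sub_mul, Finset.sum_sub_distrib, ite_mul, one_mul, zero_mul]
          rw [Finset.sum_ite_eq Finset.univ i (fun t => H1 t j),
            Finset.sum_ite_eq' Finset.univ (Fin.last r)
              (fun t => algebraMap O F (w i (Fin.last r)) * H1 t j)]
          simp [hi]
      set G := LH * (1 - BR) with hGdef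
      have hG : ∀ i j, G i j = LH i j
          - (if j ≠ Fin.last r then LH i (Fin.last r) * algebraMap O F (w (Fin.last r) j)
            else 0) := by
        intro i j
        by_cases hj : j = Fin.last r
        · subst hj
          have hcol : ∀ t, (1 - BR) t (Fin.last r) = if t = Fin.last r then (1:F) else 0 := by
            intro t
            rw [Matrix.sub_apply, Matrix.one_apply, hBRdef]
            simp
          rw [hGdef, Matrix.mul_apply, Finset.sum_congr rfl (fun t _ => by rw [hcol t])]
          simp
        · have hcol : ∀ t, (1 - BR) t j = (if t = j then (1:F) else 0)
              - (if t = Fin.last r then algebraMap O F (w (Fin.last r) j) else 0) := by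
            intro t
            rw [Matrix.sub_apply, Matrix.one_apply, hBRdef]
            simp [hj]
          rw [hGdef, Matrix.mul_apply, Finset.sum_congr rfl (fun t _ => by rw [hcol t])]
          simp only [mul_sub, Finset.sum_sub_distrib, mul_ite, mul_one, mul_zero]
          rw [Finset.sum_ite_eq' Finset.univ j (fun t => LH i t),
            Finset.sum_ite_eq' Finset.univ (Fin.last r)
              (fun t => LH i t * algebraMap O F (w (Fin.last r) j))]
          simp [hj]
      have hLHlastrow : ∀ j, LH (Fin.last r) j = H1 (Fin.last r) j := by
        intro j
        rw [hLH]
        simp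
      have hLHcol : ∀ i, i ≠ Fin.last r → LH i (Fin.last r) = 0 := by
        intro i hi
        rw [hLH, if_pos hi, hw i (Fin.last r), hH1c]
        exact sub_self _
      have hGcol : ∀ i, G i (Fin.last r) = if i = Fin.last r then d else 0 := by
        intro i
        rw [hG]
        simp only [ne_eq, not_true_eq_false, if_false, sub_zero]
        by_cases hi : i = Fin.last r
        · subst hi
          rw [hLHlastrow, hH1c]
          simp
        · rw [if_neg hi]
          exact hLHcol i hi
      have hGrow : ∀ j, G (Fin.last r) j = if j = Fin.last r then d else 0 := by
        intro j
        rw [hG]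
        by_cases hj : j = Fin.last r
        · subst hj
          simp only [ne_eq, not_true_eq_false, if_false, sub_zero, if_pos rfl]
          rw [hLHlastrow, hH1c]
          simp
        · rw [if_neg hj, if_pos hj, hLHlastrow, hLHlastrow, hH1c, hw (Fin.last r) j]
          ring
      -- determinant bookkeeping
      have hdetH1 : H1.det ≠ 0 := by
        rw [← hswapL, Matrix.det_mul, Matrix.det_mul]
        exact mul_ne_zero (mul_ne_zero (intUnit_swapMat (O := O) i0 (Fin.last r)).det_ne_zero hH)
          (intUnit_swapMat (O := O) j0 (Fin.last r)).det_ne_zero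
      have hdetG : G.det ≠ 0 := by
        rw [hGdef, hLHdef, Matrix.det_mul, Matrix.det_mul]
        exact mul_ne_zero (mul_ne_zero (intUnit_one_sub hALInt hALAL).det_ne_zero hdetH1)
          (intUnit_one_sub hBRInt hBRBR).det_ne_zero
      have hGrow0 : ∀ j : Fin r, G (Fin.last r) (Fin.castSucc j) = 0 := by
        intro j
        rw [hGrow, if_neg (Fin.castSucc_lt_last j).ne]
      have hGll : G (Fin.last r) (Fin.last r) = d := by
        rw [hGrow, if_pos rfl]
      have hdetG' : (G.submatrix Fin.castSucc Fin.castSucc).det ≠ 0 := by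
        have hc := corner_det G hGrow0
        rw [hc, hGll] at hdetG
        exact fun h => hdetG (by rw [h, zero_mul])
      obtain ⟨c1', c2', f', hc1', hc2', hG'⟩ := ih (G.submatrix Fin.castSucc Fin.castSucc) hdetG'
      obtain ⟨u, ld, hu⟩ := exists_unit_zpow ϖ hϖ d hd0
      -- block decomposition of G
      have hGblock : G = reindex finSumFinEquiv finSumFinEquiv
          (fromBlocks (G.submatrix Fin.castSucc Fin.castSucc) 0 0
            (Matrix.of fun (_ _ : Fin 1) => d)) := by
        have e1 : (Matrix.of fun i (_ : Fin 1) => G (Fin.castSucc i) (Fin.last r))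
            = (0 : Matrix (Fin r) (Fin 1) F) := by
          ext i j
          simp [hGcol (Fin.castSucc i), (Fin.castSucc_lt_last i).ne]
        have e2 : (Matrix.of fun (_ : Fin 1) j => G (Fin.last r) (Fin.castSucc j))
            = (0 : Matrix (Fin 1) (Fin r) F) := by
          ext i j
          simp [hGrow0 j]
        have e3 : (Matrix.of fun (_ _ : Fin 1) => G (Fin.last r) (Fin.last r))
            = (Matrix.of fun (_ _ : Fin 1) => d) := by
          ext i j
          simp [hGll]
        conv_lhs => rw [corner_decomp G, e1, e2, e3]
      have hG1 : H1 = (1 + AL) * G * (1 + BR) := by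
        rw [hGdef, hLHdef]
        rw [show (1 + AL) * ((1 - AL) * H1 * (1 - BR)) * (1 + BR)
          = ((1 + AL) * (1 - AL)) * H1 * ((1 - BR) * (1 + BR)) by noncomm_ring]
        rw [hAL2, hBR1, one_mul, mul_one]
      -- assemble
      refine ⟨swapMat F i0 (Fin.last r) * (1 + AL)
          * reindex finSumFinEquiv finSumFinEquiv
            (fromBlocks c1' 0 0 (Matrix.of fun (_ _ : Fin 1) => algebraMap O F (u : O))),
        reindex finSumFinEquiv finSumFinEquiv (fromBlocks c2' 0 0 1) * (1 + BR)
          * swapMat F j0 (Fin.last r),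
        Fin.snoc f' ld, ?_, ?_, ?_⟩
      · exact ((intUnit_swapMat i0 (Fin.last r)).mul (intUnit_one_add hALInt hALAL)).mul
          (intUnit_diagBlock hc1' (intUnit_scalar1 u))
      · exact ((intUnit_diagBlock hc2' (IntUnit.one (O := O))).mul
          (intUnit_one_add hBRInt hBRBR)).mul (intUnit_swapMat j0 (Fin.last r))
      · rw [← snoc_pow]
        rw [← reindex_diag_snoc]
        have hmid : reindex finSumFinEquiv finSumFinEquiv
              (fromBlocks c1' 0 0 (Matrix.of fun (_ _ : Fin 1) => algebraMap O F (u : O)))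
            * reindex finSumFinEquiv finSumFinEquiv
              (fromBlocks (Matrix.diagonal fun i => algebraMap O F ϖ ^ f' i) 0 0
                (Matrix.of fun (_ _ : Fin 1) => algebraMap O F ϖ ^ ld))
            * reindex finSumFinEquiv finSumFinEquiv (fromBlocks c2' 0 0 1) = G := by
          rw [reindex_mul, reindex_mul, fromBlocks_multiply, fromBlocks_multiply]
          simp only [Matrix.mul_zero, Matrix.zero_mul, Matrix.mul_one, add_zero, zero_add]
          rw [hGblock, ← hG']
          congr 1
          rw [Matrix.fromBlocks_inj]
          refine ⟨rfl, rfl, rfl, ?_⟩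
          ext i j
          rw [Matrix.mul_apply]
          rw [Finset.sum_eq_single i (fun t _ ht => absurd (Subsingleton.elim t i) ht)
            (fun h => absurd (Finset.mem_univ i) h)]
          simp [hu]
        conv_lhs => rw [hHrec, hG1, ← hmid]
        noncomm_ring

/-! ### Helpers for the main assembly -/

lemma eSplit {a b : ℕ} (j : Fin (a + b)) :
    (∃ x : Fin a, j = finSumFinEquiv (Sum.inl x)) ∨
    (∃ x : Fin b, j = finSumFinEquiv (Sum.inr x)) := by
  rcases h : finSumFinEquiv.symm j with x | x
  · left; exact ⟨x, by rw [← h, Equiv.apply_symm_apply]⟩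
  · right; exact ⟨x, by rw [← h, Equiv.apply_symm_apply]⟩

lemma pset_mul {N : ℕ} {x y : Matrix (Fin N) (Fin N) F}
    (hx : x ∈ Pset F N) (hy : y ∈ Pset F N) : x * y ∈ Pset F N := by
  obtain ⟨hx1, hx2⟩ := hx
  obtain ⟨hy1, hy2⟩ := hy
  refine ⟨by rw [Matrix.det_mul]; exact hx1.mul hy1, ?_⟩
  intro i j hi
  rw [Matrix.mul_apply]
  rw [Finset.sum_eq_single i ?_ (fun h => absurd (Finset.mem_univ i) h)]
  · rw [hx2 i i hi, if_pos hi, one_mul]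
    exact hy2 i j hi
  · intro t _ ht
    rw [hx2 i t hi, if_neg, zero_mul]
    intro hc
    exact ht (Fin.ext (hc.trans hi.symm))

lemma poset_mul {N : ℕ} {x y : Matrix (Fin N) (Fin N) F}
    (hx : x ∈ POset O F N) (hy : y ∈ POset O F N) : x * y ∈ POset O F N := by
  obtain ⟨hx1, hx2, ux, hux⟩ := hx
  obtain ⟨hy1, hy2, uy, huy⟩ := hy
  refine ⟨pset_mul hx1 hy1, AllInt.mul hx2 hy2, ux * uy, ?_⟩
  rw [Matrix.det_mul, ← hux, ← huy, Units.val_mul, _root_.map_mul]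

lemma shalika_mul {M : ℕ} (a b a' b' : Matrix (Fin M) (Fin M) F) :
    shalikaMat a b * shalikaMat a' b' = shalikaMat (a * a') (a * b' + b * a') := by
  rw [shalikaMat, shalikaMat, shalikaMat, reindex_mul, fromBlocks_multiply]
  simp only [Matrix.mul_zero, Matrix.zero_mul, add_zero, zero_add]

lemma diagEmbed_mul_blocks {M : ℕ} (a b g : Matrix (Fin M) (Fin M) F) :
    shalikaMat a b * diagEmbed g
      = reindex finSumFinEquiv finSumFinEquiv (fromBlocks (a * g) b 0 a) := by
  rw [shalikaMat, diagEmbed, reindex_mul, fromBlocks_multiply]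
  simp only [Matrix.mul_zero, Matrix.zero_mul, Matrix.mul_one, add_zero, zero_add]

lemma diag1_lastrow {q : ℕ} (c : Matrix (Fin q) (Fin q) F) (j : Fin (q + 1)) :
    (reindex finSumFinEquiv finSumFinEquiv
      (fromBlocks c 0 0 (1 : Matrix (Fin 1) (Fin 1) F))) (Fin.last q) j
    = if j = Fin.last q then 1 else 0 := by
  rw [reindex_apply, submatrix_apply, finSum_symm_last]
  induction j using Fin.lastCases with
  | last =>
      rw [finSum_symm_last, if_pos rfl]
      simp [Matrix.fromBlocks]
  | cast j =>
      rw [finSum_symm_castSucc, if_neg (Fin.castSucc_lt_last j).ne]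
      simp [Matrix.fromBlocks]

lemma coe_last_iff {N : ℕ} (i : Fin (N + 1)) : ((i : ℕ) = N) ↔ i = Fin.last N := by
  constructor
  · intro h; exact Fin.ext (by rw [h, Fin.val_last])
  · intro h; rw [h, Fin.val_last]

lemma blocks_pset_row {M' : ℕ}
    (W : Matrix (Fin (M' + 1) ⊕ Fin (M' + 1)) (Fin (M' + 1) ⊕ Fin (M' + 1)) F)
    (h21 : ∀ j, W (Sum.inr (Fin.last M')) (Sum.inl j) = 0)
    (h22 : ∀ j, W (Sum.inr (Fin.last M')) (Sum.inr j) = if j = Fin.last M' then 1 else 0) :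
    ∀ i j : Fin ((M' + 1) + (M' + 1)), (i : ℕ) = (M' + 1) + (M' + 1) - 1 →
      (reindex finSumFinEquiv finSumFinEquiv W) i j
        = if (j : ℕ) = (M' + 1) + (M' + 1) - 1 then 1 else 0 := by
  intro i j hi
  have hie : i = finSumFinEquiv (Sum.inr (Fin.last M')) := by
    apply Fin.ext
    rw [hi]
    simp [Fin.last]
    omega
  rw [reindex_apply, submatrix_apply, hie, Equiv.symm_apply_apply]
  rcases eSplit j with ⟨b, rfl⟩ | ⟨b, rfl⟩
  · rw [Equiv.symm_apply_apply, h21 b, if_neg]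
    simp only [finSumFinEquiv_apply_left, Fin.coe_castAdd]
    have : (b : ℕ) < M' + 1 := b.isLt
    omega
  · rw [Equiv.symm_apply_apply, h22 b]
    simp only [finSumFinEquiv_apply_right, Fin.coe_natAdd]
    by_cases hb : b = Fin.last M'
    · rw [if_pos hb]; refine (if_pos ?_).symm
      rw [hb, Fin.val_last]
      omega
    · rw [if_neg hb]; refine (if_neg ?_).symm
      intro hc
      apply hb
      apply Fin.ext
      rw [Fin.val_last]
      omega

lemma matmul_col {q : ℕ} (C : Matrix (Fin q) (Fin q) F) (x : Fin q → F) :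
    C * (Matrix.of fun i (_ : Fin 1) => x i)
      = Matrix.of fun i (_ : Fin 1) => (C *ᵥ x) i := by
  ext i j
  rw [Matrix.mul_apply]
  rfl

lemma col_mul_scalar {q : ℕ} (x : Fin q → F) (c : F) :
    (Matrix.of fun i (_ : Fin 1) => x i) * (Matrix.of fun (_ _ : Fin 1) => c)
      = Matrix.of fun i (_ : Fin 1) => x i * c := by
  ext i j
  rw [Matrix.mul_apply]
  rw [Finset.sum_eq_single j (fun t _ ht => absurd (Subsingleton.elim t j) ht)
    (fun h => absurd (Finset.mem_univ j) h)]
  rfl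

lemma scalar_mul_scalar (c d : F) :
    (Matrix.of fun (_ _ : Fin 1) => c) * (Matrix.of fun (_ _ : Fin 1) => d)
      = Matrix.of fun (_ _ : Fin 1) => c * d := by
  ext i j
  rw [Matrix.mul_apply]
  rw [Finset.sum_eq_single j (fun t _ ht => absurd (Subsingleton.elim t j) ht)
    (fun h => absurd (Finset.mem_univ j) h)]
  rfl

lemma uMat_blocks {q : ℕ} (β : Fin q → F) :
    uMat β = reindex finSumFinEquiv finSumFinEquiv
      (fromBlocks (1 : Matrix (Fin q) (Fin q) F)
        (Matrix.of fun i (_ : Fin 1) => β i) 0 (1 : Matrix (Fin 1) (Fin 1) F)) := by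
  ext i j
  rw [reindex_apply, submatrix_apply, uMat]
  simp only [Matrix.of_apply]
  induction i using Fin.lastCases with
  | last =>
      induction j using Fin.lastCases with
      | last =>
          rw [finSum_symm_last, if_pos rfl]
          simp [Matrix.fromBlocks]
      | cast j =>
          rw [finSum_symm_last, finSum_symm_castSucc,
            if_neg (Fin.castSucc_lt_last j).ne',
            if_neg (fun h => (Fin.castSucc_lt_last j).ne (Fin.ext (by simpa using h)))]
          simp [Matrix.fromBlocks]
  | cast i =>
      induction j using Fin.lastCases with
      | last =>
          rw [finSum_symm_last, finSum_symm_castSucc,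
            if_neg (Fin.castSucc_lt_last i).ne,
            if_pos (Fin.val_last q), dif_pos (by simpa using i.isLt)]
          have heta : (⟨((Fin.castSucc i : Fin (q+1)) : ℕ), by simpa using i.isLt⟩ : Fin q)
              = i := by
            apply Fin.ext
            simp
          rw [heta]
          simp [Matrix.fromBlocks]
      | cast j =>
          rw [finSum_symm_castSucc, finSum_symm_castSucc]
          by_cases hij : i = j
          · subst hij
            rw [if_pos rfl]
            simp [Matrix.fromBlocks, Matrix.one_apply]
          · rw [if_neg (fun h => hij (Fin.castSucc_inj.mp h)),
              if_neg (fun h => (Fin.castSucc_lt_last j).ne (Fin.ext (by simpa using h)))]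
            simp [Matrix.fromBlocks, Matrix.one_apply, hij]

lemma mulVec_const_mul {q : ℕ} (C : Matrix (Fin q) (Fin q) F) (a : F) (y : Fin q → F)
    (i : Fin q) : (C *ᵥ fun t => a * y t) i = a * (C *ᵥ y) i := by
  simp only [Matrix.mulVec, dotProduct]
  rw [Finset.mul_sum]
  apply Finset.sum_congr rfl
  intro t _
  ring

/-- Decomposition of an invertible upper-triangular matrix as
`(P(O)-elt) * u(β) * diag(ϖ-powers) * GL(O)-elt`. -/
lemma triangular_decomp (ϖ : O) (hϖ : Irreducible ϖ) {q : ℕ}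
    (h : Matrix (Fin (q+1)) (Fin (q+1)) F)
    (htri : ∀ i j, j < i → h i j = 0) (hdet : h.det ≠ 0) :
    ∃ (a2 a2i cR : Matrix (Fin (q+1)) (Fin (q+1)) F) (β : Fin q → F) (f : Fin q → ℤ) (l : ℤ),
      AllInt O a2 ∧ AllInt O a2i ∧ a2 * a2i = 1 ∧ a2i * a2 = 1 ∧
      (∀ j, a2 (Fin.last q) j = if j = Fin.last q then 1 else 0) ∧
      (∀ j, a2i (Fin.last q) j = if j = Fin.last q then 1 else 0) ∧
      IntUnit O cR ∧
      h = a2 * (uMat β * Matrix.diagonal (Fin.snoc (fun i => algebraMap O F ϖ ^ f i)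
        (algebraMap O F ϖ ^ l))) * cR := by
  have hπ : algebraMap O F ϖ ≠ 0 := by
    rw [Ne, IsFractionRing.to_map_eq_zero_iff]
    exact hϖ.ne_zero
  have hrow0 : ∀ j : Fin q, h (Fin.last q) (Fin.castSucc j) = 0 :=
    fun j => htri _ _ (Fin.castSucc_lt_last j)
  have hdet2 : h.det = (h.submatrix Fin.castSucc Fin.castSucc).det
      * h (Fin.last q) (Fin.last q) := corner_det h hrow0
  have hHmdet : (h.submatrix Fin.castSucc Fin.castSucc).det ≠ 0 :=
    fun hz => hdet (by rw [hdet2, hz, zero_mul])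
  have ht' : h (Fin.last q) (Fin.last q) ≠ 0 :=
    fun hz => hdet (by rw [hdet2, hz, mul_zero])
  obtain ⟨c1, c2, f, hc1, hc2, hsm⟩ := smith ϖ hϖ q (h.submatrix Fin.castSucc Fin.castSucc) hHmdet
  obtain ⟨u, l, hu⟩ := exists_unit_zpow ϖ hϖ _ ht'
  obtain ⟨hc1A, c1i, hc1iA, hc11, hc12⟩ := hc1
  have hπl : algebraMap O F ϖ ^ l ≠ 0 := zpow_ne_zero _ hπ
  set v : Fin q → F := fun i => h (Fin.castSucc i) (Fin.last q) with hv
  set β : Fin q → F := fun i =>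
    algebraMap O F ((u⁻¹ : Oˣ) : O) * (algebraMap O F ϖ ^ (-l) * (c1i *ᵥ v) i) with hβ
  have huu : algebraMap O F ((u⁻¹ : Oˣ) : O) * algebraMap O F (u : O) = 1 := by
    rw [← _root_.map_mul, ← Units.val_mul, inv_mul_cancel, Units.val_one, _root_.map_one]
  refine ⟨reindex finSumFinEquiv finSumFinEquiv (fromBlocks c1 0 0 1),
    reindex finSumFinEquiv finSumFinEquiv (fromBlocks c1i 0 0 1),
    reindex finSumFinEquiv finSumFinEquiv
      (fromBlocks c2 0 0 (Matrix.of fun (_ _ : Fin 1) => algebraMap O F (u : O))),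
    β, f, l, ?_, ?_, ?_, ?_, ?_, ?_, ?_, ?_⟩
  · intro i j
    rw [reindex_apply, submatrix_apply]
    rcases finSumFinEquiv.symm i with a | a <;> rcases finSumFinEquiv.symm j with b | b
    · exact hc1A a b
    · exact isInt_zero O
    · exact isInt_zero O
    · exact allInt_one a b
  · intro i j
    rw [reindex_apply, submatrix_apply]
    rcases finSumFinEquiv.symm i with a | a <;> rcases finSumFinEquiv.symm j with b | b
    · exact hc1iA a b
    · exact isInt_zero O
    · exact isInt_zero O
    · exact allInt_one a b
  · rw [reindex_mul, fromBlocks_multiply]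
    simp only [Matrix.mul_zero, Matrix.zero_mul, add_zero, zero_add, hc11, Matrix.mul_one,
      Matrix.one_mul, Matrix.fromBlocks_one, reindex_apply, Matrix.submatrix_one_equiv]
  · rw [reindex_mul, fromBlocks_multiply]
    simp only [Matrix.mul_zero, Matrix.zero_mul, add_zero, zero_add, hc12, Matrix.mul_one,
      Matrix.one_mul, Matrix.fromBlocks_one, reindex_apply, Matrix.submatrix_one_equiv]
  · exact diag1_lastrow c1
  · exact diag1_lastrow c1i
  · exact intUnit_diagBlock ⟨(fun i j => (hc2.1 i j)), hc2.2⟩ (intUnit_scalar1 u)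
  · have hgblocks : uMat β * Matrix.diagonal (Fin.snoc (fun i => algebraMap O F ϖ ^ f i)
        (algebraMap O F ϖ ^ l))
        = reindex finSumFinEquiv finSumFinEquiv
          (fromBlocks (Matrix.diagonal fun i => algebraMap O F ϖ ^ f i)
            (Matrix.of fun i (_ : Fin 1) => β i * algebraMap O F ϖ ^ l) 0
            (Matrix.of fun (_ _ : Fin 1) => algebraMap O F ϖ ^ l)) := by
      rw [uMat_blocks, ← reindex_diag_snoc, reindex_mul, fromBlocks_multiply]
      simp only [Matrix.one_mul, Matrix.mul_zero, Matrix.zero_mul, add_zero, zero_add]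
      rw [col_mul_scalar]
    rw [hgblocks, reindex_mul, reindex_mul, fromBlocks_multiply, fromBlocks_multiply]
    simp only [Matrix.mul_zero, Matrix.zero_mul, Matrix.mul_one, Matrix.one_mul,
      add_zero, zero_add]
    rw [matmul_col, col_mul_scalar, scalar_mul_scalar]
    have hhblocks : h = reindex finSumFinEquiv finSumFinEquiv
        (fromBlocks (h.submatrix Fin.castSucc Fin.castSucc)
          (Matrix.of fun i (_ : Fin 1) => v i) 0
          (Matrix.of fun (_ _ : Fin 1) => h (Fin.last q) (Fin.last q))) := by
      have e2 : (Matrix.of fun (_ : Fin 1) j => h (Fin.last q) (Fin.castSucc j))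
          = (0 : Matrix (Fin 1) (Fin q) F) := by
        ext i j
        simp [hrow0 j]
      conv_lhs => rw [corner_decomp h, e2]
    rw [hhblocks]
    congr 1
    rw [Matrix.fromBlocks_inj]
    refine ⟨hsm, ?_, rfl, ?_⟩
    · ext i j
      simp only [Matrix.of_apply]
      have hfun : (fun t => β t * algebraMap O F ϖ ^ l)
          = fun t => algebraMap O F ((u⁻¹ : Oˣ) : O) * (c1i *ᵥ v) t := by
        funext t
        rw [hβ]
        simp only []
        rw [_root_.zpow_neg]
        field_simp
      rw [hfun, mulVec_const_mul, Matrix.mulVec_mulVec, hc11, Matrix.one_mulVec]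
      rw [mul_comm (algebraMap O F ((u⁻¹ : Oˣ) : O)) (v i), mul_assoc, huu, mul_one]
    · ext i j
      simp only [Matrix.of_apply]
      rw [hu]
      ring

/-- Every `(S°_{n+2}, P_{n+2}(O))`-double coset in `P_{n+2}` (where `n = 2m`) contains a matrix
`diag([[1_m, βᵀ],[0,1]]·diag(ϖ^{f_1},…,ϖ^{f_m},ϖ^l), 1_{m+1})`. -/
theorem stmt6 (ϖ : O) (hϖ : Irreducible ϖ) (m : ℕ) (hm : 0 < m)
    (p : Matrix (Fin ((m + 1) + (m + 1))) (Fin ((m + 1) + (m + 1))) F)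
    (hp : p ∈ Pset F ((m + 1) + (m + 1))) :
    ∃ s ∈ Sset O F (m + 1) ∩ Pset F ((m + 1) + (m + 1)),
      ∃ k ∈ POset O F ((m + 1) + (m + 1)),
        ∃ (β : Fin m → F) (f : Fin m → ℤ) (l : ℤ),
          p = s * diagEmbed (uMat β *
            diagonal (Fin.snoc (fun i => (algebraMap O F ϖ) ^ f i)
              ((algebraMap O F ϖ) ^ l))) * k := by
  classical
  obtain ⟨hdetU, hrowp⟩ := hp
  have hdet0 : p.det ≠ 0 := hdetU.ne_zero
  obtain ⟨T, k0, hTtri, hk0IU, hpTk⟩ := iwasawa (O := O) ((m+1)+(m+1)) p hdet0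
  set L : Fin ((m+1)+(m+1)) := Fin.last (m+1+m) with hLdef
  have hLcoe : (L : ℕ) = (m+1)+(m+1) - 1 := by
    rw [hLdef, Fin.val_last]
    omega
  have hToff : ∀ j, j ≠ L → T L j = 0 := fun j hj =>
    hTtri L j (lt_of_le_of_ne (Fin.le_last j) hj)
  have hdetT : T.det ≠ 0 := by
    intro hz
    apply hdet0
    rw [hpTk, Matrix.det_mul, hz, zero_mul]
  have htdiag : T L L ≠ 0 := by
    have hdet_prod : T.det = ∏ i, T i i :=
      Matrix.det_of_upperTriangular (fun i j hij => hTtri i j hij)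
    intro hz
    apply hdetT
    rw [hdet_prod]
    exact Finset.prod_eq_zero (Finset.mem_univ L) hz
  have hprow : ∀ j, p L j = if (j:ℕ) = (m+1)+(m+1) - 1 then 1 else 0 :=
    fun j => hrowp L j hLcoe
  obtain ⟨hk0A, k0i, hk0iA, hk0ab, hk0ba⟩ := hk0IU
  have hk0row : ∀ j, T L L * k0 L j = p L j := by
    intro j
    conv_rhs => rw [hpTk]
    rw [Matrix.mul_apply, Finset.sum_eq_single L (fun s _ hs => by rw [hToff s hs, zero_mul])
      (fun hmem => absurd (Finset.mem_univ L) hmem)]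
  have htinv : IsInt O (T L L)⁻¹ := by
    have h1 : T L L * k0 L L = 1 := by
      rw [hk0row, hprow, if_pos hLcoe]
    rw [inv_eq_of_mul_eq_one_right h1]
    exact hk0A L L
  set Dt : Matrix (Fin ((m+1)+(m+1))) (Fin ((m+1)+(m+1))) F :=
    Matrix.diagonal (fun i => if i = L then (T L L)⁻¹ else 1) with hDt
  set Dt' : Matrix (Fin ((m+1)+(m+1))) (Fin ((m+1)+(m+1))) F :=
    Matrix.diagonal (fun i => if i = L then T L L else 1) with hDt'
  have hDD : Dt * Dt' = 1 := by
    rw [hDt, hDt', Matrix.diagonal_mul_diagonal]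
    ext i j
    by_cases hij : i = j
    · subst hij
      rw [Matrix.diagonal_apply_eq, Matrix.one_apply_eq]
      by_cases hi : i = L
      · rw [if_pos hi, if_pos hi, inv_mul_cancel₀ htdiag]
      · rw [if_neg hi, if_neg hi, one_mul]
    · rw [Matrix.diagonal_apply_ne _ hij, Matrix.one_apply_ne hij]
  have hDD' : Dt' * Dt = 1 := by
    rw [hDt, hDt', Matrix.diagonal_mul_diagonal]
    ext i j
    by_cases hij : i = j
    · subst hij
      rw [Matrix.diagonal_apply_eq, Matrix.one_apply_eq]
      by_cases hi : i = L
      · rw [if_pos hi, if_pos hi, mul_inv_cancel₀ htdiag]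
      · rw [if_neg hi, if_neg hi, one_mul]
    · rw [Matrix.diagonal_apply_ne _ hij, Matrix.one_apply_ne hij]
  set T2 := T * Dt with hT2
  set k2 := Dt' * k0 with hk2
  have hpT2 : p = T2 * k2 := by
    rw [hT2, hk2, mul_assoc, ← mul_assoc Dt, hDD, one_mul, hpTk]
  have hT2tri : ∀ i j, j < i → T2 i j = 0 := by
    intro i j hij
    rw [hT2, Matrix.mul_diagonal, hTtri i j hij, zero_mul]
  have hT2LL : T2 L L = 1 := by
    rw [hT2, Matrix.mul_diagonal, if_pos rfl, mul_inv_cancel₀ htdiag]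
  have hT2row : ∀ j, T2 L j = if j = L then 1 else 0 := by
    intro j
    by_cases hj : j = L
    · rw [hj, if_pos rfl, hT2LL]
    · rw [if_neg hj, hT2, Matrix.mul_diagonal, hToff j hj, zero_mul]
  have hk2entries : ∀ i j, k2 i j = (if i = L then T L L else 1) * k0 i j := by
    intro i j
    rw [hk2, Matrix.diagonal_mul]
  have hk2A : AllInt O k2 := by
    intro i j
    rw [hk2entries]
    by_cases hi : i = L
    · rw [if_pos hi, hi, hk0row, hprow]
      by_cases hj : (j:ℕ) = (m+1)+(m+1) - 1
      · rw [if_pos hj]; exact isInt_one O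
      · rw [if_neg hj]; exact isInt_zero O
    · rw [if_neg hi, one_mul]
      exact hk0A i j
  have hDtA : AllInt O Dt := by
    intro i j
    rw [hDt, Matrix.diagonal_apply]
    by_cases hij : i = j
    · rw [if_pos hij]
      by_cases hi : i = L
      · rw [if_pos hi]; exact htinv
      · rw [if_neg hi]; exact isInt_one O
    · rw [if_neg hij]; exact isInt_zero O
  set k2i := k0i * Dt with hk2i
  have hk2iA : AllInt O k2i := AllInt.mul hk0iA hDtA
  have hk2ab : k2 * k2i = 1 := by
    rw [hk2, hk2i, mul_assoc, ← mul_assoc k0, hk0ab, one_mul, hDD']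
  have hk2ba : k2i * k2 = 1 := by
    rw [hk2, hk2i, mul_assoc, ← mul_assoc Dt, hDD, one_mul, hk0ba]
  have hk2IU : IntUnit O k2 := ⟨hk2A, k2i, hk2iA, hk2ab, hk2ba⟩
  have hk2P : k2 ∈ POset O F ((m+1)+(m+1)) := by
    refine ⟨⟨IsUnit.of_mul_eq_one _
      (show k2.det * k2i.det = 1 by rw [← Matrix.det_mul, hk2ab, Matrix.det_one]), ?_⟩,
      hk2A, hk2IU.det_unit⟩
    intro i j hi
    have hiL : i = L := by
      apply Fin.ext
      rw [hi, hLcoe]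
    rw [hiL, hk2entries, if_pos rfl, hk0row, hprow]
  -- blocks of T2
  set T11 := Matrix.of fun a b : Fin (m+1) =>
    T2 (finSumFinEquiv (Sum.inl a)) (finSumFinEquiv (Sum.inl b)) with hT11
  set T12 := Matrix.of fun a b : Fin (m+1) =>
    T2 (finSumFinEquiv (Sum.inl a)) (finSumFinEquiv (Sum.inr b)) with hT12
  set T22 := Matrix.of fun a b : Fin (m+1) =>
    T2 (finSumFinEquiv (Sum.inr a)) (finSumFinEquiv (Sum.inr b)) with hT22
  have hlt_lr : ∀ (b a : Fin (m+1)),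
      finSumFinEquiv (Sum.inl b) < finSumFinEquiv (Sum.inr a) := by
    intro b a
    rw [Fin.lt_def]
    simp only [finSumFinEquiv_apply_left, finSumFinEquiv_apply_right,
      Fin.coe_castAdd, Fin.coe_natAdd]
    have := b.isLt
    omega
  have hT2blocks : T2 = reindex finSumFinEquiv finSumFinEquiv (fromBlocks T11 T12 0 T22) := by
    ext i j
    rw [reindex_apply, submatrix_apply]
    rcases eSplit i with ⟨a, rfl⟩ | ⟨a, rfl⟩ <;> rcases eSplit j with ⟨b, rfl⟩ | ⟨b, rfl⟩ <;>
      rw [Equiv.symm_apply_apply, Equiv.symm_apply_apply]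
    · rfl
    · rfl
    · rw [Matrix.fromBlocks_apply₂₁, Matrix.zero_apply]
      exact hT2tri _ _ (hlt_lr b a)
    · rfl
  have hdetT2 : T2.det ≠ 0 := by
    intro hz
    apply hdet0
    rw [hpT2, Matrix.det_mul, hz, zero_mul]
  have hdetblocks : T2.det = T11.det * T22.det := by
    rw [hT2blocks, reindex_apply, Matrix.det_submatrix_equiv_self,
      Matrix.det_fromBlocks_zero₂₁]
  have hT11det : T11.det ≠ 0 := by
    intro hz
    apply hdetT2
    rw [hdetblocks, hz, zero_mul]
  have hT22det : T22.det ≠ 0 := by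
    intro hz
    apply hdetT2
    rw [hdetblocks, hz, mul_zero]
  have hT11tri : ∀ a b : Fin (m+1), b < a → T11 a b = 0 := by
    intro a b hab
    apply hT2tri
    rw [Fin.lt_def]
    simp only [finSumFinEquiv_apply_left, Fin.coe_castAdd]
    exact hab
  have hT22tri : ∀ a b : Fin (m+1), b < a → T22 a b = 0 := by
    intro a b hab
    apply hT2tri
    rw [Fin.lt_def]
    simp only [finSumFinEquiv_apply_right, Fin.coe_natAdd]
    omega
  have heL : finSumFinEquiv (Sum.inr (Fin.last m)) = L := by
    apply Fin.ext
    rw [hLdef]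
    simp [Fin.last]
    omega
  have hT22row : ∀ b, T22 (Fin.last m) b = if b = Fin.last m then 1 else 0 := by
    intro b
    have : T22 (Fin.last m) b = T2 L (finSumFinEquiv (Sum.inr b)) := by
      rw [hT22, Matrix.of_apply, heL]
    rw [this, hT2row]
    by_cases hb : b = Fin.last m
    · rw [if_pos hb, if_pos (by rw [hb, heL])]
    · rw [if_neg hb, if_neg]
      intro hc
      apply hb
      have := finSumFinEquiv.injective (hc.trans heL.symm)
      exact Sum.inr_injective this
  have hT22unit : IsUnit T22.det := isUnit_iff_ne_zero.mpr hT22det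
  set h := T22⁻¹ * T11 with hh
  have hT2dec : T2 = shalikaMat T22 T12 * diagEmbed h := by
    rw [diagEmbed_mul_blocks, hh, Matrix.mul_nonsing_inv_cancel_left _ _ hT22unit]
    exact hT2blocks
  have hhtri : ∀ i j : Fin (m+1), j < i → h i j = 0 := by
    letI := T22.invertibleOfIsUnitDet hT22unit
    have h1 : Matrix.BlockTriangular T22 id := fun i j hij => hT22tri i j hij
    have h2 : Matrix.BlockTriangular T22⁻¹ id :=
      Matrix.blockTriangular_inv_of_blockTriangular h1
    have h3 : Matrix.BlockTriangular (T22⁻¹ * T11) id :=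
      h2.mul (fun i j hij => hT11tri i j hij)
    exact fun i j hij => h3 hij
  have hhdet : h.det ≠ 0 := by
    rw [hh, Matrix.det_mul, Matrix.det_nonsing_inv, Ring.inverse_eq_inv']
    exact mul_ne_zero (inv_ne_zero hT22det) hT11det
  obtain ⟨a2, a2i, cR, β, f, l, ha2A, ha2iA, ha2ab, ha2ba, ha2row, ha2irow, hcRIU, hhdec⟩ :=
    triangular_decomp ϖ hϖ h hhtri hhdet
  have ha2IU : IntUnit O a2 := ⟨ha2A, a2i, ha2iA, ha2ab, ha2ba⟩
  have ha2iIU : IntUnit O a2i := ⟨ha2iA, a2, ha2A, ha2ba, ha2ab⟩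
  have ha2det : a2.det ≠ 0 := ha2IU.det_ne_zero
  set kbig := reindex finSumFinEquiv finSumFinEquiv (fromBlocks cR 0 0 a2i) with hkbig
  have hkbigIU : IntUnit O kbig := intUnit_diagBlock hcRIU ha2iIU
  have hembed : diagEmbed h = shalikaMat a2 0 * diagEmbed (uMat β *
      diagonal (Fin.snoc (fun i => (algebraMap O F ϖ) ^ f i)
        ((algebraMap O F ϖ) ^ l))) * kbig := by
    rw [diagEmbed_mul_blocks, hkbig, reindex_mul, fromBlocks_multiply]
    simp only [Matrix.mul_zero, Matrix.zero_mul, Matrix.one_mul, Matrix.mul_one,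
      add_zero, zero_add]
    rw [ha2ab, ← hhdec]
    rfl
  refine ⟨shalikaMat T22 T12 * shalikaMat a2 0, ⟨?_, ?_⟩, kbig * k2, ?_, β, f, l, ?_⟩
  · rw [shalika_mul]
    refine ⟨T22 * a2, T22 * 0 + T12 * a2, ?_, rfl⟩
    rw [Matrix.det_mul]
    exact isUnit_iff_ne_zero.mpr (mul_ne_zero hT22det ha2det)
  · apply pset_mul
    · refine ⟨?_, ?_⟩
      · rw [shalikaMat, reindex_apply, Matrix.det_submatrix_equiv_self,
          Matrix.det_fromBlocks_zero₂₁]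
        exact isUnit_iff_ne_zero.mpr (mul_ne_zero hT22det hT22det)
      · exact blocks_pset_row (fromBlocks T22 T12 0 T22) (fun j => rfl) hT22row
    · refine ⟨?_, ?_⟩
      · rw [shalikaMat, reindex_apply, Matrix.det_submatrix_equiv_self,
          Matrix.det_fromBlocks_zero₂₁]
        exact isUnit_iff_ne_zero.mpr (mul_ne_zero ha2det ha2det)
      · exact blocks_pset_row (fromBlocks a2 0 0 a2) (fun j => rfl) ha2row
  · apply poset_mul
    · refine ⟨⟨isUnit_iff_ne_zero.mpr hkbigIU.det_ne_zero, ?_⟩, hkbigIU.1, hkbigIU.det_unit⟩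
      rw [hkbig]
      exact blocks_pset_row (fromBlocks cR 0 0 a2i) (fun j => rfl) ha2irow
    · exact hk2P
  · rw [hpT2, hT2dec, hembed]
    noncomm_ring

end ShalikaStmt6
end

section
/- Let n = 2m be an even positive integer, χ : F^× → ℂ^× a group homomorphism, and ψ : F → ℂ^× an additive character with ψ(O) = {1} and ψ(𝔭^{-1}) ≠ {1}. Suppose J : P_n → ℂ satisfies J(s·p) = χ_ψ(s)·J(p) for all s ∈ S°_n and p ∈ P_n, and J(p·k) = J(p) for all k ∈ P_n(O). Then for every nonzero f ∈ ℤ^m with f_1 + … + f_m = 0 and every β ∈ F^{m−1}, J(diag(u_β·diag(ϖ^{f_1},…,ϖ^{f_m}), 1_m)) = 0, where u_β = [[1_{m−1}, βᵀ],[0,1]] ∈ GL_m(F). -/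
open Matrix

namespace ShalikaStmt9

variable {O F : Type*} [CommRing O] [IsDomain O] [IsDiscreteValuationRing O]
  [Field F] [Algebra O F] [IsFractionRing O F]

/-- `x ∈ F` lies in (the image of) `O`. -/
def IsInt (O : Type*) {F : Type*} [CommRing O] [Field F] [Algebra O F] (x : F) : Prop :=
  ∃ a : O, algebraMap O F a = x

/-- The mirabolic subgroup `P_N ⊂ GL_N(F)`: invertible matrices with last row `(0,…,0,1)`. -/
def Pset (F : Type*) [Field F] (N : ℕ) : Set (Matrix (Fin N) (Fin N) F) :=
  {p | IsUnit p.det ∧ ∀ i j : Fin N, (i : ℕ) = N - 1 →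
    p i j = if (j : ℕ) = N - 1 then 1 else 0}

/-- `P_N(O) = P_N ∩ GL_N(O)`. -/
def POset (O : Type*) (F : Type*) [CommRing O] [Field F] [Algebra O F] (N : ℕ) :
    Set (Matrix (Fin N) (Fin N) F) :=
  {p | p ∈ Pset F N ∧ (∀ i j, IsInt O (p i j)) ∧ ∃ u : Oˣ, algebraMap O F (u : O) = p.det}

/-- The block matrix `[[a,b],[0,a]]` of size `(M+M) × (M+M)`. -/
def shalikaMat {F : Type*} [Field F] {M : ℕ} (a b : Matrix (Fin M) (Fin M) F) :
    Matrix (Fin (M + M)) (Fin (M + M)) F :=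
  Matrix.reindex finSumFinEquiv finSumFinEquiv (Matrix.fromBlocks a b 0 a)

/-- The embedding `g ↦ diag(g, 1_M)`. -/
def diagEmbed {F : Type*} [Field F] {M : ℕ} (g : Matrix (Fin M) (Fin M) F) :
    Matrix (Fin (M + M)) (Fin (M + M)) F :=
  Matrix.reindex finSumFinEquiv finSumFinEquiv (Matrix.fromBlocks g 0 0 1)

/-- The upper unipotent matrix `u_β = [[1_r, βᵀ],[0,1]]`. -/
def uMat {F : Type*} [Field F] {r : ℕ} (β : Fin r → F) :
    Matrix (Fin (r + 1)) (Fin (r + 1)) F :=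
  Matrix.of fun i j =>
    if i = j then 1
    else if (j : ℕ) = r then (if h : (i : ℕ) < r then β ⟨i, h⟩ else 0) else 0

/-- The diagonal matrix `ϖ^f`. -/
noncomputable def Dpow {F : Type*} [Field F] {r : ℕ} (ϖF : F) (f : Fin r → ℤ) :
    Matrix (Fin r) (Fin r) F :=
  diagonal fun i => ϖF ^ f i

lemma mem_Pset_aux (m' : ℕ) (A B : Matrix (Fin (m'+1)) (Fin (m'+1)) F)
    (hA : IsUnit A.det) :
    Matrix.reindex finSumFinEquiv finSumFinEquiv (Matrix.fromBlocks A B 0 1)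
      ∈ Pset F ((m'+1)+(m'+1)) := by
  constructor
  · rw [det_reindex_self, det_fromBlocks_zero₂₁]
    simpa using hA
  · intro i j hi
    rw [reindex_apply, submatrix_apply]
    obtain ⟨i', rfl⟩ : ∃ i', finSumFinEquiv i' = i := ⟨finSumFinEquiv.symm i, by simp⟩
    obtain ⟨j', rfl⟩ : ∃ j', finSumFinEquiv j' = j := ⟨finSumFinEquiv.symm j, by simp⟩
    rw [Equiv.symm_apply_apply, Equiv.symm_apply_apply]
    rcases i' with k | k
    · exfalso
      simp only [finSumFinEquiv_apply_left, Fin.coe_castAdd] at hi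
      omega
    · simp only [finSumFinEquiv_apply_right, Fin.coe_natAdd] at hi
      have hk : (k:ℕ) = m' := by omega
      rcases j' with l | l
      · have : ¬ ((finSumFinEquiv (Sum.inl l) : Fin ((m'+1)+(m'+1))) : ℕ) = (m'+1)+(m'+1) - 1 := by
          simp only [finSumFinEquiv_apply_left, Fin.coe_castAdd]
          omega
        rw [if_neg this]
        rfl
      · show (1 : Matrix (Fin (m'+1)) (Fin (m'+1)) F) k l = _
        simp only [finSumFinEquiv_apply_right, Fin.coe_natAdd]
        by_cases hl : (l:ℕ) = m'
        · have hkl : k = l := Fin.ext (by omega)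
          rw [hkl, one_apply_eq]; exact (if_pos (by omega)).symm
        · rw [one_apply_ne (fun h => hl (by rw [← h]; exact hk))]
          exact (if_neg (by omega)).symm

lemma reindex_mul_reindex (m' : ℕ)
    (M N : Matrix (Fin (m'+1) ⊕ Fin (m'+1)) (Fin (m'+1) ⊕ Fin (m'+1)) F) :
    (Matrix.reindex finSumFinEquiv finSumFinEquiv M) *
      (Matrix.reindex finSumFinEquiv finSumFinEquiv N)
      = Matrix.reindex finSumFinEquiv finSumFinEquiv (M * N) := by
  simp only [reindex_apply]
  exact submatrix_mul_equiv M N _ _ _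

/-- If `J` on `P_n` (with `n = 2m`, `m = m' + 1`) transforms on the left under `S°_n` by
`χ_ψ` and is right `P_n(O)`-invariant, and `ψ` is trivial on `O` but not on `𝔭⁻¹`, then `J`
vanishes at `diag(u_β · ϖ^f, 1_m)` for every nonzero `f ∈ ℤ^m` with `∑ f_i = 0` and every
`β ∈ F^{m−1}`. -/
theorem stmt9 (ϖ : O) (hϖ : Irreducible ϖ) (m' : ℕ)
    (χ : Fˣ →* ℂˣ) (ψ : AddChar F ℂ)
    (hψ1 : ∀ a : O, ψ (algebraMap O F a) = 1)
    (hψ2 : ∃ x : F, IsInt O (x * algebraMap O F ϖ) ∧ ψ x ≠ 1)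
    (J : Matrix (Fin ((m' + 1) + (m' + 1))) (Fin ((m' + 1) + (m' + 1))) F → ℂ)
    (hJS : ∀ (a b : Matrix (Fin (m' + 1)) (Fin (m' + 1)) F) (ha : IsUnit a.det)
      (p : Matrix (Fin ((m' + 1) + (m' + 1))) (Fin ((m' + 1) + (m' + 1))) F),
      shalikaMat a b ∈ Pset F ((m' + 1) + (m' + 1)) → p ∈ Pset F ((m' + 1) + (m' + 1)) →
      J (shalikaMat a b * p) = (χ ha.unit : ℂ) * ψ (Matrix.trace (a⁻¹ * b)) * J p)
    (hJK : ∀ p k, p ∈ Pset F ((m' + 1) + (m' + 1)) → k ∈ POset O F ((m' + 1) + (m' + 1)) →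
      J (p * k) = J p) :
    ∀ f : Fin (m' + 1) → ℤ, f ≠ 0 → (∑ i, f i) = 0 →
      ∀ β : Fin m' → F,
        J (diagEmbed (uMat β * Dpow (algebraMap O F ϖ) f)) = 0 := by
  intro f hf hsum β
  set ϖF : F := algebraMap O F ϖ with hϖFdef
  have hϖ0 : ϖF ≠ 0 := by
    rw [hϖFdef, ne_eq, map_eq_zero_iff _ (IsFractionRing.injective O F)]
    exact hϖ.ne_zero
  -- find an index with negative exponent
  have hex : ∃ j, f j < 0 := by
    by_contra h
    push_neg at h
    apply hf
    funext i
    exact (Finset.sum_eq_zero_iff_of_nonneg (fun i _ => h i)).mp hsum i (Finset.mem_univ i)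
  obtain ⟨j, hj⟩ := hex
  obtain ⟨x, ⟨a₀, ha₀⟩, hx⟩ := hψ2
  set k : ℕ := (-f j - 1).toNat with hkdef
  have hk : (k : ℤ) = -f j - 1 := Int.toNat_of_nonneg (by omega)
  set c : F := algebraMap O F (a₀ * ϖ ^ k) with hcdef
  have hc : ϖF ^ f j * c = x := by
    have hcval : c = (x * ϖF) * ϖF ^ ((k:ℤ)) := by
      rw [hcdef, RingHom.map_mul, map_pow, ha₀, zpow_natCast]
    have h1 : ϖF ^ f j * ϖF ^ ((k:ℤ)) * ϖF = 1 := by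
      rw [show ϖF ^ f j * ϖF ^ ((k:ℤ)) = ϖF ^ (f j + (k:ℤ)) from (zpow_add₀ hϖ0 _ _).symm,
        show ϖF ^ (f j + (k:ℤ)) * ϖF = ϖF ^ (f j + (k:ℤ) + 1) from by
          rw [zpow_add₀ hϖ0 (f j + (k:ℤ)) 1, zpow_one],
        show f j + (k:ℤ) + 1 = 0 from by omega, zpow_zero]
    rw [hcval, show ϖF ^ f j * ((x * ϖF) * ϖF ^ ((k:ℤ)))
        = x * (ϖF ^ f j * ϖF ^ ((k:ℤ)) * ϖF) from by ring, h1, mul_one]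
  set b : Matrix (Fin (m'+1)) (Fin (m'+1)) F :=
    diagonal (fun i => if i = j then c else 0) with hbdef
  set g : Matrix (Fin (m'+1)) (Fin (m'+1)) F := uMat β * Dpow ϖF f with hgdef
  -- determinant facts
  have hu : (uMat β).det = 1 := by
    rw [Matrix.det_of_upperTriangular (M := uMat β)]
    · have : ∀ i, uMat β i i = 1 := by
        intro i; simp [uMat]
      simp [this]
    · intro i j hij
      have hij' : (j:ℕ) < (i:ℕ) := hij
      have hi' : (i:ℕ) < m' + 1 := i.isLt
      simp only [uMat, of_apply]
      rw [if_neg (fun h => by rw [h] at hij'; omega), if_neg (by omega)]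
  have hgdet : IsUnit g.det := by
    rw [hgdef, det_mul, hu, one_mul, Dpow, det_diagonal, isUnit_iff_ne_zero]
    exact Finset.prod_ne_zero_iff.mpr (fun i _ => zpow_ne_zero _ hϖ0)
  have hone : IsUnit (1 : Matrix (Fin (m'+1)) (Fin (m'+1)) F).det := by simp
  -- memberships
  have hP : diagEmbed g ∈ Pset F ((m'+1)+(m'+1)) := mem_Pset_aux m' g 0 hgdet
  have hP2 : shalikaMat 1 (g * b) ∈ Pset F ((m'+1)+(m'+1)) :=
    mem_Pset_aux m' 1 (g * b) (by simp)
  have hKO : shalikaMat 1 b ∈ POset O F ((m'+1)+(m'+1)) := by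
    refine ⟨mem_Pset_aux m' 1 b (by simp), ?_, ?_⟩
    · intro i j'
      rw [shalikaMat, reindex_apply, submatrix_apply]
      obtain ⟨i', rfl⟩ : ∃ i'', finSumFinEquiv i'' = i := ⟨finSumFinEquiv.symm i, by simp⟩
      obtain ⟨j'', rfl⟩ : ∃ j'', finSumFinEquiv j'' = j' := ⟨finSumFinEquiv.symm j', by simp⟩
      rw [Equiv.symm_apply_apply, Equiv.symm_apply_apply]
      rcases i' with p | p <;> rcases j'' with q | q
      · show IsInt O ((1 : Matrix (Fin (m'+1)) (Fin (m'+1)) F) p q)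
        rw [one_apply]
        split_ifs
        exacts [⟨1, map_one _⟩, ⟨0, map_zero _⟩]
      · show IsInt O (b p q)
        rw [hbdef, diagonal_apply]
        split_ifs
        exacts [⟨a₀ * ϖ ^ k, rfl⟩, ⟨0, map_zero _⟩, ⟨0, map_zero _⟩]
      · exact ⟨0, map_zero _⟩
      · show IsInt O ((1 : Matrix (Fin (m'+1)) (Fin (m'+1)) F) p q)
        rw [one_apply]
        split_ifs
        exacts [⟨1, map_one _⟩, ⟨0, map_zero _⟩]
    · refine ⟨1, ?_⟩
      rw [shalikaMat, det_reindex_self, det_fromBlocks_zero₂₁]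
      simp
  -- the commutation identity
  have hmul : diagEmbed g * shalikaMat 1 b = shalikaMat 1 (g * b) * diagEmbed g := by
    rw [diagEmbed, shalikaMat, shalikaMat, reindex_mul_reindex, reindex_mul_reindex]
    congr 1
    rw [Matrix.fromBlocks_multiply, Matrix.fromBlocks_multiply]
    simp
  -- trace computation
  have htr : Matrix.trace ((1 : Matrix (Fin (m'+1)) (Fin (m'+1)) F)⁻¹ * (g * b)) = x := by
    rw [inv_one, one_mul, hbdef, Matrix.trace]
    simp only [diag_apply, Matrix.mul_diagonal, mul_ite, mul_zero]
    rw [Finset.sum_ite_eq' Finset.univ j (fun i => g i i * c), if_pos (Finset.mem_univ j)]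
    have hgjj : g j j = ϖF ^ f j := by
      rw [hgdef, Dpow, Matrix.mul_diagonal]
      have : uMat β j j = 1 := by simp [uMat]
      rw [this, one_mul]
    rw [hgjj, hc]
  -- χ at the unit 1
  have hχ : (χ hone.unit : ℂ) = 1 := by
    have : hone.unit = 1 := Units.ext (by simp)
    rw [this]
    simp
  -- put it together
  have e1 : J (diagEmbed g * shalikaMat 1 b) = J (diagEmbed g) := hJK _ _ hP hKO
  have e2 := hJS 1 (g * b) hone (diagEmbed g) hP2 hP
  rw [hmul, e2, hχ, one_mul, htr] at e1
  have hzero : (ψ x - 1) * J (diagEmbed g) = 0 := by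
    rw [sub_mul, one_mul, e1, sub_self]
  rcases mul_eq_zero.mp hzero with h | h
  · exact absurd (sub_eq_zero.mp h) hx
  · exact h

end ShalikaStmt9
end

section
/- Let n = 2m be an even positive integer and l a positive integer. Let g, h ∈ P_n, and let u = [[1_n, xᵀ, yᵀ],[0,1,z],[0,0,1]] and v = [[1_n, x′ᵀ, y′ᵀ],[0,1,z′],[0,0,1]] with x, x′, y, y′ ∈ F^n and z, z′ ∈ F. If diag(g,1,1)·u·C_{n+2}(l) = diag(h,1,1)·v·C_{n+2}(l) as left cosets in GL_{n+2}(F), then h^{-1}·g ∈ C_n(l), x_n − x′_n ∈ 𝔭^l, and z − z′ ∈ 𝔭^l. -/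
open Matrix

namespace ShalikaStmt10

variable {O F : Type*} [CommRing O] [IsDomain O] [IsDiscreteValuationRing O]
  [Field F] [Algebra O F] [IsFractionRing O F]

/-- `x ∈ F` lies in (the image of) `O`. -/
def IsInt (O : Type*) {F : Type*} [CommRing O] [Field F] [Algebra O F] (x : F) : Prop :=
  ∃ a : O, algebraMap O F a = x

/-- The mirabolic subgroup `P_N ⊂ GL_N(F)`: invertible matrices with last row `(0,…,0,1)`. -/
def Pset (F : Type*) [Field F] (N : ℕ) : Set (Matrix (Fin N) (Fin N) F) :=
  {p | IsUnit p.det ∧ ∀ i j : Fin N, (i : ℕ) = N - 1 →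
    p i j = if (j : ℕ) = N - 1 then 1 else 0}

/-- `P_N(O) = P_N ∩ GL_N(O)`. -/
def POset (O : Type*) (F : Type*) [CommRing O] [Field F] [Algebra O F] (N : ℕ) :
    Set (Matrix (Fin N) (Fin N) F) :=
  {p | p ∈ Pset F N ∧ (∀ i j, IsInt O (p i j)) ∧ ∃ u : Oˣ, algebraMap O F (u : O) = p.det}

/-- `C_N(l) = {p ∈ P_N(O) : p ≡ 1_N (mod 𝔭^l)}`. -/
def Cset (O : Type*) (F : Type*) [CommRing O] [Field F] [Algebra O F]
    (ϖ : O) (N l : ℕ) : Set (Matrix (Fin N) (Fin N) F) :=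
  {p | p ∈ POset O F N ∧ ∀ i j : Fin N,
    ∃ a : O, algebraMap O F (ϖ ^ l * a) = p i j - (if i = j then 1 else 0)}

/-- The unipotent matrix `[[1_n, xᵀ, yᵀ],[0,1,z],[0,0,1]]` of size `(n+2) × (n+2)`. -/
def bigU {F : Type*} [Field F] (n : ℕ) (x y : Fin n → F) (z : F) :
    Matrix (Fin (n + 2)) (Fin (n + 2)) F :=
  Matrix.of fun i j =>
    if i = j then 1
    else if hi : (i : ℕ) < n then
      (if (j : ℕ) = n then x ⟨i, hi⟩ else if (j : ℕ) = n + 1 then y ⟨i, hi⟩ else 0)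
    else if (i : ℕ) = n ∧ (j : ℕ) = n + 1 then z else 0

/-- The embedding `g ↦ diag(g, 1, 1)` of `n × n` matrices into `(n+2) × (n+2)` matrices. -/
def embed2 {F : Type*} [Field F] (n : ℕ) (g : Matrix (Fin n) (Fin n) F) :
    Matrix (Fin (n + 2)) (Fin (n + 2)) F :=
  Matrix.of fun i j =>
    if hi : (i : ℕ) < n then (if hj : (j : ℕ) < n then g ⟨i, hi⟩ ⟨j, hj⟩ else 0)
    else if (i : ℕ) = (j : ℕ) then 1 else 0

/-! ### Auxiliary index gadgets -/

section AuxIdx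

def ι {n : ℕ} (i : Fin n) : Fin (n + 2) := ⟨i, by omega⟩
def ee0 (n : ℕ) : Fin (n + 2) := ⟨n, by omega⟩
def ee1 (n : ℕ) : Fin (n + 2) := ⟨n + 1, by omega⟩

@[simp] lemma ι_val {n : ℕ} (i : Fin n) : ((ι i : Fin (n + 2)) : ℕ) = i := rfl
@[simp] lemma ee0_val (n : ℕ) : ((ee0 n : Fin (n + 2)) : ℕ) = n := rfl
@[simp] lemma ee1_val (n : ℕ) : ((ee1 n : Fin (n + 2)) : ℕ) = n + 1 := rfl

@[simp] lemma ι_inj {n : ℕ} {i j : Fin n} : (ι i : Fin (n + 2)) = ι j ↔ i = j := by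
  constructor
  · intro hc; exact Fin.ext (by simpa [Fin.ext_iff] using hc)
  · rintro rfl; rfl

@[simp] lemma ι_ne_ee0 {n : ℕ} (i : Fin n) : (ι i : Fin (n + 2)) ≠ ee0 n := by
  simp [Fin.ext_iff]; omega

@[simp] lemma ee0_ne_ι {n : ℕ} (i : Fin n) : ee0 n ≠ (ι i : Fin (n + 2)) := by
  simp [Fin.ext_iff]; omega

@[simp] lemma ι_ne_ee1 {n : ℕ} (i : Fin n) : (ι i : Fin (n + 2)) ≠ ee1 n := by
  simp [Fin.ext_iff]; omega

@[simp] lemma ee1_ne_ι {n : ℕ} (i : Fin n) : ee1 n ≠ (ι i : Fin (n + 2)) := by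
  simp [Fin.ext_iff]; omega

@[simp] lemma ee0_ne_ee1 (n : ℕ) : ee0 n ≠ ee1 n := by simp [Fin.ext_iff]

@[simp] lemma ee1_ne_ee0 (n : ℕ) : ee1 n ≠ ee0 n := by simp [Fin.ext_iff]

lemma fin_cases3 {n : ℕ} (i : Fin (n + 2)) :
    (∃ i0 : Fin n, i = ι i0) ∨ i = ee0 n ∨ i = ee1 n := by
  rcases lt_or_ge (i : ℕ) n with hlt | hge
  · exact Or.inl ⟨⟨i, hlt⟩, Fin.ext rfl⟩
  · have h2 := i.isLt
    rcases (by omega : (i : ℕ) = n ∨ (i : ℕ) = n + 1) with h | h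
    · exact Or.inr (Or.inl (Fin.ext h))
    · exact Or.inr (Or.inr (Fin.ext h))

lemma sum_split {β : Type*} [AddCommMonoid β] {n : ℕ} (f : Fin (n + 2) → β) :
    ∑ p, f p = (∑ i : Fin n, f (ι i)) + f (ee0 n) + f (ee1 n) := by
  rw [Fin.sum_univ_castSucc, Fin.sum_univ_castSucc]
  rfl

end AuxIdx

section AuxEntries

variable {F : Type*} [Field F] {n : ℕ}

lemma bigU_ιι (x y : Fin n → F) (z : F) (i j : Fin n) :
    bigU n x y z (ι i) (ι j) = if i = j then 1 else 0 := by
  rcases eq_or_ne i j with rfl | hij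
  · simp [bigU]
  · have h1 : (ι i : Fin (n + 2)) ≠ ι j := by simp [hij]
    simp only [bigU, of_apply, if_neg h1, if_neg hij]
    rw [dif_pos (show ((ι i : Fin (n+2)) : ℕ) < n from i.isLt)]
    rw [if_neg (by simp; omega), if_neg (by simp; omega)]

lemma bigU_ι_ee0 (x y : Fin n → F) (z : F) (i : Fin n) :
    bigU n x y z (ι i) (ee0 n) = x i := by
  simp only [bigU, of_apply, if_neg (ι_ne_ee0 i)]
  rw [dif_pos (show ((ι i : Fin (n+2)) : ℕ) < n from i.isLt), if_pos (by simp)]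
  rfl

lemma bigU_ι_ee1 (x y : Fin n → F) (z : F) (i : Fin n) :
    bigU n x y z (ι i) (ee1 n) = y i := by
  simp only [bigU, of_apply, if_neg (ι_ne_ee1 i)]
  rw [dif_pos (show ((ι i : Fin (n+2)) : ℕ) < n from i.isLt)]
  rw [if_neg (by simp), if_pos (by simp)]
  rfl

lemma bigU_ee0_ι (x y : Fin n → F) (z : F) (j : Fin n) :
    bigU n x y z (ee0 n) (ι j) = 0 := by
  simp only [bigU, of_apply, if_neg (ee0_ne_ι j)]
  rw [dif_neg (by simp), if_neg (by simp; omega)]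

lemma bigU_ee0_ee0 (x y : Fin n → F) (z : F) :
    bigU n x y z (ee0 n) (ee0 n) = 1 := by simp [bigU]

lemma bigU_ee0_ee1 (x y : Fin n → F) (z : F) :
    bigU n x y z (ee0 n) (ee1 n) = z := by
  simp only [bigU, of_apply, if_neg (ee0_ne_ee1 n)]
  rw [dif_neg (by simp), if_pos (by simp)]

lemma bigU_ee1 (x y : Fin n → F) (z : F) (j : Fin (n + 2)) :
    bigU n x y z (ee1 n) j = if j = ee1 n then 1 else 0 := by
  rcases eq_or_ne j (ee1 n) with rfl | hj
  · simp [bigU]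
  · simp only [if_neg hj, bigU, of_apply, if_neg (fun hc : ee1 n = j => hj hc.symm)]
    rw [dif_neg (by simp), if_neg (by simp)]

lemma embed2_ιι (g : Matrix (Fin n) (Fin n) F) (i j : Fin n) :
    embed2 n g (ι i) (ι j) = g i j := by
  simp only [embed2, of_apply]
  rw [dif_pos (show ((ι i : Fin (n+2)) : ℕ) < n from i.isLt),
    dif_pos (show ((ι j : Fin (n+2)) : ℕ) < n from j.isLt)]
  rfl

lemma embed2_ι_ee0 (g : Matrix (Fin n) (Fin n) F) (i : Fin n) :
    embed2 n g (ι i) (ee0 n) = 0 := by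
  simp only [embed2, of_apply]
  rw [dif_pos (show ((ι i : Fin (n+2)) : ℕ) < n from i.isLt), dif_neg (by simp)]

lemma embed2_ι_ee1 (g : Matrix (Fin n) (Fin n) F) (i : Fin n) :
    embed2 n g (ι i) (ee1 n) = 0 := by
  simp only [embed2, of_apply]
  rw [dif_pos (show ((ι i : Fin (n+2)) : ℕ) < n from i.isLt), dif_neg (by simp)]

lemma embed2_ee0 (g : Matrix (Fin n) (Fin n) F) (j : Fin (n + 2)) :
    embed2 n g (ee0 n) j = if j = ee0 n then 1 else 0 := by
  simp only [embed2, of_apply]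
  rw [dif_neg (by simp)]
  by_cases hj : j = ee0 n
  · subst hj; simp
  · rw [if_neg hj, if_neg (by simp [Fin.ext_iff] at hj ⊢; omega)]

lemma embed2_ee1 (g : Matrix (Fin n) (Fin n) F) (j : Fin (n + 2)) :
    embed2 n g (ee1 n) j = if j = ee1 n then 1 else 0 := by
  simp only [embed2, of_apply]
  rw [dif_neg (by simp)]
  by_cases hj : j = ee1 n
  · subst hj; simp
  · rw [if_neg hj, if_neg (by simp [Fin.ext_iff] at hj ⊢; omega)]

end AuxEntries


section AuxProd

variable {O : Type*} {F : Type*} [CommRing O] [Field F] [Algebra O F] {n : ℕ}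

lemma mulU_ιι (k : Matrix (Fin n) (Fin n) F) (x y : Fin n → F) (z : F) (i j : Fin n) :
    (embed2 n k * bigU n x y z) (ι i) (ι j) = k i j := by
  rw [Matrix.mul_apply, sum_split]
  simp [embed2_ιι, embed2_ι_ee0, embed2_ι_ee1, bigU_ιι, bigU_ee0_ι, bigU_ee1,
    mul_ite, Finset.sum_ite_eq, Finset.sum_ite_eq']

lemma mulU_ι_ee0 (k : Matrix (Fin n) (Fin n) F) (x y : Fin n → F) (z : F) (i : Fin n) :
    (embed2 n k * bigU n x y z) (ι i) (ee0 n) = ∑ p, k i p * x p := by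
  rw [Matrix.mul_apply, sum_split]
  simp [embed2_ιι, embed2_ι_ee0, embed2_ι_ee1, bigU_ι_ee0, bigU_ee0_ee0, bigU_ee1]

lemma mulU_ee0 (k : Matrix (Fin n) (Fin n) F) (x y : Fin n → F) (z : F) (j : Fin (n + 2)) :
    (embed2 n k * bigU n x y z) (ee0 n) j = bigU n x y z (ee0 n) j := by
  rw [Matrix.mul_apply, sum_split]
  simp [embed2_ee0, bigU_ee1]

lemma Umulc_ι (x y : Fin n → F) (z : F) (c : Matrix (Fin (n + 2)) (Fin (n + 2)) F)
    (i : Fin n) (j : Fin (n + 2)) :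
    (bigU n x y z * c) (ι i) j = c (ι i) j + x i * c (ee0 n) j + y i * c (ee1 n) j := by
  rw [Matrix.mul_apply, sum_split]
  simp [bigU_ιι, bigU_ι_ee0, bigU_ι_ee1, ite_mul, Finset.sum_ite_eq, Finset.sum_ite_eq']

lemma Umulc_ee0 (x y : Fin n → F) (z : F) (c : Matrix (Fin (n + 2)) (Fin (n + 2)) F)
    (j : Fin (n + 2)) :
    (bigU n x y z * c) (ee0 n) j = c (ee0 n) j + z * c (ee1 n) j := by
  rw [Matrix.mul_apply, sum_split]
  simp [bigU_ee0_ι, bigU_ee0_ee0, bigU_ee0_ee1]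

lemma embed2_mul (a b : Matrix (Fin n) (Fin n) F) :
    embed2 n (a * b) = embed2 n a * embed2 n b := by
  ext i j
  rcases fin_cases3 i with ⟨i0, rfl⟩ | rfl | rfl <;>
    rcases fin_cases3 j with ⟨j0, rfl⟩ | rfl | rfl <;>
      rw [Matrix.mul_apply, sum_split] <;>
        simp [embed2_ιι, embed2_ι_ee0, embed2_ι_ee1, embed2_ee0, embed2_ee1,
          Matrix.mul_apply, ite_mul, mul_ite, Finset.sum_ite_eq, Finset.sum_ite_eq']

lemma embed2_one : embed2 n (1 : Matrix (Fin n) (Fin n) F) = 1 := by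
  ext i j
  rcases fin_cases3 i with ⟨i0, rfl⟩ | rfl | rfl <;>
    rcases fin_cases3 j with ⟨j0, rfl⟩ | rfl | rfl <;>
      simp [embed2_ιι, embed2_ι_ee0, embed2_ι_ee1, embed2_ee0, embed2_ee1, Matrix.one_apply]

lemma one_mem_Cset (ϖ : O) (N l : ℕ) :
    (1 : Matrix (Fin N) (Fin N) F) ∈ Cset O F ϖ N l := by
  refine ⟨⟨⟨by rw [Matrix.det_one]; exact isUnit_one, ?_⟩, ?_, ⟨1, by simp⟩⟩, ?_⟩
  · intro i j hi
    rw [Matrix.one_apply]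
    by_cases hj : i = j
    · subst hj; rw [if_pos rfl, if_pos (by omega)]
    · rw [if_neg hj, if_neg (by rw [Fin.ext_iff] at hj; omega)]
  · intro i j
    exact ⟨if i = j then 1 else 0, by simp [Matrix.one_apply, apply_ite (algebraMap O F)]⟩
  · intro i j
    exact ⟨0, by simp [Matrix.one_apply]⟩

lemma lastRow_inv_mul {n' : ℕ} (h g : Matrix (Fin (n' + 1)) (Fin (n' + 1)) F)
    (hh : h ∈ Pset F (n' + 1)) (hg : g ∈ Pset F (n' + 1)) (j : Fin (n' + 1)) :
    (h⁻¹ * g) (Fin.last n') j = if (j : ℕ) = n' then 1 else 0 := by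
  have hinvrow : ∀ q, h⁻¹ (Fin.last n') q = if (q : ℕ) = n' then 1 else 0 := by
    intro q
    have h1 : h * h⁻¹ = 1 := Matrix.mul_nonsing_inv h hh.1
    have h2 := Matrix.ext_iff.mpr h1 (Fin.last n') q
    rw [Matrix.mul_apply] at h2
    have h3 : ∀ p : Fin (n' + 1), h (Fin.last n') p * h⁻¹ p q
        = if p = Fin.last n' then h⁻¹ p q else 0 := by
      intro p
      rw [hh.2 (Fin.last n') p (by simp)]
      by_cases hp : p = Fin.last n'
      · subst hp; rw [if_pos (by simp), if_pos rfl, one_mul]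
      · rw [if_neg (by rw [Fin.ext_iff] at hp; simpa using hp), if_neg hp, zero_mul]
    rw [Finset.sum_congr rfl (fun p _ => h3 p), Finset.sum_ite_eq'] at h2
    simp only [Finset.mem_univ, if_true] at h2
    rw [h2, Matrix.one_apply]
    by_cases hq : q = Fin.last n'
    · subst hq; rw [if_pos rfl, if_pos (by simp)]
    · rw [if_neg (fun hc => hq hc.symm), if_neg (by rw [Fin.ext_iff] at hq; simpa using hq)]
  rw [Matrix.mul_apply]
  have h4 : ∀ p : Fin (n' + 1), h⁻¹ (Fin.last n') p * g p j
      = if p = Fin.last n' then g p j else 0 := by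
    intro p
    rw [hinvrow p]
    by_cases hp : p = Fin.last n'
    · subst hp; rw [if_pos (by simp), if_pos rfl, one_mul]
    · rw [if_neg (by rw [Fin.ext_iff] at hp; simpa using hp), if_neg hp, zero_mul]
  rw [Finset.sum_congr rfl (fun p _ => h4 p), Finset.sum_ite_eq']
  simp only [Finset.mem_univ, if_true]
  exact hg.2 (Fin.last n') j (by simp)

end AuxProd

/-- If `diag(g,1,1)·u·C_{n+2}(l) = diag(h,1,1)·v·C_{n+2}(l)` as left cosets (where `n = 2m`,
`m = m' + 1`, `l > 0`), then `h⁻¹·g ∈ C_n(l)`, `x_n − x'_n ∈ 𝔭^l` and `z − z' ∈ 𝔭^l`. -/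
theorem stmt10 (ϖ : O) (hϖ : Irreducible ϖ) (m' l : ℕ) (hl : 0 < l)
    (g h : Matrix (Fin ((m' + 1) + (m' + 1))) (Fin ((m' + 1) + (m' + 1))) F)
    (hg : g ∈ Pset F ((m' + 1) + (m' + 1))) (hh : h ∈ Pset F ((m' + 1) + (m' + 1)))
    (x x' y y' : Fin ((m' + 1) + (m' + 1)) → F) (z z' : F)
    (hcoset :
      (fun c => embed2 ((m' + 1) + (m' + 1)) g * bigU ((m' + 1) + (m' + 1)) x y z * c) ''
          Cset O F ϖ (((m' + 1) + (m' + 1)) + 2) l =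
        (fun c => embed2 ((m' + 1) + (m' + 1)) h * bigU ((m' + 1) + (m' + 1)) x' y' z' * c) ''
          Cset O F ϖ (((m' + 1) + (m' + 1)) + 2) l) :
    h⁻¹ * g ∈ Cset O F ϖ ((m' + 1) + (m' + 1)) l ∧
    (∃ a : O, algebraMap O F (ϖ ^ l * a) =
      x (Fin.last (m' + 1 + m')) - x' (Fin.last (m' + 1 + m'))) ∧
    (∃ a : O, algebraMap O F (ϖ ^ l * a) = z - z') := by
  classical
  have h1C : (1 : Matrix (Fin (((m' + 1) + (m' + 1)) + 2)) (Fin (((m' + 1) + (m' + 1)) + 2)) F)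
      ∈ Cset O F ϖ (((m' + 1) + (m' + 1)) + 2) l := one_mem_Cset ϖ _ l
  have hmem := Set.mem_image_of_mem
    (fun c => embed2 ((m' + 1) + (m' + 1)) g * bigU ((m' + 1) + (m' + 1)) x y z * c) h1C
  rw [hcoset] at hmem
  obtain ⟨c, hcC, hEq⟩ := hmem
  simp only [mul_one] at hEq
  have hM : embed2 ((m' + 1) + (m' + 1)) (h⁻¹ * g) * bigU ((m' + 1) + (m' + 1)) x y z
      = bigU ((m' + 1) + (m' + 1)) x' y' z' * c := by
    have hinv : h⁻¹ * h = 1 := Matrix.nonsing_inv_mul h hh.1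
    calc embed2 ((m' + 1) + (m' + 1)) (h⁻¹ * g) * bigU ((m' + 1) + (m' + 1)) x y z
        = embed2 _ h⁻¹ * (embed2 _ g * bigU _ x y z) := by rw [embed2_mul, mul_assoc]
      _ = embed2 _ h⁻¹ * (embed2 _ h * bigU _ x' y' z' * c) := by rw [hEq]
      _ = (embed2 _ h⁻¹ * embed2 _ h) * (bigU _ x' y' z' * c) := by
            rw [mul_assoc (embed2 _ h), ← mul_assoc]
      _ = bigU _ x' y' z' * c := by rw [← embed2_mul, hinv, embed2_one, one_mul]
  have hE := Matrix.ext_iff.mpr hM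
  -- last row of c
  have hce1 : ∀ j, c (ee1 ((m' + 1) + (m' + 1))) j
      = if (j : ℕ) = ((m' + 1) + (m' + 1)) + 1 then 1 else 0 := by
    intro j
    have h0 := hcC.1.1.2 (ee1 ((m' + 1) + (m' + 1))) j (by simp)
    by_cases hj : (j : ℕ) = m' + 1 + (m' + 1) + 1
    · rw [h0, if_pos (by omega), if_pos hj]
    · rw [h0, if_neg (by omega), if_neg hj]
  have hce1ι : ∀ j : Fin ((m' + 1) + (m' + 1)),
      c (ee1 ((m' + 1) + (m' + 1))) (ι j) = 0 := by
    intro j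
    rw [hce1]
    exact if_neg (by have := j.isLt; simp; omega)
  have hce1e0 : c (ee1 ((m' + 1) + (m' + 1))) (ee0 ((m' + 1) + (m' + 1))) = 0 := by
    rw [hce1]; exact if_neg (by simp)
  have hce1e1 : c (ee1 ((m' + 1) + (m' + 1))) (ee1 ((m' + 1) + (m' + 1))) = 1 := by
    rw [hce1]; exact if_pos (by simp)
  have hA : ∀ j : Fin ((m' + 1) + (m' + 1)),
      c (ee0 ((m' + 1) + (m' + 1))) (ι j) = 0 := by
    intro j
    have e := hE (ee0 _) (ι j)
    rw [mulU_ee0, bigU_ee0_ι, Umulc_ee0, hce1ι j] at e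
    simpa using e.symm
  have hB : c (ee0 ((m' + 1) + (m' + 1))) (ee0 ((m' + 1) + (m' + 1))) = 1 := by
    have e := hE (ee0 _) (ee0 _)
    rw [mulU_ee0, bigU_ee0_ee0, Umulc_ee0, hce1e0] at e
    simpa using e.symm
  have hCz : c (ee0 ((m' + 1) + (m' + 1))) (ee1 ((m' + 1) + (m' + 1))) = z - z' := by
    have e := hE (ee0 _) (ee1 _)
    rw [mulU_ee0, bigU_ee0_ee1, Umulc_ee0, hce1e1, mul_one] at e
    linear_combination -e
  have hD : ∀ i j : Fin ((m' + 1) + (m' + 1)),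
      c (ι i) (ι j) = (h⁻¹ * g) i j := by
    intro i j
    have e := hE (ι i) (ι j)
    rw [mulU_ιι, Umulc_ι, hA j, hce1ι j] at e
    simpa using e.symm
  have hlast : ∀ j, (h⁻¹ * g) (Fin.last (m' + 1 + m')) j
      = if (j : ℕ) = m' + 1 + m' then 1 else 0 :=
    lastRow_inv_mul (n' := m' + 1 + m') h g hh hg
  have hkx : (∑ p, (h⁻¹ * g) (Fin.last (m' + 1 + m')) p * x p)
      = x (Fin.last (m' + 1 + m')) := by
    have h4 : ∀ p : Fin ((m' + 1) + (m' + 1)),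
        (h⁻¹ * g) (Fin.last (m' + 1 + m')) p * x p
          = if p = Fin.last (m' + 1 + m') then x p else 0 := by
      intro p
      rw [hlast p]
      by_cases hp : p = Fin.last (m' + 1 + m')
      · subst hp; rw [if_pos (by simp), if_pos rfl, one_mul]
      · rw [if_neg (by rw [Fin.ext_iff] at hp; simpa using hp), if_neg hp, zero_mul]
    rw [Finset.sum_congr rfl fun p _ => h4 p, Finset.sum_ite_eq']
    simp
  have hEx : c (ι (Fin.last (m' + 1 + m'))) (ee0 ((m' + 1) + (m' + 1)))
      = x (Fin.last (m' + 1 + m')) - x' (Fin.last (m' + 1 + m')) := by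
    have e := hE (ι (Fin.last (m' + 1 + m'))) (ee0 _)
    rw [mulU_ι_ee0, Umulc_ι, hB, hce1e0, hkx, mul_one, mul_zero, add_zero] at e
    linear_combination -e
  -- congruences for k = h⁻¹ * g
  have hkcong : ∀ i j : Fin ((m' + 1) + (m' + 1)), ∃ a : O,
      algebraMap O F (ϖ ^ l * a) = (h⁻¹ * g) i j - (if i = j then 1 else 0) := by
    intro i j
    obtain ⟨a, ha⟩ := hcC.2 (ι i) (ι j)
    refine ⟨a, ?_⟩
    rw [ha, hD i j]
    by_cases hij : i = j
    · subst hij; rw [if_pos rfl, if_pos rfl]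
    · rw [if_neg (fun hc => hij (ι_inj.mp hc)), if_neg hij]
  choose a ha using hkcong
  set K : Matrix (Fin ((m' + 1) + (m' + 1))) (Fin ((m' + 1) + (m' + 1))) O :=
    Matrix.of fun i j => (if i = j then 1 else 0) + ϖ ^ l * a i j with hK
  have hKmap : ∀ i j, algebraMap O F (K i j) = (h⁻¹ * g) i j := by
    intro i j
    rw [hK]
    simp only [of_apply, map_add, ha i j, apply_ite (algebraMap O F), _root_.map_one, map_zero]
    ring
  have hdet : algebraMap O F K.det = (h⁻¹ * g).det := by
    rw [RingHom.map_det]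
    congr 1
    ext i j
    exact hKmap i j
  have hKunit : IsUnit K.det := by
    have hmap1 : K.map (Ideal.Quotient.mk (Ideal.span {ϖ})) = 1 := by
      ext i j
      rw [Matrix.map_apply, hK]
      simp only [of_apply, map_add]
      have hz : Ideal.Quotient.mk (Ideal.span {ϖ}) (ϖ ^ l * a i j) = 0 := by
        rw [Ideal.Quotient.eq_zero_iff_mem, Ideal.mem_span_singleton]
        exact Dvd.dvd.mul_right (dvd_pow_self ϖ hl.ne') _
      rw [hz, add_zero, Matrix.one_apply]
      split_ifs <;> simp
    have hdq : Ideal.Quotient.mk (Ideal.span {ϖ}) K.det = 1 := by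
      rw [RingHom.map_det]
      have hmm : (Ideal.Quotient.mk (Ideal.span {ϖ})).mapMatrix K
          = K.map (Ideal.Quotient.mk (Ideal.span {ϖ})) := rfl
      rw [hmm, hmap1, Matrix.det_one]
    have hsub : ϖ ∣ K.det - 1 := by
      rw [← Ideal.mem_span_singleton, ← Ideal.Quotient.eq_zero_iff_mem, map_sub, hdq,
        _root_.map_one, sub_self]
    obtain ⟨t, ht⟩ := hsub
    by_contra hnu
    have h1m : K.det ∈ IsLocalRing.maximalIdeal O :=
      (IsLocalRing.mem_maximalIdeal _).mpr (mem_nonunits_iff.mpr hnu)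
    have hϖm : ϖ ∈ IsLocalRing.maximalIdeal O :=
      (IsLocalRing.mem_maximalIdeal _).mpr (mem_nonunits_iff.mpr hϖ.not_isUnit)
    have hone : (1 : O) ∈ IsLocalRing.maximalIdeal O := by
      have h5 : (1 : O) = K.det - ϖ * t := by rw [← ht]; ring
      rw [h5]
      exact Ideal.sub_mem _ h1m (Ideal.mul_mem_right t _ hϖm)
    exact (IsLocalRing.maximalIdeal.isMaximal O).ne_top ((Ideal.eq_top_iff_one _).mpr hone)
  refine ⟨⟨⟨⟨?_, ?_⟩, ?_, ?_⟩, ?_⟩, ?_, ?_⟩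
  · rw [← hdet]
    exact hKunit.map (algebraMap O F)
  · intro i j hi
    have hi' : i = Fin.last (m' + 1 + m') := Fin.ext (by rw [Fin.val_last]; omega)
    subst hi'
    rw [hlast j]
    by_cases hj : (j : ℕ) = m' + 1 + m'
    · rw [if_pos hj, if_pos (by omega)]
    · rw [if_neg hj, if_neg (by omega)]
  · intro i j
    exact ⟨K i j, hKmap i j⟩
  · exact ⟨hKunit.unit, by rw [IsUnit.unit_spec]; exact hdet⟩
  · intro i j
    exact ⟨a i j, ha i j⟩
  · obtain ⟨a0, ha0⟩ := hcC.2 (ι (Fin.last (m' + 1 + m'))) (ee0 ((m' + 1) + (m' + 1)))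
    refine ⟨a0, ?_⟩
    rw [ha0, hEx, if_neg (ι_ne_ee0 _), sub_zero]
  · obtain ⟨a0, ha0⟩ := hcC.2 (ee0 ((m' + 1) + (m' + 1))) (ee1 ((m' + 1) + (m' + 1)))
    refine ⟨a0, ?_⟩
    rw [ha0, hCz, if_neg (ee0_ne_ee1 _), sub_zero]


end ShalikaStmt10
end
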